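/- arXiv:1101.3745 — 11 statements merged into one kernel-verified Lean document; each statement's English description precedes it below -/
import Mathlib

section
/- Let P be a vector space partition of an n-dimensional vector space V over the finite field F with q elements, where n ≥ 1, and let H be a hyperplane of V. Then ∑_{U ∈ P, U ⊆ H} q^{dim U} = |P| − 1; equivalently, if b_d denotes the number of members of P of dimension d contained in H and m_d the total number of members of dimension d, then ∑_{d=1}^{n} b_d q^d = (∑_{d=1}^{n} m_d) − 1. (The second packing condition.) -/
attribute [local instance] Classical.propDecidable

/-- A vector space partition: a finite set of nonzero subspaces such that every
nonzero vector lies in exactly one member. -/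
def IsVSPartition (F : Type*) {V : Type*} [Field F] [AddCommGroup V] [Module F V]
    (P : Finset (Submodule F V)) : Prop :=
  (∀ U ∈ P, U ≠ ⊥) ∧ ∀ v : V, v ≠ 0 → ∃! U : Submodule F V, U ∈ P ∧ v ∈ U

/-- The number `m_d` of members of `P` of dimension `d`. -/
noncomputable def dimCount (F : Type*) {V : Type*} [Field F] [AddCommGroup V] [Module F V]
    (P : Finset (Submodule F V)) (d : ℕ) : ℕ :=
  (P.filter fun (U : Submodule F V) => Module.finrank F ↥U = d).card

/-- Counting the nonzero vectors of a submodule. -/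
lemma card_nonzero (q : ℕ) (F V : Type*) [Field F] [Fintype F] [AddCommGroup V]
    [Module F V] [FiniteDimensional F V] [Fintype V] (hq : Fintype.card F = q)
    (U : Submodule F V) :
    (Finset.univ.filter fun v : V => v ≠ 0 ∧ v ∈ U).card = q ^ (Module.finrank F ↥U) - 1 := by
  haveI : Fintype U := Fintype.ofFinite U
  have h1 : (Finset.univ.filter fun v : V => v ∈ U).card = q ^ Module.finrank F ↥U := by
    rw [← hq, ← Module.card_eq_pow_finrank (K := F) (V := ↥U)]
    rw [show (Finset.univ.filter fun v : V => v ∈ U) = (U : Set V).toFinset by ext; simp,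
      Set.toFinset_card]
    exact Fintype.card_congr (Equiv.refl _)
  have h2 : (Finset.univ.filter fun v : V => v ≠ 0 ∧ v ∈ U)
      = (Finset.univ.filter fun v : V => v ∈ U).erase 0 := by
    ext v; simp [and_comm]
  rw [h2, Finset.card_erase_of_mem (by simp [U.zero_mem]), h1]

/-- The second packing condition. -/
theorem stmt1 (q n : ℕ) (hn : 1 ≤ n) (F V : Type*) [Field F] [Fintype F] [AddCommGroup V]
    [Module F V] [FiniteDimensional F V] (hq : Fintype.card F = q)
    (hnV : Module.finrank F V = n)
    (P : Finset (Submodule F V)) (hP : IsVSPartition F P)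
    (H : Submodule F V) (hH : Module.finrank F ↥H = n - 1) :
    (∑ U ∈ P.filter (fun (U : Submodule F V) => U ≤ H), q ^ Module.finrank F ↥U)
      = P.card - 1 ∧
    (∑ d ∈ Finset.Icc 1 n,
        (P.filter fun (U : Submodule F V) => Module.finrank F ↥U = d ∧ U ≤ H).card * q ^ d)
      = (∑ d ∈ Finset.Icc 1 n, dimCount F P d) - 1 := by
  classical
  haveI : Finite V := Module.finite_of_finite F
  haveI : Fintype V := Fintype.ofFinite V
  have hq2 : 2 ≤ q := hq ▸ Fintype.one_lt_card
  -- the function assigning to each nonzero vector its member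
  set f : V → Submodule F V := fun v => if h : v ≠ 0 then (hP.2 v h).choose else ⊥ with hf
  have hfmem : ∀ v : V, v ≠ 0 → f v ∈ P ∧ v ∈ f v := by
    intro v hv
    simp only [hf, dif_pos hv]
    exact (hP.2 v hv).choose_spec.1
  have hfuniq : ∀ v : V, v ≠ 0 → ∀ U ∈ P, v ∈ U → f v = U := by
    intro v hv U hU hvU
    simp only [hf, dif_pos hv]
    exact ((hP.2 v hv).choose_spec.2 U ⟨hU, hvU⟩).symm
  -- fiberwise counting over a submodule W
  have key : ∀ W : Submodule F V,
      (Finset.univ.filter fun v : V => v ≠ 0 ∧ v ∈ W).card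
        = ∑ U ∈ P, (Finset.univ.filter fun v : V => v ≠ 0 ∧ v ∈ U ⊓ W).card := by
    intro W
    rw [Finset.card_eq_sum_card_fiberwise
      (f := f) (t := P) (fun v hv => (hfmem v (Finset.mem_filter.mp hv).2.1).1)]
    refine Finset.sum_congr rfl fun U hU => ?_
    congr 1
    ext v
    simp only [Finset.mem_filter, Finset.mem_univ, true_and, Submodule.mem_inf]
    constructor
    · rintro ⟨⟨hv, hvW⟩, hfv⟩
      exact ⟨hv, hfv ▸ (hfmem v hv).2, hvW⟩
    · rintro ⟨hv, hvU, hvW⟩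
      exact ⟨⟨hv, hvW⟩, hfuniq v hv U hU hvU⟩
  -- dimensions of members
  have hdpos : ∀ U ∈ P, 1 ≤ Module.finrank F ↥U := by
    intro U hU
    haveI : Nontrivial U := Submodule.nontrivial_iff_ne_bot.mpr (hP.1 U hU)
    exact Module.finrank_pos
  have hdle : ∀ U : Submodule F V, Module.finrank F ↥U ≤ n := fun U =>
    hnV ▸ Submodule.finrank_le U
  -- dimension of intersection with H for members not contained in H
  have hdinf : ∀ U ∈ P, ¬ U ≤ H →
      Module.finrank F ↥(U ⊓ H) = Module.finrank F ↥U - 1 := by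
    intro U hU hUH
    have hlt : H < U ⊔ H := lt_of_le_of_ne le_sup_right
      (fun h => hUH (h ▸ le_sup_left))
    have h1 : n - 1 < Module.finrank F ↥(U ⊔ H) := hH ▸ Submodule.finrank_lt_finrank_of_lt hlt
    have h2 : Module.finrank F ↥(U ⊔ H) ≤ n := hdle _
    have h3 : Module.finrank F ↥(U ⊔ H) = n := by omega
    have h4 := Submodule.finrank_sup_add_finrank_inf_eq U H
    have h5 := hdpos U hU
    rw [h3, hH] at h4
    omega
  -- the two counting equations (in ℕ)
  have eqV : q ^ n - 1 = ∑ U ∈ P, (q ^ Module.finrank F ↥U - 1) := by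
    have h := key ⊤
    simp only [inf_top_eq, card_nonzero q F V hq] at h
    rwa [finrank_top, hnV] at h
  have eqH : q ^ (n - 1) - 1 = ∑ U ∈ P, (q ^ Module.finrank F ↥(U ⊓ H) - 1) := by
    have h := key H
    simp only [card_nonzero q F V hq] at h
    rwa [hH] at h
  -- casting to ℤ
  have hcast : ∀ (s : Finset (Submodule F V)) (g : Submodule F V → ℕ),
      ((∑ U ∈ s, (q ^ g U - 1) : ℕ) : ℤ) = ∑ U ∈ s, ((q : ℤ) ^ g U - 1) := by
    intro s g
    rw [Nat.cast_sum]
    refine Finset.sum_congr rfl fun U _ => ?_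
    rw [Nat.cast_sub (Nat.one_le_pow _ _ (by omega))]
    push_cast
    ring
  have hqn1 : (1 : ℕ) ≤ q ^ n := Nat.one_le_pow _ _ (by omega)
  have hqn1' : (1 : ℕ) ≤ q ^ (n - 1) := Nat.one_le_pow _ _ (by omega)
  have E1 : ((q : ℤ)) ^ n - 1 = ∑ U ∈ P, ((q : ℤ) ^ Module.finrank F ↥U - 1) := by
    rw [← hcast P _]
    rw [← eqV]
    push_cast [Nat.cast_sub hqn1]
    ring
  have E2 : ((q : ℤ)) ^ (n - 1) - 1 = ∑ U ∈ P, ((q : ℤ) ^ Module.finrank F ↥(U ⊓ H) - 1) := by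
    rw [← hcast P _]
    rw [← eqH]
    push_cast [Nat.cast_sub hqn1']
    ring
  -- splitting the sums
  have hsplit1 := Finset.sum_filter_add_sum_filter_not P (fun U => U ≤ H)
    (fun U => ((q : ℤ) ^ Module.finrank F ↥U - 1))
  have hsplit2 := Finset.sum_filter_add_sum_filter_not P (fun U => U ≤ H)
    (fun U => ((q : ℤ) ^ Module.finrank F ↥(U ⊓ H) - 1))
  set Pin := P.filter (fun U => U ≤ H) with hPin
  set Pout := P.filter (fun U => ¬ U ≤ H) with hPout
  have hcardsplit : Pin.card + Pout.card = P.card :=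
    Finset.card_filter_add_card_filter_not _
  -- inside H: U ⊓ H = U
  have hin : ∑ U ∈ Pin, ((q : ℤ) ^ Module.finrank F ↥(U ⊓ H) - 1)
      = ∑ U ∈ Pin, ((q : ℤ) ^ Module.finrank F ↥U - 1) := by
    refine Finset.sum_congr rfl fun U hU => ?_
    rw [inf_eq_left.mpr (Finset.mem_filter.mp hU).2]
  -- outside H: dim (U ⊓ H) = dim U - 1
  have hout : ∑ U ∈ Pout, ((q : ℤ) ^ Module.finrank F ↥(U ⊓ H) - 1)
      = ∑ U ∈ Pout, ((q : ℤ) ^ (Module.finrank F ↥U - 1) - 1) := by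
    refine Finset.sum_congr rfl fun U hU => ?_
    rw [hdinf U (Finset.mem_filter.mp hU).1 (Finset.mem_filter.mp hU).2]
  -- abbreviations
  set A : ℤ := ∑ U ∈ Pin, (q : ℤ) ^ Module.finrank F ↥U with hA
  set C : ℤ := ∑ U ∈ Pout, (q : ℤ) ^ Module.finrank F ↥U with hC
  set B : ℤ := ∑ U ∈ Pout, (q : ℤ) ^ (Module.finrank F ↥U - 1) with hB
  have hqB : (q : ℤ) * B = C := by
    rw [hB, hC, Finset.mul_sum]
    refine Finset.sum_congr rfl fun U hU => ?_
    have h1 := hdpos U (Finset.mem_filter.mp hU).1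
    rw [← pow_succ']
    congr 1
    omega
  have hsumin : ∑ U ∈ Pin, ((q : ℤ) ^ Module.finrank F ↥U - 1) = A - Pin.card := by
    rw [Finset.sum_sub_distrib, Finset.sum_const, hA]; push_cast; ring
  have hsumout : ∑ U ∈ Pout, ((q : ℤ) ^ Module.finrank F ↥U - 1) = C - Pout.card := by
    rw [Finset.sum_sub_distrib, Finset.sum_const, hC]; push_cast; ring
  have hsumoutB : ∑ U ∈ Pout, ((q : ℤ) ^ (Module.finrank F ↥U - 1) - 1) = B - Pout.card := by
    rw [Finset.sum_sub_distrib, Finset.sum_const, hB]; push_cast; ring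
  have E1' : (q : ℤ) ^ n - 1 = (A - Pin.card) + (C - Pout.card) := by
    rw [E1, ← hsplit1, hsumin, hsumout]
  have E2' : (q : ℤ) ^ (n - 1) - 1 = (A - Pin.card) + (B - Pout.card) := by
    rw [E2, ← hsplit2, hin, hout, hsumin, hsumoutB]
  have hpow : (q : ℤ) ^ n = q * (q : ℤ) ^ (n - 1) := by
    rw [← pow_succ']
    congr 1
    omega
  -- deduce (q-1) * A = (q-1) * (|P| - 1)
  have hmain : ((q : ℤ) - 1) * A = ((q : ℤ) - 1) * ((Pin.card : ℤ) + Pout.card - 1) := by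
    have hq2' : (q : ℤ) * ((q : ℤ) ^ (n - 1) - 1) = (q : ℤ) * ((A - Pin.card) + (B - Pout.card)) := by
      rw [E2']
    linear_combination E1' - hq2' - hpow - hqB
  have hAeq : A = (Pin.card : ℤ) + Pout.card - 1 := by
    have hne : ((q : ℤ) - 1) ≠ 0 := by
      have : (2 : ℤ) ≤ (q : ℤ) := by exact_mod_cast hq2
      omega
    exact mul_left_cancel₀ hne hmain
  -- first goal in ℕ
  have hAnat : ((∑ U ∈ Pin, q ^ Module.finrank F ↥U : ℕ) : ℤ) = A := by
    rw [hA]; push_cast; rfl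
  have hPcard : ((P.card : ℤ)) = (Pin.card : ℤ) + Pout.card := by
    exact_mod_cast hcardsplit.symm
  have goal1 : (∑ U ∈ Pin, q ^ Module.finrank F ↥U) = P.card - 1 := by
    have h1 : ((∑ U ∈ Pin, q ^ Module.finrank F ↥U : ℕ) : ℤ) + 1 = (P.card : ℤ) := by
      rw [hAnat, hAeq, hPcard]; ring
    have h2 : (∑ U ∈ Pin, q ^ Module.finrank F ↥U) + 1 = P.card := by exact_mod_cast h1
    omega
  constructor
  · exact goal1
  -- second goal
  have hmaps : ∀ U ∈ Pin, Module.finrank F ↥U ∈ Finset.Icc 1 n := by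
    intro U hU
    exact Finset.mem_Icc.mpr ⟨hdpos U (Finset.mem_filter.mp hU).1, hdle U⟩
  have hmapsP : ∀ U ∈ P, Module.finrank F ↥U ∈ Finset.Icc 1 n := by
    intro U hU
    exact Finset.mem_Icc.mpr ⟨hdpos U hU, hdle U⟩
  have hfilter : ∀ d : ℕ,
      (P.filter fun (U : Submodule F V) => Module.finrank F ↥U = d ∧ U ≤ H)
        = Pin.filter (fun (U : Submodule F V) => Module.finrank F ↥U = d) := by
    intro d
    rw [hPin, Finset.filter_filter]
    apply Finset.filter_congr
    intro U _
    simp [and_comm]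
  have L : ∑ d ∈ Finset.Icc 1 n,
      (P.filter fun (U : Submodule F V) => Module.finrank F ↥U = d ∧ U ≤ H).card * q ^ d
      = ∑ U ∈ Pin, q ^ Module.finrank F ↥U := by
    rw [← Finset.sum_fiberwise_of_maps_to hmaps (fun U => q ^ Module.finrank F ↥U)]
    refine Finset.sum_congr rfl fun d _ => ?_
    rw [hfilter d]
    rw [Finset.sum_congr rfl (fun U hU => by rw [(Finset.mem_filter.mp hU).2])]
    rw [Finset.sum_const, smul_eq_mul]
  have R : ∑ d ∈ Finset.Icc 1 n, dimCount F P d = P.card := by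
    rw [Finset.card_eq_sum_card_fiberwise hmapsP]
    rfl
  rw [L, R]
  exact goal1
end

section
/- Let P be a vector space partition of an n-dimensional vector space V over the finite field F with q elements, let l ≥ 1, let d_1 < d_2 < … < d_l be integers in {1,…,n−1}, and let k_i be integers with 1 ≤ k_i ≤ m_{d_i} for each i. Let N be the number of tuples (H, 𝒰_1, …, 𝒰_l) where H is a hyperplane of V and, for each i, 𝒰_i is a k_i-element set of dimension-d_i members of P each of which is contained in H. Then (∏_{i=1}^{l} C(m_{d_i}, k_i)) · h(∑_{i=1}^{l} k_i d_i; n, q) ≤ N ≤ (∏_{i=1}^{l} C(m_{d_i}, k_i)) · h(d_min; n, q), where d_min = 2 d_l if k_l ≥ 2, d_min = d_l + d_{l−1} if k_l = 1 and l ≥ 2, and d_min = d_1 if l = 1 and k_1 = 1, and C(a,b) denotes the binomial coefficient. -/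
attribute [local instance] Classical.propDecidable

/-- The function `h(e; n, q)`. -/
def hFun (q e n : ℕ) : ℕ := if e ≤ n then (q ^ (n - e) - 1) / (q - 1) else 0

set_option linter.unusedSectionVars false in
theorem aux_hFun_anti {q : ℕ} (hq : 1 ≤ q) {e e' n : ℕ} (h : e ≤ e') :
    hFun q e' n ≤ hFun q e n := by
  unfold hFun
  split_ifs with h1 h2 h2
  · refine Nat.div_le_div_right (Nat.sub_le_sub_right ?_ 1)
    exact Nat.pow_le_pow_right hq (by omega)
  · omega
  · exact Nat.zero_le _
  · exact Nat.zero_le _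

section Aux

open Module Submodule Finset

variable {F V : Type*} [Field F] [Fintype F] [AddCommGroup V] [Module F V] [FiniteDimensional F V]

set_option linter.unusedSectionVars false

theorem aux_finrank_dualAnn (W : Submodule F V) :
    finrank F W.dualAnnihilator = finrank F V - finrank F W := by
  have h1 : finrank F W.dualAnnihilator = finrank F (V ⧸ W) := by
    rw [← LinearEquiv.finrank_eq (dualQuotEquivDualAnnihilator W)]
    exact Subspace.dual_finrank_eq
  have h2 := Submodule.finrank_quotient_add_finrank W
  omega

theorem aux_card_ann_nonzero [Fintype (Module.Dual F V)] (U : Submodule F V) :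
    (Finset.univ.filter fun f : Module.Dual F V => f ∈ U.dualAnnihilator ∧ f ≠ 0).card
      = Fintype.card F ^ (finrank F V - finrank F U) - 1 := by
  have : Finite V := Module.finite_of_finite F
  have hfil : (Finset.univ.filter fun f : Module.Dual F V => f ∈ U.dualAnnihilator ∧ f ≠ 0)
      = (Finset.univ.filter fun f : Module.Dual F V => f ∈ U.dualAnnihilator).erase 0 := by
    ext f
    simp [Finset.mem_erase, and_comm]
  rw [hfil, Finset.card_erase_of_mem (by simp [Submodule.zero_mem])]
  have h2 : (Finset.univ.filter fun f : Module.Dual F V => f ∈ U.dualAnnihilator).card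
      = Fintype.card F ^ (finrank F V - finrank F U) := by
    rw [← Fintype.card_subtype]
    rw [show Fintype.card {f : Module.Dual F V // f ∈ U.dualAnnihilator}
        = Fintype.card U.dualAnnihilator from Fintype.card_congr (Equiv.refl _)]
    rw [← aux_finrank_dualAnn U]
    exact Module.card_eq_pow_finrank (K := F) (V := U.dualAnnihilator)
  rw [h2]

theorem aux_finrank_ker {f : Module.Dual F V} (hf : f ≠ 0) :
    finrank F (LinearMap.ker f) = finrank F V - 1 := by
  have h1 := LinearMap.finrank_range_add_finrank_ker f
  have hr : finrank F (LinearMap.range f) = 1 := by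
    have hne : LinearMap.range f ≠ ⊥ := by
      rw [Ne, LinearMap.range_eq_bot]; exact hf
    have hle : finrank F (LinearMap.range f) ≤ 1 := by
      simpa using (LinearMap.range f).finrank_le
    have h0 : finrank F (LinearMap.range f) ≠ 0 := by
      rw [Ne, Submodule.finrank_eq_zero]; exact hne
    omega
  omega

theorem aux_card_hyp_mul [Fintype (Submodule F V)] [Fintype (Module.Dual F V)]
    (W : Submodule F V) (hn : 1 ≤ finrank F V) :
    (Finset.univ.filter fun H : Submodule F V =>
        finrank F H = finrank F V - 1 ∧ W ≤ H).card * (Fintype.card F - 1)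
      = Fintype.card F ^ (finrank F V - finrank F W) - 1 := by
  set n := finrank F V with hn_def
  set A := Finset.univ.filter fun f : Module.Dual F V => f ∈ W.dualAnnihilator ∧ f ≠ 0 with hA
  set B := Finset.univ.filter fun H : Submodule F V => finrank F H = n - 1 ∧ W ≤ H with hB
  have hmap : ∀ f ∈ A, LinearMap.ker f ∈ B := by
    intro f hf
    rw [hA, Finset.mem_filter] at hf
    obtain ⟨-, hann, hf0⟩ := hf
    rw [hB, Finset.mem_filter]
    refine ⟨Finset.mem_univ _, aux_finrank_ker hf0, ?_⟩
    intro w hw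
    exact (Submodule.mem_dualAnnihilator f).1 hann w hw
  have hsum := Finset.card_eq_sum_card_fiberwise hmap
  have hfib : ∀ H ∈ B, (A.filter fun f => LinearMap.ker f = H).card = Fintype.card F - 1 := by
    intro H hH
    rw [hB, Finset.mem_filter] at hH
    obtain ⟨-, hHrank, hWH⟩ := hH
    have hfe : (A.filter fun f => LinearMap.ker f = H)
        = Finset.univ.filter fun f : Module.Dual F V => f ∈ H.dualAnnihilator ∧ f ≠ 0 := by
      ext f
      rw [hA, Finset.mem_filter, Finset.mem_filter, Finset.mem_filter]
      constructor
      · rintro ⟨⟨-, hann, hf0⟩, hker⟩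
        refine ⟨Finset.mem_univ _, ?_, hf0⟩
        rw [Submodule.mem_dualAnnihilator]
        intro w hw
        rw [← hker] at hw
        exact hw
      · rintro ⟨-, hann, hf0⟩
        have hHle : H ≤ LinearMap.ker f := by
          intro w hw
          exact (Submodule.mem_dualAnnihilator f).1 hann w hw
        have hkr : LinearMap.ker f = H := by
          refine (Submodule.eq_of_le_of_finrank_le hHle ?_).symm
          rw [aux_finrank_ker hf0, hHrank]
        refine ⟨⟨Finset.mem_univ _, ?_, hf0⟩, hkr⟩
        rw [Submodule.mem_dualAnnihilator]
        intro w hw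
        exact hHle (hWH hw)
    rw [hfe, aux_card_ann_nonzero H, hHrank]
    have : n - (n - 1) = 1 := by omega
    rw [this, pow_one]
  calc B.card * (Fintype.card F - 1) = ∑ _H ∈ B, (Fintype.card F - 1) := by
        rw [Finset.sum_const, smul_eq_mul]
    _ = ∑ H ∈ B, (A.filter fun f => LinearMap.ker f = H).card :=
        (Finset.sum_congr rfl fun H hH => (hfib H hH).symm)
    _ = A.card := hsum.symm
    _ = Fintype.card F ^ (n - finrank F W) - 1 := aux_card_ann_nonzero W

theorem aux_card_hyp [Fintype (Submodule F V)] [Fintype (Module.Dual F V)]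
    (W : Submodule F V) (hn : 1 ≤ finrank F V) :
    (Finset.univ.filter fun H : Submodule F V =>
        finrank F H = finrank F V - 1 ∧ W ≤ H).card
      = hFun (Fintype.card F) (finrank F W) (finrank F V) := by
  have hq : 1 < Fintype.card F := Fintype.one_lt_card
  rw [hFun, if_pos (W.finrank_le)]
  exact (Nat.div_eq_of_eq_mul_left (by omega) (aux_card_hyp_mul W hn).symm).symm

theorem aux_finrank_finset_sup_le {α : Type*} (s : Finset α) (f : α → Submodule F V) :
    finrank F ↥(s.sup f) ≤ ∑ a ∈ s, finrank F (f a) := by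
  induction s using Finset.cons_induction with
  | empty => simp [finrank_bot]
  | cons a s ha ih =>
    rw [Finset.sup_cons, Finset.sum_cons]
    have h1 := Submodule.finrank_sup_add_finrank_inf_eq (f a) (s.sup f)
    have h2 : finrank F ↥(f a ⊔ s.sup f)
        ≤ finrank F ↥(f a) + finrank F ↥(s.sup f) := by omega
    omega

theorem aux_partition_sup {P : Finset (Submodule F V)} (hP : IsVSPartition F P)
    {U U' : Submodule F V} (hU : U ∈ P) (hU' : U' ∈ P) (hne : U ≠ U') :
    finrank F (U ⊔ U' : Submodule F V) = finrank F U + finrank F U' := by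
  have hinf : U ⊓ U' = ⊥ := by
    by_contra h
    obtain ⟨v, hv, hv0⟩ := (Submodule.ne_bot_iff _).1 h
    exact hne (((hP.2 v hv0).unique ⟨hU, hv.1⟩ ⟨hU', hv.2⟩))
  have := Submodule.finrank_sup_add_finrank_inf_eq U U'
  rw [hinf, finrank_bot] at this
  omega

end Aux

set_option maxHeartbeats 1000000
open Module Submodule Finset in
/-- The double-counting lemma for tuples of hyperplanes with prescribed sets of
members of the partition contained in them. -/
theorem stmt2 (q n l : ℕ) (hl : 1 ≤ l) (F V : Type*) [Field F] [Fintype F] [AddCommGroup V]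
    [Module F V] [FiniteDimensional F V] (hq : Fintype.card F = q)
    (hnV : Module.finrank F V = n)
    (P : Finset (Submodule F V)) (hP : IsVSPartition F P)
    (d k : Fin l → ℕ) (hmono : StrictMono d)
    (hd1 : ∀ i, 1 ≤ d i) (hdn : ∀ i, d i ≤ n - 1)
    (hk1 : ∀ i, 1 ≤ k i) (hkm : ∀ i, k i ≤ dimCount F P (d i)) :
    (∏ i, (dimCount F P (d i)).choose (k i)) * hFun q (∑ i, k i * d i) n ≤
      Nat.card {x : Submodule F V × (Fin l → Finset (Submodule F V)) //
        Module.finrank F ↥x.1 = n - 1 ∧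
        ∀ i, (x.2 i).card = k i ∧
          ∀ U ∈ x.2 i, U ∈ P ∧ Module.finrank F ↥U = d i ∧ U ≤ x.1} ∧
    Nat.card {x : Submodule F V × (Fin l → Finset (Submodule F V)) //
        Module.finrank F ↥x.1 = n - 1 ∧
        ∀ i, (x.2 i).card = k i ∧
          ∀ U ∈ x.2 i, U ∈ P ∧ Module.finrank F ↥U = d i ∧ U ≤ x.1} ≤
      (∏ i, (dimCount F P (d i)).choose (k i)) *
        hFun q (if 2 ≤ k ⟨l - 1, by omega⟩ then 2 * d ⟨l - 1, by omega⟩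
          else if 2 ≤ l then d ⟨l - 1, by omega⟩ + d ⟨l - 2, by omega⟩
          else d ⟨0, by omega⟩) n := by
  subst hq hnV
  haveI : Finite V := Module.finite_of_finite F
  haveI : Fintype V := Fintype.ofFinite V
  haveI : Finite (Submodule F V) :=
    Finite.of_injective (fun U => (U : Set V)) (fun a b h => SetLike.ext' h)
  haveI : Fintype (Submodule F V) := Fintype.ofFinite _
  haveI : Finite (Module.Dual F V) :=
    Finite.of_injective (fun f => (f : V → F)) DFunLike.coe_injective
  haveI : Fintype (Module.Dual F V) := Fintype.ofFinite _
  have hq1 : 1 < Fintype.card F := Fintype.one_lt_card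
  have i0 : Fin l := ⟨0, by omega⟩
  have hn2 : 2 ≤ finrank F V := by
    have h1 := hd1 i0
    have h2 := hdn i0
    omega
  -- the ambient counting set
  set T := Finset.univ.filter
      (fun x : Submodule F V × (Fin l → Finset (Submodule F V)) =>
        Module.finrank F ↥x.1 = finrank F V - 1 ∧
        ∀ i, (x.2 i).card = k i ∧
          ∀ U ∈ x.2 i, U ∈ P ∧ Module.finrank F ↥U = d i ∧ U ≤ x.1) with hT_def
  have hN : Nat.card {x : Submodule F V × (Fin l → Finset (Submodule F V)) //
      Module.finrank F ↥x.1 = finrank F V - 1 ∧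
      ∀ i, (x.2 i).card = k i ∧
        ∀ U ∈ x.2 i, U ∈ P ∧ Module.finrank F ↥U = d i ∧ U ≤ x.1} = T.card := by
    rw [Nat.card_eq_fintype_card, hT_def]
    exact Fintype.card_subtype _
  -- the set of admissible tuples of finsets
  set S := Fintype.piFinset
      (fun i => (P.filter fun U : Submodule F V =>
        Module.finrank F ↥U = d i).powersetCard (k i)) with hS_def
  have hmemS : ∀ u : Fin l → Finset (Submodule F V),
      u ∈ S ↔ ∀ i, (u i).card = k i ∧ ∀ U ∈ u i, U ∈ P ∧ Module.finrank F ↥U = d i := by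
    intro u
    rw [hS_def, Fintype.mem_piFinset]
    apply forall_congr'
    intro i
    rw [Finset.mem_powersetCard]
    constructor
    · rintro ⟨hsub, hcard⟩
      refine ⟨hcard, fun U hU => ?_⟩
      have := hsub hU
      rw [Finset.mem_filter] at this
      exact this
    · rintro ⟨hcard, h⟩
      exact ⟨fun U hU => Finset.mem_filter.2 ⟨(h U hU).1, (h U hU).2⟩, hcard⟩
  have hScard : S.card = ∏ i, (dimCount F P (d i)).choose (k i) := by
    rw [hS_def, Fintype.card_piFinset]
    refine Finset.prod_congr rfl fun i _ => ?_
    rw [Finset.card_powersetCard]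
    rfl
  -- the supremum of a tuple
  set W : (Fin l → Finset (Submodule F V)) → Submodule F V :=
    fun u => Finset.univ.sup fun i => (u i).sup id with hW_def
  have hWle : ∀ u (H : Submodule F V), W u ≤ H ↔ ∀ i, ∀ U ∈ u i, U ≤ H := by
    intro u H
    rw [hW_def]
    simp only [Finset.sup_le_iff, Finset.mem_univ, true_implies, id_eq]
  have hUleW : ∀ u (i : Fin l) (U : Submodule F V), U ∈ u i → U ≤ W u := by
    intro u i U hU
    exact (hWle u (W u)).1 le_rfl i U hU
  -- fiber decomposition
  have hTmem : ∀ x ∈ T, x.2 ∈ S := by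
    intro x hx
    rw [hT_def, Finset.mem_filter] at hx
    rw [hmemS]
    intro i
    exact ⟨(hx.2.2 i).1, fun U hU => ⟨((hx.2.2 i).2 U hU).1, ((hx.2.2 i).2 U hU).2.1⟩⟩
  have hsum : T.card = ∑ u ∈ S, (T.filter fun x => x.2 = u).card :=
    Finset.card_eq_sum_card_fiberwise hTmem
  have hfib : ∀ u ∈ S, (T.filter fun x => x.2 = u).card
      = hFun (Fintype.card F) (finrank F (W u)) (finrank F V) := by
    intro u hu
    rw [hmemS] at hu
    rw [← aux_card_hyp (W u) (by omega)]
    refine Finset.card_nbij' (fun x => x.1) (fun H => (H, u)) ?_ ?_ ?_ ?_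
    · intro x hx
      rw [Finset.mem_coe, Finset.mem_filter, hT_def, Finset.mem_filter] at hx
      obtain ⟨⟨-, hrank, hcond⟩, hx2⟩ := hx
      rw [Finset.mem_coe, Finset.mem_filter]
      refine ⟨Finset.mem_univ _, hrank, ?_⟩
      rw [hWle]
      intro i U hU
      exact ((hcond i).2 U (by rw [hx2]; exact hU)).2.2
    · intro H hH
      rw [Finset.mem_coe, Finset.mem_filter] at hH
      obtain ⟨-, hrank, hle⟩ := hH
      rw [Finset.mem_coe, Finset.mem_filter, hT_def, Finset.mem_filter]
      refine ⟨⟨Finset.mem_univ _, hrank, ?_⟩, rfl⟩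
      intro i
      refine ⟨(hu i).1, fun U hU => ⟨((hu i).2 U hU).1, ((hu i).2 U hU).2, ?_⟩⟩
      exact le_trans (hUleW u i U hU) hle
    · intro x hx
      rw [Finset.mem_coe, Finset.mem_filter] at hx
      exact Prod.ext rfl hx.2.symm
    · intro H hH
      rfl
  -- dimension bounds
  have hdimup : ∀ u ∈ S, finrank F (W u) ≤ ∑ i, k i * d i := by
    intro u hu
    rw [hmemS] at hu
    calc finrank F (W u) ≤ ∑ i, finrank F ↥((u i).sup id) :=
          aux_finrank_finset_sup_le _ _
      _ ≤ ∑ i, k i * d i := by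
          refine Finset.sum_le_sum fun i _ => ?_
          calc finrank F ↥((u i).sup id) ≤ ∑ U ∈ u i, finrank F ↥(id U) :=
                aux_finrank_finset_sup_le _ _
            _ = ∑ U ∈ u i, d i := Finset.sum_congr rfl fun U hU => ((hu i).2 U hU).2
            _ = k i * d i := by rw [Finset.sum_const, (hu i).1, smul_eq_mul]
  set last : Fin l := ⟨l - 1, by omega⟩ with hlast_def
  have hkey : ∀ u ∈ S, ∀ (i j : Fin l) (U U' : Submodule F V), U ∈ u i → U' ∈ u j →
      U ≠ U' → d i + d j ≤ finrank F (W u) := by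
    intro u hu i j U U' hUi hUj hne
    rw [hmemS] at hu
    have hsup : finrank F (U ⊔ U' : Submodule F V) = d i + d j := by
      rw [aux_partition_sup hP ((hu i).2 U hUi).1 ((hu j).2 U' hUj).1 hne,
        ((hu i).2 U hUi).2, ((hu j).2 U' hUj).2]
    calc d i + d j = finrank F (U ⊔ U' : Submodule F V) := hsup.symm
      _ ≤ finrank F (W u) :=
          Submodule.finrank_mono (sup_le (hUleW u i U hUi) (hUleW u j U' hUj))
  have hdimlo : ∀ u ∈ S,
      (if 2 ≤ k last then 2 * d last
        else if 2 ≤ l then d last + d ⟨l - 2, by omega⟩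
        else d ⟨0, by omega⟩) ≤ finrank F (W u) := by
    intro u hu
    have hu' := (hmemS u).1 hu
    split_ifs with hk2 hl2
    · obtain ⟨U, hU, U', hU', hne⟩ := Finset.one_lt_card.1
        (by rw [(hu' last).1]; omega)
      have := hkey u hu last last U U' hU hU' hne
      omega
    · have hne1 : (u last).Nonempty := Finset.card_pos.1 (by rw [(hu' last).1]; exact hk1 last)
      have hne2 : (u ⟨l - 2, by omega⟩).Nonempty :=
        Finset.card_pos.1 (by rw [(hu' ⟨l - 2, by omega⟩).1]; exact hk1 _)
      obtain ⟨U, hU⟩ := hne1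
      obtain ⟨U', hU'⟩ := hne2
      have hdne : U ≠ U' := by
        intro h
        have h1 := (hu' last).2 U hU
        have h2 := (hu' ⟨l - 2, by omega⟩).2 U' hU'
        have hdd : d ⟨l - 2, by omega⟩ < d last := by
          apply hmono
          simp only [Fin.mk_lt_mk, hlast_def]
          omega
        rw [h] at h1
        omega
      exact hkey u hu last ⟨l - 2, by omega⟩ U U' hU hU' hdne
    · have hl1 : l = 1 := by omega
      have h0last : (⟨0, by omega⟩ : Fin l) = last := by
        rw [hlast_def]
        exact Fin.ext (by omega)
      rw [h0last]
      have hne1 : (u last).Nonempty := Finset.card_pos.1 (by rw [(hu' last).1]; exact hk1 last)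
      obtain ⟨U, hU⟩ := hne1
      calc d last = finrank F U := ((hu' last).2 U hU).2.symm
        _ ≤ finrank F (W u) := Submodule.finrank_mono (hUleW u last U hU)
  rw [hN, ← hScard, hsum]
  constructor
  · calc S.card * hFun (Fintype.card F) (∑ i, k i * d i) (finrank F V)
        = ∑ _u ∈ S, hFun (Fintype.card F) (∑ i, k i * d i) (finrank F V) := by
          rw [Finset.sum_const, smul_eq_mul]
      _ ≤ ∑ u ∈ S, (T.filter fun x => x.2 = u).card := by
          refine Finset.sum_le_sum fun u hu => ?_
          rw [hfib u hu]
          exact aux_hFun_anti (by omega) (hdimup u hu)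
  · calc ∑ u ∈ S, (T.filter fun x => x.2 = u).card
        ≤ ∑ _u ∈ S, hFun (Fintype.card F)
            (if 2 ≤ k last then 2 * d last
              else if 2 ≤ l then d last + d ⟨l - 2, by omega⟩
              else d ⟨0, by omega⟩) (finrank F V) := by
          refine Finset.sum_le_sum fun u hu => ?_
          rw [hfib u hu]
          exact aux_hFun_anti (by omega) (hdimlo u hu)
      _ = S.card * hFun (Fintype.card F)
            (if 2 ≤ k last then 2 * d last
              else if 2 ≤ l then d last + d ⟨l - 2, by omega⟩
              else d ⟨0, by omega⟩) (finrank F V) := by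
          rw [Finset.sum_const, smul_eq_mul]
end

section
/- Let P be a vector space partition of an n-dimensional vector space V over the finite field F with q elements, and let d, d' be integers with 1 ≤ d < d' ≤ n−2, m_d > 0 and m_{d'} > 0. Then the number of triples (H, U, U'), where H is a hyperplane of V, U is a member of P of dimension d with U ⊆ H, and U' is a member of P of dimension d' with U' ⊆ H, equals m_d · m_{d'} · h(d + d'; n, q). -/
attribute [local instance] Classical.propDecidable

lemma card_ne_zero' (M : Type*) [Zero M] [Finite M] :
    Nat.card {g : M // g ≠ 0} = Nat.card M - 1 := by
  classical
  rw [eq_comm, ← Nat.card_congr (Equiv.sumCompl (· = (0 : M))), Nat.card_sum,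
    Nat.card_unique, add_tsub_cancel_left]

lemma prop_ker {F V : Type*} [Field F] [AddCommGroup V] [Module F V]
    (f g : V →ₗ[F] F) (h : LinearMap.ker f ≤ LinearMap.ker g) :
    ∃ c : F, g = c • f := by
  have h2 : ⨅ _ : Unit, LinearMap.ker f ≤ LinearMap.ker g := by simpa using h
  have := mem_span_of_iInf_ker_le_ker h2
  rw [Set.range_const, Submodule.mem_span_singleton] at this
  obtain ⟨c, hc⟩ := this
  exact ⟨c, hc.symm⟩

lemma hyp_count (q n : ℕ) (F V : Type*) [Field F] [Fintype F] [AddCommGroup V]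
    [Module F V] [FiniteDimensional F V] (hq : Fintype.card F = q)
    (hnV : Module.finrank F V = n) (hn : 0 < n) (W : Submodule F V) :
    Nat.card {H : Submodule F V // Module.finrank F ↥H = n - 1 ∧ W ≤ H}
      = (q ^ (n - Module.finrank F ↥W) - 1) / (q - 1) := by
  haveI : Finite V := Module.finite_of_finite F
  haveI : Finite (Submodule F V) := Finite.of_injective (fun H => (H : Set V)) SetLike.coe_injective
  haveI : Finite (V →ₗ[F] F) := Finite.of_injective _ DFunLike.coe_injective
  set e := Module.finrank F ↥W with he
  set A := {f : V →ₗ[F] F // f ≠ 0 ∧ W ≤ LinearMap.ker f} with hA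
  set B := {H : Submodule F V // Module.finrank F ↥H = n - 1 ∧ W ≤ H} with hB
  haveI : Finite A := Subtype.finite
  haveI : Finite B := Subtype.finite
  haveI : Fintype A := Fintype.ofFinite A
  haveI : Fintype B := Fintype.ofFinite B
  have hq2 : 2 ≤ q := hq ▸ Fintype.one_lt_card
  have hrank : ∀ f : V →ₗ[F] F, f ≠ 0 → Module.finrank F ↥(LinearMap.ker f) = n - 1 := by
    intro f hf
    have h1 := LinearMap.finrank_range_add_finrank_ker f
    have hr : LinearMap.range f = ⊤ := by
      obtain ⟨v, hv⟩ : ∃ v, f v ≠ 0 := by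
        by_contra h; push_neg at h; exact hf (by ext v; simp [h v])
      rw [LinearMap.range_eq_top]
      intro c
      exact ⟨(c / f v) • v, by simp only [map_smul, smul_eq_mul]; field_simp⟩
    rw [hr, finrank_top, Module.finrank_self, hnV] at h1
    omega
  have hsurj : ∀ H : Submodule F V, Module.finrank F ↥H = n - 1 →
      ∃ f : V →ₗ[F] F, f ≠ 0 ∧ LinearMap.ker f = H := by
    intro H hH
    have hle : Module.finrank F ↥H ≤ n := hnV ▸ H.finrank_le
    have hq1 : Module.finrank F (V ⧸ H) = 1 := by
      have h2 := Submodule.finrank_quotient_add_finrank H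
      rw [hnV, hH] at h2
      omega
    obtain ⟨eqv⟩ : Nonempty ((V ⧸ H) ≃ₗ[F] F) := by
      apply FiniteDimensional.nonempty_linearEquiv_of_finrank_eq
      rw [hq1, Module.finrank_self]
    have hker : LinearMap.ker (eqv.toLinearMap ∘ₗ H.mkQ) = H := by
      rw [LinearMap.ker_comp, LinearEquiv.ker, Submodule.comap_bot, Submodule.ker_mkQ]
    refine ⟨eqv.toLinearMap ∘ₗ H.mkQ, ?_, hker⟩
    intro h0
    rw [h0, LinearMap.ker_zero] at hker
    rw [← hker, finrank_top, hnV] at hH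
    omega
  let π : A → B := fun f => ⟨LinearMap.ker f.1, hrank f.1 f.2.1, f.2.2⟩
  have hfib : ∀ b : B, Nat.card {a : A // π a = b} = q - 1 := by
    intro b
    obtain ⟨f₀, hf₀, hker₀⟩ := hsurj b.1 b.2.1
    have hWf₀ : W ≤ LinearMap.ker f₀ := hker₀ ▸ b.2.2
    let φ : {c : F // c ≠ 0} → {a : A // π a = b} := fun c =>
      ⟨⟨c.1 • f₀, smul_ne_zero c.2 hf₀, by
          rw [LinearMap.ker_smul _ _ c.2]; exact hWf₀⟩,
        Subtype.ext (by simp only [π]; rw [LinearMap.ker_smul _ _ c.2]; exact hker₀)⟩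
    have hbij : Function.Bijective φ := by
      constructor
      · intro c c' hcc
        have h1 : c.1 • f₀ = c'.1 • f₀ := by
          have := congrArg (fun x => x.1.1) hcc
          simpa [φ] using this
        have h2 : (c.1 - c'.1) • f₀ = 0 := by
          ext x; have := LinearMap.congr_fun h1 x
          simp only [LinearMap.smul_apply, smul_eq_mul, LinearMap.zero_apply] at this ⊢
          rw [sub_mul, this, sub_self]
        rcases smul_eq_zero.mp h2 with h | h
        · exact Subtype.ext (sub_eq_zero.mp h)
        · exact absurd h hf₀
      · intro a
        have hka : LinearMap.ker a.1.1 = b.1 := Subtype.ext_iff.mp a.2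
        obtain ⟨c, hc⟩ := prop_ker f₀ a.1.1 (le_of_eq (hker₀.trans hka.symm))
        have hc0 : c ≠ 0 := by
          intro h; rw [h, zero_smul] at hc; exact a.1.2.1 hc
        exact ⟨⟨c, hc0⟩, Subtype.ext (Subtype.ext hc.symm)⟩
    rw [← Nat.card_congr (Equiv.ofBijective φ hbij), card_ne_zero',
      Nat.card_eq_fintype_card, hq]
  have cardA : Nat.card A = q ^ (n - e) - 1 := by
    have eA : A ≃ {g : ↥(Submodule.dualAnnihilator W) // g ≠ 0} :=
      { toFun := fun f => ⟨⟨f.1, (Submodule.mem_dualAnnihilator f.1).2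
            (fun w hw => LinearMap.mem_ker.mp (f.2.2 hw))⟩,
          fun h0 => f.2.1 (congrArg Subtype.val h0)⟩
        invFun := fun g => ⟨g.1.1, fun h0 => g.2 (Subtype.ext h0),
          fun w hw => LinearMap.mem_ker.mpr ((Submodule.mem_dualAnnihilator g.1.1).1 g.1.2 w hw)⟩
        left_inv := fun f => rfl
        right_inv := fun g => rfl }
    have hd : Module.finrank F ↥(Submodule.dualAnnihilator W) = n - e := by
      have h1 := LinearEquiv.finrank_eq (R := F) (M := V ⧸ W)
        (N := {x // x ∈ Submodule.dualAnnihilator W}) (Subspace.quotEquivAnnihilator W)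
      have h2 := Submodule.finrank_quotient_add_finrank W
      rw [hnV] at h2
      omega
    rw [Nat.card_congr eA, card_ne_zero']
    haveI : Fintype ↥(Submodule.dualAnnihilator W) := Fintype.ofFinite _
    rw [Nat.card_eq_fintype_card, Module.card_eq_pow_finrank (K := F), hd, hq]
  -- assemble
  have key : Nat.card A = Nat.card B * (q - 1) := by
    rw [← Nat.card_congr (Equiv.sigmaFiberEquiv π)]
    haveI : ∀ b : B, Fintype {a : A // π a = b} := fun b => Fintype.ofFinite _
    rw [Nat.card_eq_fintype_card, Fintype.card_sigma, Nat.card_eq_fintype_card]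
    rw [Finset.sum_congr rfl (fun b _ => by rw [← Nat.card_eq_fintype_card, hfib b])]
    simp [mul_comm]
  rw [cardA] at key
  rw [key, Nat.mul_div_cancel _ (by omega)]

/-- Counting triples (hyperplane, member of dimension `d`, member of dimension `d'`)
with both members contained in the hyperplane. -/
theorem stmt5 (q n d d' : ℕ) (F V : Type*) [Field F] [Fintype F] [AddCommGroup V]
    [Module F V] [FiniteDimensional F V] (hq : Fintype.card F = q)
    (hnV : Module.finrank F V = n)
    (P : Finset (Submodule F V)) (hP : IsVSPartition F P)
    (hd1 : 1 ≤ d) (hdd' : d < d') (hd2 : d' ≤ n - 2)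
    (hmd : 0 < dimCount F P d) (hmd' : 0 < dimCount F P d') :
    Nat.card {x : Submodule F V × Submodule F V × Submodule F V //
        Module.finrank F ↥x.1 = n - 1 ∧
        x.2.1 ∈ P ∧ Module.finrank F ↥x.2.1 = d ∧ x.2.1 ≤ x.1 ∧
        x.2.2 ∈ P ∧ Module.finrank F ↥x.2.2 = d' ∧ x.2.2 ≤ x.1}
      = dimCount F P d * dimCount F P d' * hFun q (d + d') n := by
  haveI : Finite V := Module.finite_of_finite F
  haveI : Finite (Submodule F V) := Finite.of_injective (fun H => (H : Set V)) SetLike.coe_injective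
  have hn : 0 < n := by omega
  have hq2 : 2 ≤ q := hq ▸ Fintype.one_lt_card
  -- distinct members intersect trivially
  have hdisj : ∀ U ∈ P, ∀ U' ∈ P, U ≠ U' → U ⊓ U' = (⊥ : Submodule F V) := by
    intro U hU U' hU' hne
    rw [Submodule.eq_bot_iff]
    intro v hv
    by_contra hv0
    obtain ⟨Uu, -, huniq⟩ := hP.2 v hv0
    exact hne ((huniq U ⟨hU, hv.1⟩).trans (huniq U' ⟨hU', hv.2⟩).symm)
  -- finrank of sup
  have hsum : ∀ U ∈ P, ∀ U' ∈ P, Module.finrank F ↥U = d → Module.finrank F ↥U' = d' →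
      Module.finrank F ↥(U ⊔ U') = d + d' := by
    intro U hU U' hU' hUd hUd'
    have hne : U ≠ U' := fun h => by rw [h, hUd'] at hUd; omega
    have h1 := Submodule.finrank_sup_add_finrank_inf_eq U U'
    rw [hdisj U hU U' hU' hne, finrank_bot, hUd, hUd'] at h1
    omega
  -- existence of members gives d + d' ≤ n
  obtain ⟨U₀, hU₀⟩ := Finset.card_pos.mp hmd
  obtain ⟨U₀', hU₀'⟩ := Finset.card_pos.mp hmd'
  rw [Finset.mem_filter] at hU₀ hU₀'
  have hddn : d + d' ≤ n := by
    have := hsum U₀ hU₀.1 U₀' hU₀'.1 hU₀.2 hU₀'.2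
    have h2 : Module.finrank F ↥(U₀ ⊔ U₀') ≤ n := hnV ▸ Submodule.finrank_le _
    omega
  -- the pair index type
  set S := {p : Submodule F V × Submodule F V //
      p.1 ∈ P ∧ Module.finrank F ↥p.1 = d ∧ p.2 ∈ P ∧ Module.finrank F ↥p.2 = d'} with hS
  let E : {x : Submodule F V × Submodule F V × Submodule F V //
        Module.finrank F ↥x.1 = n - 1 ∧
        x.2.1 ∈ P ∧ Module.finrank F ↥x.2.1 = d ∧ x.2.1 ≤ x.1 ∧
        x.2.2 ∈ P ∧ Module.finrank F ↥x.2.2 = d' ∧ x.2.2 ≤ x.1} ≃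
      (Σ p : S, {H : Submodule F V // Module.finrank F ↥H = n - 1 ∧ p.1.1 ⊔ p.1.2 ≤ H}) :=
    { toFun := fun x => ⟨⟨(x.1.2.1, x.1.2.2), x.2.2.1, x.2.2.2.1, x.2.2.2.2.2.1, x.2.2.2.2.2.2.1⟩,
        ⟨x.1.1, x.2.1, sup_le x.2.2.2.2.1 x.2.2.2.2.2.2.2⟩⟩
      invFun := fun y => ⟨(y.2.1, y.1.1.1, y.1.1.2), y.2.2.1, y.1.2.1, y.1.2.2.1,
        le_trans le_sup_left y.2.2.2, y.1.2.2.2.1, y.1.2.2.2.2, le_trans le_sup_right y.2.2.2⟩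
      left_inv := fun x => rfl
      right_inv := fun y => rfl }
  rw [Nat.card_congr E]
  haveI : Fintype S := Fintype.ofFinite _
  haveI : ∀ p : S, Fintype {H : Submodule F V //
      Module.finrank F ↥H = n - 1 ∧ p.1.1 ⊔ p.1.2 ≤ H} := fun p => Fintype.ofFinite _
  rw [Nat.card_eq_fintype_card, Fintype.card_sigma]
  have hcount : ∀ p : S, Fintype.card {H : Submodule F V //
      Module.finrank F ↥H = n - 1 ∧ p.1.1 ⊔ p.1.2 ≤ H} = hFun q (d + d') n := by
    intro p
    rw [← Nat.card_eq_fintype_card, hyp_count q n F V hq hnV hn (p.1.1 ⊔ p.1.2),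
      hsum p.1.1 p.2.1 p.1.2 p.2.2.2.1 p.2.2.1 p.2.2.2.2, hFun, if_pos hddn]
  rw [Finset.sum_congr rfl (fun p _ => hcount p), Finset.sum_const, smul_eq_mul,
    Finset.card_univ]
  congr 1
  -- card S = m_d * m_d'
  let ES : S ≃ {U : Submodule F V // U ∈ P ∧ Module.finrank F ↥U = d} ×
      {U' : Submodule F V // U' ∈ P ∧ Module.finrank F ↥U' = d'} :=
    { toFun := fun p => (⟨p.1.1, p.2.1, p.2.2.1⟩, ⟨p.1.2, p.2.2.2.1, p.2.2.2.2⟩)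
      invFun := fun y => ⟨(y.1.1, y.2.1), y.1.2.1, y.1.2.2, y.2.2.1, y.2.2.2⟩
      left_inv := fun p => rfl
      right_inv := fun y => rfl }
  have hcnt : ∀ (m : ℕ), Nat.card {U : Submodule F V // U ∈ P ∧ Module.finrank F ↥U = m}
      = dimCount F P m := by
    intro m
    rw [dimCount, ← Nat.card_eq_finsetCard]
    exact Nat.card_congr (Equiv.subtypeEquivRight (fun U => by simp [Finset.mem_filter, and_comm]))
  rw [← Nat.card_eq_fintype_card, Nat.card_congr ES, Nat.card_prod, hcnt d, hcnt d']
end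

section
/- Let P be a vector space partition of an n-dimensional vector space V over the finite field F with q elements. Let d be the highest dimension occurring among the members of P, and let d' be another dimension occurring among the members of P (so d' ≠ d, m_d > 0 and m_{d'} > 0) with d' < n − d. Then |P| ≥ q^d + q^{d'} + 1. -/
attribute [local instance] Classical.propDecidable

section Aux

variable {F V : Type*} [Field F] [AddCommGroup V] [Module F V]

/-- Any subspace of finrank `≤ k ≤ finrank V` is contained in a subspace of finrank `k`. -/
lemma aux_exists_le_finrank [FiniteDimensional F V] (k : ℕ) (hk : k ≤ Module.finrank F V) :
    ∀ (m : ℕ) (S : Submodule F V), Module.finrank F ↥S + m = k →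
      ∃ T : Submodule F V, S ≤ T ∧ Module.finrank F ↥T = k := by
  intro m
  induction m with
  | zero => exact fun S hS => ⟨S, le_rfl, by omega⟩
  | succ m ih =>
    intro S hS
    have hlt : Module.finrank F ↥S < Module.finrank F V := by omega
    obtain ⟨v, hv⟩ := Submodule.exists_of_finrank_lt S hlt
    have hvS : v ∉ S := by simpa using hv 1 one_ne_zero
    have hv0 : v ≠ 0 := fun h => hvS (h ▸ S.zero_mem)
    have hinf : S ⊓ (F ∙ v) = ⊥ := by
      rw [eq_bot_iff]
      rintro x hx
      rw [Submodule.mem_inf] at hx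
      obtain ⟨hxS, hxv⟩ := hx
      rw [Submodule.mem_span_singleton] at hxv
      obtain ⟨r, rfl⟩ := hxv
      rcases eq_or_ne r 0 with rfl | hr
      · simp
      · exact absurd hxS (hv r hr)
    have hrank : Module.finrank F ↥(S ⊔ (F ∙ v)) = Module.finrank F ↥S + 1 := by
      have h1 := Submodule.finrank_sup_add_finrank_inf_eq S (F ∙ v)
      rw [hinf, finrank_span_singleton hv0] at h1
      simpa using h1
    obtain ⟨T, hT1, hT2⟩ := ih (S ⊔ (F ∙ v)) (by omega)
    exact ⟨T, le_trans le_sup_left hT1, hT2⟩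

/-- The number of nonzero vectors in a submodule. -/
lemma aux_card_nonzero [Fintype V] (S : Submodule F V) :
    (Finset.univ.filter fun v : V => v ∈ S ∧ v ≠ 0).card + 1 = Fintype.card ↥S := by
  rw [Fintype.card_subtype]
  have h : (Finset.univ.filter fun v : V => v ∈ S) =
      insert (0 : V) (Finset.univ.filter fun v : V => v ∈ S ∧ v ≠ 0) := by
    ext v
    simp only [Finset.mem_filter, Finset.mem_univ, true_and, Finset.mem_insert]
    constructor
    · intro hvS
      rcases eq_or_ne v 0 with rfl | hv
      · exact Or.inl rfl
      · exact Or.inr ⟨hvS, hv⟩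
    · rintro (rfl | ⟨hvS, _⟩)
      · exact S.zero_mem
      · exact hvS
  rw [h, Finset.card_insert_of_notMem (by simp)]

/-- Key double counting: the traces of a vector space partition on any submodule `H`
count the nonzero points of `H`. -/
lemma aux_partition_count [Fintype F] [Fintype V] [FiniteDimensional F V] {P : Finset (Submodule F V)}
    (hP : IsVSPartition F P) (H : Submodule F V) :
    (∑ X ∈ P, Fintype.card ↥(X ⊓ H)) + 1 = Fintype.card ↥H + P.card := by
  choose f hf using fun (v : V) (hv : v ≠ 0) => hP.2 v hv
  set g : V → Submodule F V := fun v => if hv : v ≠ 0 then f v hv else ⊥ with hg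
  set s : Finset V := Finset.univ.filter fun v : V => v ∈ H ∧ v ≠ 0 with hs
  have hmem : ∀ v ∈ s, g v ∈ s.image g → True := fun _ _ _ => trivial
  have hgP : ∀ v ∈ s, g v ∈ P := by
    intro v hv
    rw [hs, Finset.mem_filter] at hv
    obtain ⟨-, -, hv0⟩ := hv
    simp only [hg, dif_pos hv0]
    exact (hf v hv0).1.1
  have hcard := Finset.card_eq_sum_card_fiberwise hgP
  have hfib : ∀ X ∈ P, (s.filter fun v => g v = X) =
      Finset.univ.filter fun v : V => v ∈ X ⊓ H ∧ v ≠ 0 := by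
    intro X hX
    ext v
    simp only [hs, Finset.mem_filter, Finset.mem_univ, true_and, Submodule.mem_inf]
    constructor
    · rintro ⟨⟨hvH, hv0⟩, hgv⟩
      refine ⟨⟨?_, hvH⟩, hv0⟩
      have : v ∈ g v := by
        simp only [hg, dif_pos hv0]
        exact (hf v hv0).1.2
      rwa [hgv] at this
    · rintro ⟨⟨hvX, hvH⟩, hv0⟩
      refine ⟨⟨hvH, hv0⟩, ?_⟩
      simp only [hg, dif_pos hv0]
      exact ((hf v hv0).2 X ⟨hX, hvX⟩).symm
  have hsum : ∀ X ∈ P, (s.filter fun v => g v = X).card + 1 = Fintype.card ↥(X ⊓ H) := by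
    intro X hX
    rw [hfib X hX]
    exact aux_card_nonzero (X ⊓ H)
  calc (∑ X ∈ P, Fintype.card ↥(X ⊓ H)) + 1
      = (∑ X ∈ P, ((s.filter fun v => g v = X).card + 1)) + 1 := by
        refine congrArg (· + 1) (Finset.sum_congr rfl fun X hX => (hsum X hX).symm)
    _ = s.card + P.card + 1 := by
        rw [Finset.sum_add_distrib, Finset.sum_const, smul_eq_mul, mul_one, ← hcard]
    _ = Fintype.card ↥H + P.card := by
        rw [add_right_comm, aux_card_nonzero H]

end Aux

/-- Lower bound on the number of spaces in a vector space partition containing a space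
of highest dimension `d` and a space of another dimension `d' < n - d`. -/
theorem stmt7 (q n d d' : ℕ) (F V : Type*) [Field F] [Fintype F] [AddCommGroup V]
    [Module F V] [FiniteDimensional F V] (hq : Fintype.card F = q)
    (hnV : Module.finrank F V = n)
    (P : Finset (Submodule F V)) (hP : IsVSPartition F P)
    (hmax : ∀ U ∈ P, Module.finrank F ↥U ≤ d)
    (hd : 0 < dimCount F P d) (hd' : 0 < dimCount F P d')
    (hne : d' ≠ d) (hlt : d' < n - d) :
    q ^ d + q ^ d' + 1 ≤ P.card := by
  haveI : Finite V := Module.finite_of_finite F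
  haveI : Fintype V := Fintype.ofFinite V
  -- extract U and W
  obtain ⟨U, hU⟩ := Finset.card_pos.mp hd
  rw [Finset.mem_filter] at hU
  obtain ⟨hUP, hUrank⟩ := hU
  obtain ⟨W, hW⟩ := Finset.card_pos.mp hd'
  rw [Finset.mem_filter] at hW
  obtain ⟨hWP, hWrank⟩ := hW
  have hUW : U ≠ W := by
    intro h
    rw [h, hWrank] at hUrank
    exact hne hUrank
  -- basic numerology
  have hq2 : 2 ≤ q := by rw [← hq]; exact Fintype.one_lt_card
  have hdn : d ≤ n := by rw [← hUrank, ← hnV]; exact Submodule.finrank_le U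
  have hn1 : d + d' + 1 ≤ n := by omega
  -- a hyperplane containing U ⊔ W
  have hsuple : Module.finrank F ↥(U ⊔ W) ≤ d + d' := by
    have := Submodule.finrank_add_le_finrank_add_finrank U W
    rw [hUrank, hWrank] at this
    exact this
  obtain ⟨H, hUWH, hHrank⟩ :=
    aux_exists_le_finrank (F := F) (V := V) (n - 1) (by omega)
      ((n - 1) - Module.finrank F ↥(U ⊔ W)) (U ⊔ W) (by omega)
  have hUH : U ≤ H := le_trans le_sup_left hUWH
  have hWH : W ≤ H := le_trans le_sup_right hUWH
  -- cardinalities of submodules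
  have cardSub : ∀ S : Submodule F V, Fintype.card ↥S = q ^ Module.finrank F ↥S := by
    intro S
    rw [Module.card_eq_pow_finrank (K := F), hq]
  -- the two counting identities
  have E1 := aux_partition_count hP (⊤ : Submodule F V)
  have E2 := aux_partition_count hP H
  rw [show Fintype.card ↥(⊤ : Submodule F V) = q ^ n by
    rw [cardSub, finrank_top, hnV]] at E1
  rw [show Fintype.card ↥H = q ^ (n - 1) by rw [cardSub, hHrank]] at E2
  have hEtop : ∀ X ∈ P, Fintype.card ↥(X ⊓ (⊤ : Submodule F V)) = Fintype.card ↥X := by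
    intro X _
    rw [inf_top_eq]
  rw [Finset.sum_congr rfl hEtop] at E1
  -- split the sums over H
  have hsplit1 := Finset.sum_filter_add_sum_filter_not P (fun X => X ≤ H)
    (fun X => Fintype.card ↥X)
  have hsplit2 := Finset.sum_filter_add_sum_filter_not P (fun X => X ≤ H)
    (fun X => Fintype.card ↥(X ⊓ H))
  set a : ℕ := ∑ X ∈ P.filter (fun X => X ≤ H), Fintype.card ↥X with ha
  set b : ℕ := ∑ X ∈ P.filter (fun X => ¬ X ≤ H), Fintype.card ↥(X ⊓ H) with hb
  -- on members inside H, the trace is the member itself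
  have hin : ∑ X ∈ P.filter (fun X => X ≤ H), Fintype.card ↥(X ⊓ H) = a := by
    rw [ha]
    refine Finset.sum_congr rfl fun X hX => ?_
    rw [Finset.mem_filter] at hX
    rw [inf_eq_left.mpr hX.2]
  -- on members not inside H, the trace has index q
  have hout : ∑ X ∈ P.filter (fun X => ¬ X ≤ H), Fintype.card ↥X = q * b := by
    rw [hb, Finset.mul_sum]
    refine Finset.sum_congr rfl fun X hX => ?_
    rw [Finset.mem_filter] at hX
    obtain ⟨hXP, hXnle⟩ := hX
    have hx1 : 1 ≤ Module.finrank F ↥X := by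
      have : Nontrivial ↥X := Submodule.nontrivial_iff_ne_bot.mpr (hP.1 X hXP)
      exact Module.finrank_pos
    have hsup : X ⊔ H = ⊤ := by
      apply Submodule.eq_top_of_finrank_eq
      have h1 : Module.finrank F ↥H < Module.finrank F ↥(X ⊔ H) :=
        Submodule.finrank_lt_finrank_of_lt (right_lt_sup.mpr hXnle)
      have h2 : Module.finrank F ↥(X ⊔ H) ≤ n := by
        rw [← hnV]; exact Submodule.finrank_le _
      rw [hHrank] at h1
      rw [hnV]
      omega
    have heq := Submodule.finrank_sup_add_finrank_inf_eq X H
    rw [hsup, finrank_top, hnV, hHrank] at heq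
    have hXH : Module.finrank F ↥(X ⊓ H) = Module.finrank F ↥X - 1 := by omega
    rw [cardSub X, cardSub (X ⊓ H), hXH, ← pow_succ']
    congr 1
    omega
  rw [← hsplit1, hout] at E1
  rw [← hsplit2, hin] at E2
  -- E1 : a + q * b + 1 = q ^ n + P.card
  -- E2 : a + b + 1 = q ^ (n - 1) + P.card
  -- U and W contribute to a
  have hab : q ^ d + q ^ d' ≤ a := by
    have hsub : ({U, W} : Finset (Submodule F V)) ⊆ P.filter (fun X => X ≤ H) := by
      intro X hX
      rw [Finset.mem_insert, Finset.mem_singleton] at hX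
      rw [Finset.mem_filter]
      rcases hX with rfl | rfl
      · exact ⟨hUP, hUH⟩
      · exact ⟨hWP, hWH⟩
    have hpair : ∑ X ∈ ({U, W} : Finset (Submodule F V)), Fintype.card ↥X
        = q ^ d + q ^ d' := by
      rw [Finset.sum_pair hUW, cardSub U, cardSub W, hUrank, hWrank]
    rw [ha, ← hpair]
    exact Finset.sum_le_sum_of_subset hsub
  -- linear arithmetic over ℤ to conclude P.card = a + 1
  have hpow : q ^ n = q * q ^ (n - 1) := by
    rw [← pow_succ']
    congr 1
    omega
  have hNa : P.card = a + 1 := by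
    have e1 : (a : ℤ) + q * b + 1 = q * q ^ (n - 1) + P.card := by
      have := E1
      rw [hpow] at this
      exact_mod_cast congrArg (fun x : ℕ => (x : ℤ)) this
    have e2 : (a : ℤ) + b + 1 = q ^ (n - 1) + P.card := by
      exact_mod_cast congrArg (fun x : ℕ => (x : ℤ)) E2
    have hq1 : (1 : ℤ) ≤ q := by exact_mod_cast Nat.one_le_of_lt hq2
    have hbp : (b : ℤ) = q ^ (n - 1) := by
      have hcancel : ((q : ℤ) - 1) * b = ((q : ℤ) - 1) * q ^ (n - 1) := by ring_nf; linarith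
      have hne0 : ((q : ℤ) - 1) ≠ 0 := by
        have : (2 : ℤ) ≤ q := by exact_mod_cast hq2
        omega
      exact mul_left_cancel₀ hne0 hcancel
    have : (P.card : ℤ) = a + 1 := by linarith
    exact_mod_cast this
  omega
end

section
/- Let P be a vector space partition of an n-dimensional vector space V over the finite field F with q elements such that P has at least two members, every member of P has dimension d, and n − d ≤ d. Then n = 2d and |P| = q^d + 1. -/
attribute [local instance] Classical.propDecidable

/-- A nontrivial vector space partition into spaces all of dimension `d ≥ n - d`
must satisfy `n = 2d` and have exactly `q^d + 1` members. -/
theorem stmt8 (q n d : ℕ) (F V : Type*) [Field F] [Fintype F] [AddCommGroup V]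
    [Module F V] [FiniteDimensional F V] (hq : Fintype.card F = q)
    (hnV : Module.finrank F V = n)
    (P : Finset (Submodule F V)) (hP : IsVSPartition F P)
    (hall : ∀ U ∈ P, Module.finrank F ↥U = d)
    (hnd : n - d ≤ d) (hcard : 2 ≤ P.card) :
    n = 2 * d ∧ P.card = q ^ d + 1 := by
  obtain ⟨hbot, huniq⟩ := hP
  have : Finite V := Module.finite_of_finite F
  have : Fintype V := Fintype.ofFinite V
  -- any two distinct members intersect trivially
  have hinter : ∀ U ∈ P, ∀ W ∈ P, U ≠ W → U ⊓ W = ⊥ := by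
    intro U hU W hW hUW
    rw [Submodule.eq_bot_iff]
    intro v hv
    by_contra h0
    obtain ⟨X, -, hX⟩ := huniq v h0
    exact hUW ((hX U ⟨hU, hv.1⟩).trans (hX W ⟨hW, hv.2⟩).symm)
  obtain ⟨U, hU, W, hW, hUW⟩ := Finset.one_lt_card.mp hcard
  have hdpos : 1 ≤ d := by
    rw [← hall U hU]
    rcases Nat.eq_zero_or_pos (Module.finrank F ↥U) with h | h
    · exact absurd (Submodule.finrank_eq_zero.mp h) (hbot U hU)
    · exact h
  have hdn : d ≤ n := by rw [← hall U hU, ← hnV]; exact Submodule.finrank_le U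
  have h2d : 2 * d ≤ n := by
    have := Submodule.finrank_sup_add_finrank_inf_eq U W
    rw [hinter U hU W hW hUW, hall U hU, hall W hW] at this
    rw [finrank_bot, add_zero] at this
    have h2 : Module.finrank F ↥(U ⊔ W) ≤ n := by rw [← hnV]; exact Submodule.finrank_le _
    omega
  have hn2d : n = 2 * d := by omega
  refine ⟨hn2d, ?_⟩
  -- counting
  set S : Finset V := Finset.univ.filter (fun v : V => v ≠ 0) with hS
  have key : ∀ U ∈ P, (S.filter (fun v => v ∈ U)).card = q ^ d - 1 := by
    intro U hU
    have h1 : S.filter (fun v => v ∈ U) = (Finset.univ.filter (fun v : V => v ∈ U)).erase 0 := by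
      ext v
      simp [hS, Finset.mem_erase, and_comm]
    rw [h1, Finset.card_erase_of_mem (by simp [Submodule.zero_mem])]
    have h2 : (Finset.univ.filter (fun v : V => v ∈ U)).card = Fintype.card U :=
      (Fintype.card_subtype _).symm
    rw [h2, Module.card_eq_pow_finrank (K := F), hq, hall U hU]
  -- fiber decomposition
  have hdisj : S = P.biUnion (fun U => S.filter (fun v => v ∈ U)) := by
    ext v
    simp only [Finset.mem_biUnion, Finset.mem_filter, hS, Finset.mem_univ, true_and]
    constructor
    · intro hv
      obtain ⟨X, hX, -⟩ := huniq v hv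
      exact ⟨X, hX.1, hv, hX.2⟩
    · rintro ⟨X, -, hv, -⟩
      exact hv
  have hScard : S.card = P.card * (q ^ d - 1) := by
    rw [hdisj, Finset.card_biUnion, Finset.sum_congr rfl key, Finset.sum_const, smul_eq_mul]
    intro U hU W hW hUW
    simp only [Finset.disjoint_filter]
    intro v hvS hvU hvW
    have hv : v ≠ 0 := by simpa [hS] using hvS
    have := hinter U hU W hW hUW
    have : v ∈ U ⊓ W := ⟨hvU, hvW⟩
    rw [hinter U hU W hW hUW] at this
    exact hv this
  have hScard2 : S.card = q ^ n - 1 := by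
    have : S.card = Fintype.card V - 1 := by
      rw [hS]
      rw [Finset.filter_ne']
      rw [Finset.card_erase_of_mem (Finset.mem_univ 0), Finset.card_univ]
    rw [this, Module.card_eq_pow_finrank (K := F), hq, hnV]
  -- arithmetic
  have hq2 : 2 ≤ q := by rw [← hq]; exact Fintype.one_lt_card
  have ha : 2 ≤ q ^ d := by
    calc 2 = 2 ^ 1 := rfl
    _ ≤ q ^ d := Nat.pow_le_pow_left hq2 d |>.trans' (Nat.pow_le_pow_right (by norm_num) hdpos)
  have heq : P.card * (q ^ d - 1) = (q ^ d + 1) * (q ^ d - 1) := by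
    rw [← hScard, hScard2, hn2d]
    have h1 : q ^ (2 * d) = (q ^ d) ^ 2 := by rw [mul_comm, pow_mul]
    rw [h1]
    have := Nat.sq_sub_sq (q ^ d) 1
    simpa using this
  exact Nat.eq_of_mul_eq_mul_right (by omega) heq
end

section
/- Let P be a vector space partition of an n-dimensional vector space V over the finite field F with q elements such that P has at least two members. Then |P| ≥ q^{⌈n/2⌉} + 1. -/
attribute [local instance] Classical.propDecidable

open Module

theorem key_sum (q n : ℕ) (F V : Type*) [Field F] [Fintype F] [AddCommGroup V]
    [Module F V] [FiniteDimensional F V] [Fintype V] (hq : Fintype.card F = q)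
    (hnV : Module.finrank F V = n)
    (P : Finset (Submodule F V)) (hP : IsVSPartition F P) :
    ∑ U ∈ P, q ^ finrank F ↥U = q ^ n - 1 + P.card := by
  classical
  have hcardU : ∀ U : Submodule F V,
      (((U : Set V).toFinset).erase 0).card = q ^ finrank F ↥U - 1 := by
    intro U
    rw [Finset.card_erase_of_mem (by simp), Set.toFinset_card]
    have h := Module.card_fintype (finBasis F U)
    simp only [Fintype.card_fin] at h; rw [hq] at h
    have h2 : Fintype.card ↥(U : Set V) = Fintype.card ↥U := Fintype.card_congr (Equiv.refl _)
    omega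
  have hbi : Finset.univ.erase (0 : V) = P.biUnion (fun U => ((U : Set V).toFinset).erase 0) := by
    ext v
    simp only [Finset.mem_erase, Finset.mem_univ, and_true, Finset.mem_biUnion,
      Set.mem_toFinset, SetLike.mem_coe]
    constructor
    · intro hv
      obtain ⟨U, ⟨hU, hvU⟩, -⟩ := hP.2 v hv
      exact ⟨U, hU, hv, hvU⟩
    · rintro ⟨U, -, hv, -⟩; exact hv
  have hdisj : ∀ U ∈ P, ∀ W ∈ P, U ≠ W →
      Disjoint (((U : Set V).toFinset).erase 0) (((W : Set V).toFinset).erase 0) := by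
    intro U hU W hW hUW
    rw [Finset.disjoint_left]
    intro v hvU hvW
    simp only [Finset.mem_erase, Set.mem_toFinset, SetLike.mem_coe] at hvU hvW
    obtain ⟨X, -, hXuniq⟩ := hP.2 v hvU.1
    exact hUW ((hXuniq U ⟨hU, hvU.2⟩).trans (hXuniq W ⟨hW, hvW.2⟩).symm)
  have hV : Fintype.card V = q ^ n := by
    have h := Module.card_fintype (finBasis F V)
    simp only [Fintype.card_fin] at h
    rw [h, hq, hnV]
  have hcount : ∑ U ∈ P, (q ^ finrank F ↥U - 1) = q ^ n - 1 := by
    have hc := Finset.card_biUnion hdisj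
    rw [← hbi, Finset.card_erase_of_mem (Finset.mem_univ 0), Finset.card_univ, hV] at hc
    rw [hc]
    exact Finset.sum_congr rfl (fun U _ => (hcardU U).symm)
  have hpos : ∀ U ∈ P, 1 ≤ q ^ finrank F ↥U := fun U _ => Nat.one_le_pow _ _ (by
    have : 0 < Fintype.card F := Fintype.card_pos
    omega)
  calc ∑ U ∈ P, q ^ finrank F ↥U = ∑ U ∈ P, ((q ^ finrank F ↥U - 1) + 1) := by
        exact Finset.sum_congr rfl (fun U hU => by have := hpos U hU; omega)
    _ = q ^ n - 1 + P.card := by rw [Finset.sum_add_distrib, hcount, Finset.sum_const, smul_eq_mul, mul_one]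

/-- Any vector space partition with at least two members has at least
`q^⌈n/2⌉ + 1` members. -/
theorem stmt9 (q n : ℕ) (F V : Type*) [Field F] [Fintype F] [AddCommGroup V]
    [Module F V] [FiniteDimensional F V] (hq : Fintype.card F = q)
    (hnV : Module.finrank F V = n)
    (P : Finset (Submodule F V)) (hP : IsVSPartition F P)
    (hcard : 2 ≤ P.card) :
    q ^ ((n + 1) / 2) + 1 ≤ P.card := by
  have hF : Finite V := Module.finite_of_finite F
  letI : Fintype V := Fintype.ofFinite V
  have hq2 : 2 ≤ q := by rw [← hq]; exact Fintype.one_lt_card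
  have hsum := key_sum q n F V hq hnV P hP
  set c := (n + 1) / 2 with hcdef
  rcases Nat.eq_zero_or_pos n with hn0 | hn
  · subst hn0; have hc0 : c = 0 := by omega
    simp only [hc0, pow_zero]; omega
  have hPne : P.Nonempty := Finset.card_pos.mp (by omega)
  obtain ⟨W, hW, hWmax⟩ := P.exists_max_image (fun U => finrank F ↥U) hPne
  set d := finrank F ↥W with hd
  have hdle : d ≤ n := hnV ▸ Submodule.finrank_le W
  have hd1 : 1 ≤ d := by
    have h1 : Nontrivial ↥W := Submodule.nontrivial_iff_ne_bot.mpr (hP.1 W hW)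
    have := finrank_pos_iff (R := F) (M := ↥W) |>.mpr h1
    omega
  have hc1 : 1 ≤ c := by omega
  have h2c : 2 * c ≤ n + 1 := by omega
  by_cases hdc : c ≤ d
  · -- a member of large dimension
    have hdn : d < n := by
      rcases Nat.lt_or_ge d n with h | h
      · exact h
      exfalso
      have hWtop : W = ⊤ := Submodule.eq_top_of_finrank_eq (by rw [← hd, hnV]; omega)
      obtain ⟨U, hU, hUW⟩ := Finset.exists_mem_ne (show 1 < P.card by omega) W
      obtain ⟨v, hv, hv0⟩ := Submodule.exists_mem_ne_zero_of_ne_bot (hP.1 U hU)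
      obtain ⟨X, -, hXuniq⟩ := hP.2 v hv0
      exact hUW ((hXuniq U ⟨hU, hv⟩).trans
        (hXuniq W ⟨hW, by rw [hWtop]; trivial⟩).symm)
    have hsplit : q ^ d + ∑ U ∈ P.erase W, q ^ finrank F ↥U = q ^ n - 1 + P.card := by
      rw [← hsum, hd]
      exact Finset.add_sum_erase P (fun U => q ^ finrank F ↥U) hW
    have hbound : ∀ U ∈ P.erase W, q ^ finrank F ↥U ≤ q ^ (n - d) := by
      intro U hU'
      obtain ⟨hUW, hU⟩ := Finset.mem_erase.mp hU'
      have hdisj : U ⊓ W = ⊥ := by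
        by_contra h
        obtain ⟨v, hv, hv0⟩ := Submodule.exists_mem_ne_zero_of_ne_bot h
        obtain ⟨X, -, hXuniq⟩ := hP.2 v hv0
        exact hUW ((hXuniq U ⟨hU, hv.1⟩).trans (hXuniq W ⟨hW, hv.2⟩).symm)
      have hfr := Submodule.finrank_sup_add_finrank_inf_eq U W
      rw [hdisj, finrank_bot] at hfr
      have hle : finrank F ↥(U ⊔ W) ≤ n := hnV ▸ Submodule.finrank_le _
      exact Nat.pow_le_pow_right (by omega) (by omega)
    have hsum2 : ∑ U ∈ P.erase W, q ^ finrank F ↥U ≤ (P.card - 1) * q ^ (n - d) := by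
      calc ∑ U ∈ P.erase W, q ^ finrank F ↥U ≤ ∑ _U ∈ P.erase W, q ^ (n - d) :=
            Finset.sum_le_sum hbound
        _ = (P.card - 1) * q ^ (n - d) := by
            rw [Finset.sum_const, Finset.card_erase_of_mem hW, smul_eq_mul]
    have hqnd : q ^ n = q ^ d * q ^ (n - d) := by rw [← pow_add]; congr 1; omega
    have ht2 : 2 ≤ q ^ (n - d) := le_trans hq2 (Nat.le_self_pow (by omega) q)
    have hqd2 : 2 ≤ q ^ d := le_trans hq2 (Nat.le_self_pow (by omega) q)
    have hqcd : q ^ c ≤ q ^ d := Nat.pow_le_pow_right (by omega) hdc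
    have hkey : q ^ n - 1 + P.card ≤ q ^ d + (P.card - 1) * q ^ (n - d) := by omega
    have hgoal : q ^ d + 1 ≤ P.card := by
      by_contra hcon
      push_neg at hcon
      have h1 : 1 ≤ q ^ n := Nat.one_le_pow _ _ (by omega)
      zify [h1, show 1 ≤ P.card by omega] at hkey
      have hq1 : (1 : ℤ) ≤ (q:ℤ) ^ (n-d) - 1 := by
        have : (2:ℤ) ≤ (q:ℤ)^(n-d) := by exact_mod_cast ht2
        omega
      have hmd : (P.card : ℤ) ≤ (q:ℤ) ^ d := by exact_mod_cast by omega
      have hqnd' : ((q:ℤ)) ^ n = (q:ℤ) ^ d * (q:ℤ) ^ (n - d) := by exact_mod_cast hqnd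
      nlinarith [mul_pos (show (0:ℤ) < (q:ℤ)^d - (P.card:ℤ) + 1 by omega)
        (show (0:ℤ) < (q:ℤ)^(n-d) - 1 by omega)]
    omega
  · -- all members of small dimension
    push_neg at hdc
    have hc2 : 2 ≤ c := by omega
    have hbound : ∀ U ∈ P, q ^ finrank F ↥U ≤ q ^ (c - 1) :=
      fun U hU => Nat.pow_le_pow_right (by omega) (by have := hWmax U hU; omega)
    have hsum2 : q ^ n - 1 + P.card ≤ P.card * q ^ (c - 1) := by
      rw [← hsum]
      calc ∑ U ∈ P, q ^ finrank F ↥U ≤ ∑ _U ∈ P, q ^ (c - 1) := Finset.sum_le_sum hbound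
        _ = P.card * q ^ (c - 1) := by rw [Finset.sum_const, smul_eq_mul]
    by_contra hcon
    push_neg at hcon
    have h1 : P.card * q ^ (c - 1) ≤ q ^ c * q ^ (c - 1) :=
      Nat.mul_le_mul_right _ (by omega)
    have h2 : q ^ c * q ^ (c - 1) = q ^ (2 * c - 1) := by rw [← pow_add]; congr 1; omega
    have h3 : q ^ (2 * c - 1) ≤ q ^ n := Nat.pow_le_pow_right (by omega) (by omega)
    have h4 : 1 ≤ q ^ n := Nat.one_le_pow _ _ (by omega)
    omega
end

section
/- Let P be a vector space partition of a 2t-dimensional vector space V over the finite field F with q elements, let a be the integer with m_t = q^t + 1 − a, and let d be an integer with t/2 < d < t, where m_d denotes the number of members of P of dimension d. If there exists a t-spread S of V that contains every t-dimensional member of P, then a ≥ min(m_d, q^{⌈d/2⌉} + 1). -/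
attribute [local instance] Classical.propDecidable

/-- A partial `t`-spread: a set of `t`-dimensional subspaces, any two distinct members
of which intersect in the zero subspace. -/
def IsPartialSpread (F : Type*) {V : Type*} [Field F] [AddCommGroup V] [Module F V]
    (t : ℕ) (S : Finset (Submodule F V)) : Prop :=
  (∀ U ∈ S, Module.finrank F ↥U = t) ∧ ∀ U ∈ S, ∀ U' ∈ S, U ≠ U' → U ⊓ U' = ⊥

/-- A `t`-spread: a partial `t`-spread that is also a vector space partition. -/
def IsSpread (F : Type*) {V : Type*} [Field F] [AddCommGroup V] [Module F V]
    (t : ℕ) (S : Finset (Submodule F V)) : Prop :=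
  IsPartialSpread F t S ∧ IsVSPartition F S

section Aux

variable {F V : Type*} [Field F] [Fintype F] [AddCommGroup V] [Module F V]

lemma vsp_inf_eq_bot {P : Finset (Submodule F V)} (hP : IsVSPartition F P)
    {U U' : Submodule F V} (hU : U ∈ P) (hU' : U' ∈ P) (hne : U ≠ U') : U ⊓ U' = ⊥ := by
  rw [Submodule.eq_bot_iff]
  intro x hx
  by_contra hx0
  obtain ⟨W, -, hWuniq⟩ := hP.2 x hx0
  exact hne ((hWuniq U ⟨hU, hx.1⟩).trans (hWuniq U' ⟨hU', hx.2⟩).symm)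

lemma vsp_sum [Fintype V] {P : Finset (Submodule F V)} (hP : IsVSPartition F P) :
    (∑ U ∈ P, Fintype.card F ^ Module.finrank F ↥U) + 1
      = Fintype.card F ^ Module.finrank F V + P.card := by
  classical
  have hf : ∀ v : V, v ≠ 0 → ∃ U : Submodule F V, U ∈ P ∧ v ∈ U := fun v hv => (hP.2 v hv).exists
  set f : V → Submodule F V :=
    fun v => if h : ∃ U : Submodule F V, U ∈ P ∧ v ∈ U then h.choose else ⊥ with hfdef
  have hfmem : ∀ v : V, v ≠ 0 → f v ∈ P ∧ v ∈ f v := by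
    intro v hv
    have h := hf v hv
    simp only [hfdef, dif_pos h]
    exact h.choose_spec
  have hfeq : ∀ v : V, v ≠ 0 → ∀ U ∈ P, v ∈ U → f v = U := by
    intro v hv U hU hvU
    obtain ⟨W, -, hWuniq⟩ := hP.2 v hv
    rw [hWuniq _ ⟨(hfmem v hv).1, (hfmem v hv).2⟩, hWuniq U ⟨hU, hvU⟩]
  set s : Finset V := Finset.univ.filter (fun v : V => v ≠ 0) with hsdef
  have key : s.card = ∑ U ∈ P, (s.filter (fun v => f v = U)).card := by
    apply Finset.card_eq_sum_card_fiberwise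
    intro v hv
    have hv0 : v ≠ 0 := by simpa [hsdef] using hv
    exact (hfmem v hv0).1
  have hs : s.card + 1 = Fintype.card F ^ Module.finrank F V := by
    have h0 : s = Finset.univ.erase 0 := by
      rw [hsdef, Finset.filter_ne']
    rw [h0, Finset.card_erase_of_mem (Finset.mem_univ 0)]
    have : 1 ≤ Finset.univ.card (α := V) := Finset.card_pos.mpr ⟨0, Finset.mem_univ 0⟩
    rw [Nat.sub_add_cancel this, ← Fintype.card, Module.card_eq_pow_finrank (K := F)]
  have hfib : ∀ U ∈ P, (s.filter (fun v => f v = U)).card + 1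
      = Fintype.card F ^ Module.finrank F ↥U := by
    intro U hU
    have h1 : s.filter (fun v => f v = U) = (Finset.univ.filter (fun v : V => v ∈ U)).erase 0 := by
      ext v
      simp only [hsdef, Finset.mem_filter, Finset.mem_erase, Finset.mem_univ, true_and,
        Finset.filter_filter]
      constructor
      · rintro ⟨hv0, hfv⟩
        exact ⟨hv0, hfv ▸ (hfmem v hv0).2⟩
      · rintro ⟨hv0, hvU⟩
        exact ⟨hv0, hfeq v hv0 U hU hvU⟩
    rw [h1, Finset.card_erase_of_mem (by simp [U.zero_mem])]
    have h2 : (Finset.univ.filter (fun v : V => v ∈ U)).card = Fintype.card ↥U := by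
      rw [Fintype.card_subtype]
    have h3 : 1 ≤ (Finset.univ.filter (fun v : V => v ∈ U)).card :=
      Finset.card_pos.mpr ⟨0, by simp [U.zero_mem]⟩
    rw [Nat.sub_add_cancel h3, h2, Module.card_eq_pow_finrank (K := F)]
  calc (∑ U ∈ P, Fintype.card F ^ Module.finrank F ↥U) + 1
      = (∑ U ∈ P, ((s.filter (fun v => f v = U)).card + 1)) + 1 := by
        rw [Finset.sum_congr rfl (fun U hU => (hfib U hU).symm)]
    _ = (s.card + 1) + P.card := by
        rw [Finset.sum_add_distrib, Finset.sum_const, smul_eq_mul, mul_one, key]; ring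
    _ = Fintype.card F ^ Module.finrank F V + P.card := by rw [hs]

lemma vsp_min_card {W : Type*} [AddCommGroup W] [Module F W] [FiniteDimensional F W]
    {Q : Finset (Submodule F W)} (hQ : IsVSPartition F Q) (htop : (⊤ : Submodule F W) ∉ Q)
    (hn : 1 ≤ Module.finrank F W) :
    Fintype.card F ^ ((Module.finrank F W + 1) / 2) + 1 ≤ Q.card := by
  classical
  haveI : Finite W := Module.finite_iff_finite.mp ‹FiniteDimensional F W›
  haveI : Fintype W := Fintype.ofFinite W
  set q := Fintype.card F with hqd
  set n := Module.finrank F W with hnd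
  have hq2 : 2 ≤ q := Fintype.one_lt_card
  -- Q is nonempty
  haveI : Nontrivial W := by
    rw [← Module.finrank_pos_iff (R := F)]; omega
  obtain ⟨v, hv0⟩ := exists_ne (0 : W)
  obtain ⟨U1, ⟨hU1, -⟩, -⟩ := hQ.2 v hv0
  have hQne : Q.Nonempty := ⟨U1, hU1⟩
  -- dimensions of members
  have hdim : ∀ U ∈ Q, 1 ≤ Module.finrank F ↥U ∧ Module.finrank F ↥U ≤ n - 1 := by
    intro U hU
    constructor
    · rw [Nat.one_le_iff_ne_zero]
      intro h
      exact hQ.1 U hU (Submodule.finrank_eq_zero.mp h)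
    · have : U < ⊤ := lt_top_iff_ne_top.mpr (fun h => htop (h ▸ hU))
      have := Submodule.finrank_lt (K := F) this.ne
      omega
  obtain ⟨U0, hU0, hmax⟩ := Finset.exists_max_image Q (fun U => Module.finrank F ↥U) hQne
  set e0 := Module.finrank F ↥U0 with he0
  have he01 : 1 ≤ e0 := (hdim U0 hU0).1
  have he0n : e0 ≤ n - 1 := (hdim U0 hU0).2
  -- pairwise dimension bound
  have hpair : ∀ U ∈ Q, U ≠ U0 → Module.finrank F ↥U ≤ n - e0 := by
    intro U hU hne
    have hinf := vsp_inf_eq_bot hQ hU hU0 hne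
    have hsum := Submodule.finrank_sup_add_finrank_inf_eq U U0
    rw [hinf, finrank_bot, add_zero] at hsum
    have hle : Module.finrank F ↥(U ⊔ U0) ≤ n := Submodule.finrank_le _
    omega
  -- counting
  have hcount := vsp_sum (F := F) hQ
  rw [← hnd, ← hqd] at hcount
  set A := Q.card with hA
  have hA1 : 1 ≤ A := Finset.card_pos.mpr hQne
  set Sn := ∑ U ∈ Q, q ^ Module.finrank F ↥U with hSn
  set Sn' := ∑ U ∈ Q.erase U0, q ^ Module.finrank F ↥U with hSn'
  have hsplit : Sn' + q ^ e0 = Sn := Finset.sum_erase_add Q _ hU0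
  -- bound 1 : each term ≤ q ^ e0
  have hb1 : Sn ≤ A * q ^ e0 := by
    have := Finset.sum_le_card_nsmul Q (fun U => q ^ Module.finrank F ↥U) (q ^ e0)
      (fun U hU => Nat.pow_le_pow_right (by omega) (hmax U hU))
    simpa [hA, hSn] using this
  -- bound 2 : each term in erase ≤ q ^ (n - e0)
  have hb2 : Sn' ≤ (A - 1) * q ^ (n - e0) := by
    have := Finset.sum_le_card_nsmul (Q.erase U0) (fun U => q ^ Module.finrank F ↥U)
      (q ^ (n - e0)) (fun U hU => Nat.pow_le_pow_right (by omega)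
        (hpair U (Finset.mem_of_mem_erase hU) (Finset.ne_of_mem_erase hU)))
    simpa [Finset.card_erase_of_mem hU0, hA, hSn'] using this
  have hxy : q ^ e0 * q ^ (n - e0) = q ^ n := by
    rw [← pow_add]; congr 1; omega
  have hy2 : 2 ≤ q ^ (n - e0) := by
    calc 2 ≤ q := hq2
    _ = q ^ 1 := (pow_one q).symm
    _ ≤ q ^ (n - e0) := Nat.pow_le_pow_right (by omega) (by omega)
  have hx1 : 1 ≤ q ^ e0 := Nat.one_le_pow _ _ (by omega)
  -- move to the integers
  set X : ℤ := (q : ℤ) ^ e0 with hX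
  set Y : ℤ := (q : ℤ) ^ (n - e0) with hY
  set Az : ℤ := (A : ℤ) with hAz
  set Sz : ℤ := (Sn : ℤ) with hSz
  set Sz' : ℤ := (Sn' : ℤ) with hSz'
  have zsplit : Sz' + X = Sz := by rw [hSz', hX, hSz]; exact_mod_cast hsplit
  have zb1 : Sz ≤ Az * X := by rw [hSz, hAz, hX]; exact_mod_cast hb1
  have zb2 : Sz' ≤ (Az - 1) * Y := by
    rw [hSz', hAz, hY]
    have : ((A - 1 : ℕ) : ℤ) = (A : ℤ) - 1 := by
      rw [Nat.cast_sub hA1]; norm_num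
    rw [← this]
    exact_mod_cast hb2
  have zxy : X * Y = (q : ℤ) ^ n := by rw [hX, hY]; exact_mod_cast hxy
  have zcount : Sz + 1 = X * Y + Az := by
    rw [zxy, hSz, hAz]; exact_mod_cast hcount
  have zy2 : 2 ≤ Y := by rw [hY]; exact_mod_cast hy2
  have zx1 : 1 ≤ X := by rw [hX]; exact_mod_cast hx1
  have zA1 : 1 ≤ Az := by rw [hAz]; exact_mod_cast hA1
  -- A ≥ q^(n-e0) + 1
  have key1 : Y + 1 ≤ Az := by
    by_contra h
    push_neg at h
    have hAy : Az ≤ Y := by omega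
    nlinarith [mul_nonneg (by linarith : (0:ℤ) ≤ X - 1) (by linarith : (0:ℤ) ≤ Y - Az)]
  -- A ≥ q^e0 + 1
  have key2 : X + 1 ≤ Az := by
    by_contra h
    push_neg at h
    have hAx : Az ≤ X := by omega
    nlinarith [mul_le_mul (by linarith : (1:ℤ) ≤ X - Az + 1) (by linarith : (1:ℤ) ≤ Y - 1)
      (by norm_num) (by linarith)]
  -- conclude
  have hgoal : (q : ℤ) ^ ((n + 1) / 2) + 1 ≤ Az := by
    rcases le_or_gt ((n + 1) / 2) e0 with hc | hc
    · calc (q:ℤ) ^ ((n + 1) / 2) + 1 ≤ (q:ℤ) ^ e0 + 1 := by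
            have := pow_le_pow_right₀ (by exact_mod_cast Nat.one_le_of_lt hq2 : (1:ℤ) ≤ (q:ℤ)) hc
            linarith
      _ ≤ Az := by rw [← hX]; exact key2
    · have hc' : (n + 1) / 2 ≤ n - e0 := by omega
      calc (q:ℤ) ^ ((n + 1) / 2) + 1 ≤ (q:ℤ) ^ (n - e0) + 1 := by
            have := pow_le_pow_right₀ (by exact_mod_cast Nat.one_le_of_lt hq2 : (1:ℤ) ≤ (q:ℤ)) hc'
            linarith
      _ ≤ Az := by rw [← hY]; exact key1
  have : (q : ℤ) ^ ((n + 1) / 2) + 1 ≤ (A : ℤ) := hgoal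
  exact_mod_cast this

end Aux

/-- If the `t`-dimensional members of the partition can be completed to a `t`-spread,
then `a ≥ min(m_d, q^⌈d/2⌉ + 1)`. -/
theorem stmt10 (q t d : ℕ) (F V : Type*) [Field F] [Fintype F] [AddCommGroup V]
    [Module F V] [FiniteDimensional F V] (hq : Fintype.card F = q)
    (hV : Module.finrank F V = 2 * t)
    (P : Finset (Submodule F V)) (hP : IsVSPartition F P)
    (a : ℤ) (ha : (dimCount F P t : ℤ) = (q : ℤ) ^ t + 1 - a)
    (hd1 : t < 2 * d) (hd2 : d < t)
    (hS : ∃ S : Finset (Submodule F V), IsSpread F t S ∧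
      ∀ U ∈ P, Module.finrank F ↥U = t → U ∈ S) :
    min ((dimCount F P d : ℤ)) ((q : ℤ) ^ ((d + 1) / 2) + 1) ≤ a := by
  classical
  obtain ⟨S, hSsp, hPS⟩ := hS
  haveI : Finite V := Module.finite_iff_finite.mp ‹FiniteDimensional F V›
  haveI : Fintype V := Fintype.ofFinite V
  subst hq
  set q := Fintype.card F with hqd
  have hq2 : 2 ≤ q := Fintype.one_lt_card
  have hd : 1 ≤ d := by omega
  have ht : 1 ≤ t := by omega
  -- the t-dimensional members of P
  set T : Finset (Submodule F V) :=
    P.filter (fun U => Module.finrank F ↥U = t) with hTdef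
  have hTS : T ⊆ S := by
    intro U hU
    rw [hTdef, Finset.mem_filter] at hU
    exact hPS U hU.1 hU.2
  -- the cardinality of the spread
  have hScard : S.card = q ^ t + 1 := by
    have hsum := vsp_sum (F := F) hSsp.2
    rw [hV] at hsum
    have hsum2 : S.card * q ^ t + 1 = q ^ (2 * t) + S.card := by
      rw [← hsum]
      congr 1
      rw [Finset.sum_congr rfl (fun U hU => by rw [hSsp.1.1 U hU]), Finset.sum_const,
        smul_eq_mul]
    have hqt : 2 ≤ q ^ t := by
      calc 2 ≤ q := hq2
      _ = q ^ 1 := (pow_one q).symm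
      _ ≤ q ^ t := Nat.pow_le_pow_right (by omega) ht
    have h2t : q ^ (2 * t) = q ^ t * q ^ t := by rw [two_mul, pow_add]
    -- solve over ℤ
    have hz : (S.card : ℤ) * (q : ℤ) ^ t + 1 = (q : ℤ) ^ t * (q : ℤ) ^ t + S.card := by
      exact_mod_cast h2t ▸ hsum2
    have hfac : ((S.card : ℤ) - ((q : ℤ) ^ t + 1)) * ((q : ℤ) ^ t - 1) = 0 := by
      ring_nf
      linear_combination hz
    have hne : ((q : ℤ) ^ t - 1) ≠ 0 := by
      have : (2 : ℤ) ≤ (q : ℤ) ^ t := by exact_mod_cast hqt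
      omega
    have := (mul_eq_zero.mp hfac).resolve_right hne
    have : (S.card : ℤ) = (q : ℤ) ^ t + 1 := by omega
    exact_mod_cast this
  -- the holes
  set H : Finset (Submodule F V) := S \ T with hHdef
  have hHS : H ⊆ S := Finset.sdiff_subset
  have hTcard : T.card = dimCount F P t := rfl
  have hHcard : (H.card : ℤ) = a := by
    rw [hHdef, Finset.card_sdiff_of_subset hTS]
    have hle : T.card ≤ S.card := Finset.card_le_card hTS
    have : ((S.card - T.card : ℕ) : ℤ) = (S.card : ℤ) - T.card := Nat.cast_sub hle
    rw [this, hScard, hTcard]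
    push_cast
    linarith [ha]
  -- a hole contains no t-dimensional member of P, and members of P of dimension ≠ t
  -- have all their nonzero vectors in holes
  have hhole : ∀ (U : Submodule F V), U ∈ P → Module.finrank F ↥U ≠ t →
      ∀ v : V, v ≠ 0 → v ∈ U → ∃! W : Submodule F V, W ∈ H ∧ v ∈ W := by
    intro U hU hUt v hv0 hvU
    obtain ⟨W, ⟨hWS, hvW⟩, hWu⟩ := hSsp.2.2 v hv0
    have hWT : W ∉ T := by
      intro hWT
      rw [hTdef, Finset.mem_filter] at hWT
      obtain ⟨Z, -, hZu⟩ := hP.2 v hv0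
      have h1 : U = Z := hZu U ⟨hU, hvU⟩
      have h2 : W = Z := hZu W ⟨hWT.1, hvW⟩
      exact hUt (by rw [h1, ← h2]; exact hWT.2)
    refine ⟨W, ⟨Finset.mem_sdiff.mpr ⟨hWS, hWT⟩, hvW⟩, ?_⟩
    intro W' ⟨hW'H, hvW'⟩
    exact hWu W' ⟨hHS hW'H, hvW'⟩
  by_cases hcase : ∀ U ∈ P, Module.finrank F ↥U = d → ∃ W ∈ H, U ≤ W
  · -- every d-dimensional member is inside a hole; injective, so m_d ≤ a
    refine le_trans (min_le_left _ _) ?_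
    rw [← hHcard]
    have hcard : (P.filter fun (Y : Submodule F V) => Module.finrank F ↥Y = d).card ≤ H.card := by
      have hchoose : ∀ Y ∈ (P.filter fun (Y : Submodule F V) => Module.finrank F ↥Y = d),
          ∃ W ∈ H, Y ≤ W := by
        intro Y hY
        rw [Finset.mem_filter] at hY
        exact hcase Y hY.1 hY.2
      choose g hg1 hg2 using hchoose
      apply Finset.card_le_card_of_injOn
        (fun Y => if h : Y ∈ (P.filter fun (Y : Submodule F V) => Module.finrank F ↥Y = d)
          then g Y h else ⊥)
      · intro Y hY
        simp only [Finset.mem_coe] at hY ⊢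
        simp only [dif_pos hY]
        exact hg1 Y hY
      · intro Y hY Y' hY' heq
        simp only [Finset.mem_coe] at hY hY'
        simp only [dif_pos hY, dif_pos hY'] at heq
        by_contra hne
        have hUW : Y ≤ g Y hY := hg2 Y hY
        have hU'W : Y' ≤ g Y hY := heq ▸ hg2 Y' hY'
        have hWt : Module.finrank F ↥(g Y hY) = t := hSsp.1.1 _ (hHS (hg1 Y hY))
        obtain ⟨hYP, hYd⟩ := Finset.mem_filter.mp hY
        obtain ⟨hY'P, hY'd⟩ := Finset.mem_filter.mp hY'
        have hinf := vsp_inf_eq_bot hP hYP hY'P hne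
        have hsum := Submodule.finrank_sup_add_finrank_inf_eq Y Y'
        rw [hinf, finrank_bot, add_zero, hYd, hY'd] at hsum
        have hle : Module.finrank F ↥(Y ⊔ Y') ≤ Module.finrank F ↥(g Y hY) :=
          Submodule.finrank_mono (sup_le hUW hU'W)
        omega
    exact_mod_cast hcard
  · -- some d-dimensional member U is covered nontrivially by the holes
    push_neg at hcase
    obtain ⟨U, hUP, hUd, hUnot⟩ := hcase
    refine le_trans (min_le_right _ _) ?_
    rw [← hHcard]
    -- the partition of U induced by the holes
    set Q : Finset (Submodule F ↥U) :=
      (H.filter (fun W => Submodule.comap U.subtype W ≠ ⊥)).image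
        (fun W => Submodule.comap U.subtype W) with hQdef
    have hQcard : Q.card ≤ H.card :=
      le_trans Finset.card_image_le (Finset.card_le_card (Finset.filter_subset _ _))
    have hQtop : (⊤ : Submodule F ↥U) ∉ Q := by
      intro hTop
      rw [hQdef, Finset.mem_image] at hTop
      obtain ⟨W, hW, hWtop⟩ := hTop
      rw [Finset.mem_filter] at hW
      exact hUnot W hW.1 (Submodule.comap_subtype_eq_top.mp hWtop)
    have hQpart : IsVSPartition F Q := by
      constructor
      · intro Y hY
        rw [hQdef, Finset.mem_image] at hY
        obtain ⟨W, hW, hWY⟩ := hY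
        rw [Finset.mem_filter] at hW
        exact hWY ▸ hW.2
      · intro x hx0
        have hx0' : (x : V) ≠ 0 := by
          intro h
          exact hx0 (Subtype.ext h)
        obtain ⟨W, ⟨hWH, hxW⟩, hWu⟩ := hhole U hUP (by omega) (x : V) hx0' x.2
        have hxc : x ∈ Submodule.comap U.subtype W := by
          rw [Submodule.mem_comap]
          exact hxW
        have hcb : Submodule.comap U.subtype W ≠ ⊥ := by
          rw [Submodule.ne_bot_iff]
          exact ⟨x, hxc, hx0⟩
        refine ⟨Submodule.comap U.subtype W,
          ⟨Finset.mem_image_of_mem _ (Finset.mem_filter.mpr ⟨hWH, hcb⟩), hxc⟩, ?_⟩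
        rintro Y ⟨hYQ, hxY⟩
        obtain ⟨W', hW', hW'Y⟩ := Finset.mem_image.mp (hQdef ▸ hYQ)
        have hW'H : W' ∈ H := (Finset.mem_filter.mp hW').1
        have hxW' : (x : V) ∈ W' := by
          have h := hxY
          rw [← hW'Y] at h
          exact Submodule.mem_comap.mp h
        have hWW : W' = W := hWu W' ⟨hW'H, hxW'⟩
        rw [← hW'Y, hWW]
    have hUfin : Module.finrank F ↥U = d := hUd
    have hmin := vsp_min_card (F := F) hQpart hQtop (by rw [hUfin]; omega)
    rw [hUfin, ← hqd] at hmin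
    calc (q : ℤ) ^ ((d + 1) / 2) + 1 ≤ (Q.card : ℤ) := by exact_mod_cast hmin
    _ ≤ (H.card : ℤ) := by exact_mod_cast hQcard
end

section
/- Let P be a vector space partition of a 2t-dimensional vector space V over the finite field F with q elements, let a be the integer with m_t = q^t + 1 − a, and let d be an integer with t/2 < d < t such that m_d ≤ q^{⌈d/2⌉} + 1. If a < m_d, then there exists a maximal partial t-spread S in V whose deficiency δ = q^t + 1 − |S| satisfies 0 < δ ≤ a. -/
set_option linter.unusedSectionVars false
set_option maxHeartbeats 1000000

attribute [local instance] Classical.propDecidable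

/-- A maximal partial `t`-spread: a partial `t`-spread such that every `t`-dimensional
subspace meets some member nontrivially. -/
def IsMaximalPartialSpread (F : Type*) {V : Type*} [Field F] [AddCommGroup V] [Module F V]
    (t : ℕ) (S : Finset (Submodule F V)) : Prop :=
  IsPartialSpread F t S ∧
    ∀ W : Submodule F V, Module.finrank F ↥W = t → ∃ U ∈ S, W ⊓ U ≠ ⊥

namespace Stmt11Aux

variable {F V : Type*} [Field F] [Fintype F] [AddCommGroup V] [Module F V]
  [FiniteDimensional F V]

/-- The finset of nonzero vectors of a submodule. -/
noncomputable def NZ [Fintype V] (A : Submodule F V) : Finset V :=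
  Finset.univ.filter fun v => v ∈ A ∧ v ≠ 0

lemma mem_NZ [Fintype V] {A : Submodule F V} {v : V} : v ∈ NZ A ↔ v ∈ A ∧ v ≠ 0 := by
  simp [NZ]

lemma card_NZ [Fintype V] (A : Submodule F V) :
    (NZ A).card + 1 = Fintype.card F ^ Module.finrank F A := by
  have h1 : (Finset.univ.filter fun v => v ∈ A) = insert (0 : V) (NZ A) := by
    ext v
    simp only [Finset.mem_filter, Finset.mem_univ, true_and, Finset.mem_insert, mem_NZ]
    constructor
    · intro hv
      by_cases h : v = 0
      · exact Or.inl h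
      · exact Or.inr ⟨hv, h⟩
    · rintro (rfl | ⟨hv, _⟩)
      · exact A.zero_mem
      · exact hv
  have h0 : (0 : V) ∉ NZ A := by simp [mem_NZ]
  have h2 : (Finset.univ.filter fun v => v ∈ A).card = (NZ A).card + 1 := by
    rw [h1, Finset.card_insert_of_notMem h0]
  have h3 : (Finset.univ.filter fun v => v ∈ A).card = Fintype.card A := by
    exact (Fintype.card_subtype (· ∈ A)).symm
  rw [← h2, h3, Module.card_eq_pow_finrank (K := F)]

lemma card_biUnion_NZ [Fintype V] {ι : Type*} (s : Finset ι) (p : ι → Submodule F V)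
    (hdisj : ∀ i ∈ s, ∀ j ∈ s, i ≠ j → p i ⊓ p j = ⊥) :
    (s.biUnion fun i => NZ (p i)).card = ∑ i ∈ s, (NZ (p i)).card := by
  apply Finset.card_biUnion
  intro i hi j hj hij
  rw [Function.onFun, Finset.disjoint_left]
  intro v hvi hvj
  rw [mem_NZ] at hvi hvj
  have : v ∈ p i ⊓ p j := ⟨hvi.1, hvj.1⟩
  rw [hdisj i hi j hj hij] at this
  exact hvi.2 this

lemma sum_NZ_le [Fintype V] {ι : Type*} (s : Finset ι) (p : ι → Submodule F V)
    (U : Submodule F V)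
    (hdisj : ∀ i ∈ s, ∀ j ∈ s, i ≠ j → p i ⊓ p j = ⊥)
    (hle : ∀ i ∈ s, p i ≤ U) :
    ∑ i ∈ s, (NZ (p i)).card ≤ (NZ U).card := by
  rw [← card_biUnion_NZ s p hdisj]
  apply Finset.card_le_card
  intro v hv
  rw [Finset.mem_biUnion] at hv
  obtain ⟨i, hi, hvi⟩ := hv
  rw [mem_NZ] at hvi ⊢
  exact ⟨hle i hi hvi.1, hvi.2⟩

lemma sum_NZ_eq [Fintype V] {ι : Type*} (s : Finset ι) (p : ι → Submodule F V)
    (U : Submodule F V)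
    (hdisj : ∀ i ∈ s, ∀ j ∈ s, i ≠ j → p i ⊓ p j = ⊥)
    (hle : ∀ i ∈ s, p i ≤ U)
    (hcov : ∀ u ∈ U, u ≠ 0 → ∃ i ∈ s, u ∈ p i) :
    ∑ i ∈ s, (NZ (p i)).card = (NZ U).card := by
  rw [← card_biUnion_NZ s p hdisj]
  congr 1
  apply Finset.Subset.antisymm
  · intro v hv
    rw [Finset.mem_biUnion] at hv
    obtain ⟨i, hi, hvi⟩ := hv
    rw [mem_NZ] at hvi ⊢
    exact ⟨hle i hi hvi.1, hvi.2⟩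
  · intro v hv
    rw [mem_NZ] at hv
    obtain ⟨i, hi, hvi⟩ := hcov v hv.1 hv.2
    rw [Finset.mem_biUnion]
    exact ⟨i, hi, mem_NZ.mpr ⟨hvi, hv.2⟩⟩

/-- Minimum size of a nontrivial vector space partition of a space of dimension `n`. -/
lemma minpart [Fintype V] {q n : ℕ} (hq : Fintype.card F = q) (U : Submodule F V)
    (hn : Module.finrank F U = n) (hn1 : 1 ≤ n)
    (s : Finset (Submodule F V))
    (hle : ∀ A ∈ s, A ≤ U) (hne : ∀ A ∈ s, A ≠ ⊥) (hproper : ∀ A ∈ s, A ≠ U)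
    (hdisj : ∀ A ∈ s, ∀ B ∈ s, A ≠ B → A ⊓ B = ⊥)
    (hcov : ∀ u ∈ U, u ≠ 0 → ∃ A ∈ s, u ∈ A) :
    q ^ ((n + 1) / 2) + 1 ≤ s.card := by
  have hq2 : 2 ≤ q := hq ▸ Fintype.one_lt_card
  -- s is nonempty
  have hUbot : U ≠ ⊥ := by
    intro h
    rw [h] at hn
    simp [finrank_bot] at hn  -- finrank ⊥ = 0
    omega
  obtain ⟨u, hu, hu0⟩ := Submodule.ne_bot_iff U |>.mp hUbot
  obtain ⟨A0, hA0, _⟩ := hcov u hu hu0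
  have hsne : s.Nonempty := ⟨A0, hA0⟩
  obtain ⟨A, hA, hAmax⟩ := s.exists_max_image (fun B => Module.finrank F B) hsne
  set e := Module.finrank F A with he
  have he1 : 1 ≤ e := by
    by_contra h
    have : e = 0 := by omega
    exact hne A hA (Submodule.finrank_eq_zero.mp this)
  have hen : e < n := by
    have : A < U := lt_of_le_of_ne (hle A hA) (hproper A hA)
    have := Submodule.finrank_lt_finrank_of_lt this
    omega
  -- total count
  have htot : ∑ B ∈ s, (NZ B).card = (NZ U).card :=
    sum_NZ_eq s id U hdisj hle hcov
  have hcardU : (NZ U).card + 1 = q ^ n := by rw [card_NZ U, hn, hq]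
  have hcardA : (NZ A).card + 1 = q ^ e := by rw [card_NZ A, hq]
  -- each other part has dimension ≤ n - e
  have hdimB : ∀ B ∈ s, B ≠ A → Module.finrank F B + e ≤ n := by
    intro B hB hBA
    have h1 : Module.finrank F ↥(A ⊔ B) + Module.finrank F ↥(A ⊓ B)
        = Module.finrank F A + Module.finrank F B :=
      Submodule.finrank_sup_add_finrank_inf_eq A B
    have h2 : A ⊓ B = ⊥ := hdisj A hA B hB (Ne.symm hBA)
    rw [h2] at h1
    simp [finrank_bot] at h1
    have h3 : A ⊔ B ≤ U := sup_le (hle A hA) (hle B hB)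
    have h4 := Submodule.finrank_mono h3
    rw [hn] at h4
    omega
  have hK1 : 1 ≤ s.card := Finset.card_pos.mpr hsne
  by_cases hcase : (n + 1) / 2 ≤ e
  · -- large max part
    have hsumerase : (NZ A).card + ∑ B ∈ s.erase A, (NZ B).card = (NZ U).card := by
      rw [← htot]
      exact Finset.add_sum_erase s (fun B => (NZ B).card) hA
    have hbound : ∀ B ∈ s.erase A, ((NZ B).card : ℤ) ≤ (q : ℤ) ^ (n - e) - 1 := by
      intro B hB
      have hBs := Finset.mem_of_mem_erase hB
      have hBA := Finset.ne_of_mem_erase hB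
      have hd := hdimB B hBs hBA
      have : (NZ B).card + 1 = q ^ Module.finrank F B := by rw [card_NZ B, hq]
      have hple : q ^ Module.finrank F B ≤ q ^ (n - e) :=
        Nat.pow_le_pow_right (by omega) (by omega)
      have : (NZ B).card + 1 ≤ q ^ (n - e) := by omega
      have := (Nat.cast_le (α := ℤ)).mpr this
      push_cast at this
      linarith
    have hsum_le : (∑ B ∈ s.erase A, ((NZ B).card : ℤ))
        ≤ ((s.erase A).card : ℤ) * ((q : ℤ) ^ (n - e) - 1) := by
      calc (∑ B ∈ s.erase A, ((NZ B).card : ℤ))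
          ≤ (s.erase A).card • ((q : ℤ) ^ (n - e) - 1) :=
            Finset.sum_le_card_nsmul _ _ _ hbound
        _ = ((s.erase A).card : ℤ) * ((q : ℤ) ^ (n - e) - 1) := by
            rw [nsmul_eq_mul]
    have hsplit : ((NZ A).card : ℤ) + ∑ B ∈ s.erase A, ((NZ B).card : ℤ)
        = ((NZ U).card : ℤ) := by exact_mod_cast congrArg (Nat.cast (R := ℤ)) hsumerase
    have hXY : (q : ℤ) ^ (n - e) * (q : ℤ) ^ e = (q : ℤ) ^ n := by
      rw [← pow_add]; congr 1; omega
    have hcA : ((NZ A).card : ℤ) + 1 = (q : ℤ) ^ e := by exact_mod_cast hcardA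
    have hcU : ((NZ U).card : ℤ) + 1 = (q : ℤ) ^ n := by exact_mod_cast hcardU
    have herasecard : ((s.erase A).card : ℤ) = (s.card : ℤ) - 1 := by
      rw [Finset.card_erase_of_mem hA]
      push_cast [Nat.cast_sub hK1]
      ring
    rw [herasecard] at hsum_le
    -- q^n - q^e ≤ (K-1)(X-1) where X = q^(n-e), q^n = X * q^e
    have hXpos : (2 : ℤ) ≤ (q : ℤ) ^ (n - e) := by
      calc (2 : ℤ) ≤ (q : ℤ) := by exact_mod_cast hq2
        _ = (q : ℤ) ^ 1 := (pow_one _).symm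
        _ ≤ (q : ℤ) ^ (n - e) := pow_le_pow_right₀ (by exact_mod_cast (by omega : 1 ≤ q)) (by omega)
    have key : (q : ℤ) ^ e ≤ (s.card : ℤ) - 1 := by
      nlinarith [hsum_le, hsplit, hcA, hcU, hXY]
    have hple : (q : ℤ) ^ ((n + 1) / 2) ≤ (q : ℤ) ^ e :=
      pow_le_pow_right₀ (by exact_mod_cast (by omega : 1 ≤ q)) hcase
    have : (q : ℤ) ^ ((n + 1) / 2) + 1 ≤ (s.card : ℤ) := by linarith
    exact_mod_cast this
  · -- all parts small
    push_neg at hcase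
    have hbound : ∀ B ∈ s, ((NZ B).card : ℤ) ≤ (q : ℤ) ^ e - 1 := by
      intro B hB
      have hd : Module.finrank F B ≤ e := hAmax B hB
      have : (NZ B).card + 1 = q ^ Module.finrank F B := by rw [card_NZ B, hq]
      have hple : q ^ Module.finrank F B ≤ q ^ e := Nat.pow_le_pow_right (by omega) hd
      have : (NZ B).card + 1 ≤ q ^ e := by omega
      have := (Nat.cast_le (α := ℤ)).mpr this
      push_cast at this
      linarith
    have hsum_le : ((NZ U).card : ℤ) ≤ (s.card : ℤ) * ((q : ℤ) ^ e - 1) := by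
      have h1 : (∑ B ∈ s, ((NZ B).card : ℤ)) ≤ s.card • ((q : ℤ) ^ e - 1) :=
        Finset.sum_le_card_nsmul _ _ _ hbound
      rw [nsmul_eq_mul] at h1
      have h2 : (∑ B ∈ s, ((NZ B).card : ℤ)) = ((NZ U).card : ℤ) := by
        exact_mod_cast congrArg (Nat.cast (R := ℤ)) htot
      linarith
    have hcU : ((NZ U).card : ℤ) + 1 = (q : ℤ) ^ n := by exact_mod_cast hcardU
    have hXY : (q : ℤ) ^ (n - e) * (q : ℤ) ^ e = (q : ℤ) ^ n := by
      rw [← pow_add]; congr 1; omega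
    have hXpos : (2 : ℤ) ≤ (q : ℤ) ^ (n - e) := by
      calc (2 : ℤ) ≤ (q : ℤ) := by exact_mod_cast hq2
        _ = (q : ℤ) ^ 1 := (pow_one _).symm
        _ ≤ (q : ℤ) ^ (n - e) := pow_le_pow_right₀ (by exact_mod_cast (by omega : 1 ≤ q)) (by omega)
    have hYpos : (2 : ℤ) ≤ (q : ℤ) ^ e := by
      calc (2 : ℤ) ≤ (q : ℤ) := by exact_mod_cast hq2
        _ = (q : ℤ) ^ 1 := (pow_one _).symm
        _ ≤ (q : ℤ) ^ e := pow_le_pow_right₀ (by exact_mod_cast (by omega : 1 ≤ q)) he1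
    have key : (q : ℤ) ^ (n - e) + 1 ≤ (s.card : ℤ) := by
      nlinarith [hsum_le, hcU, hXY]
    have hple : (q : ℤ) ^ ((n + 1) / 2) ≤ (q : ℤ) ^ (n - e) :=
      pow_le_pow_right₀ (by exact_mod_cast (by omega : 1 ≤ q)) (by omega)
    have : (q : ℤ) ^ ((n + 1) / 2) + 1 ≤ (s.card : ℤ) := by linarith
    exact_mod_cast this

lemma partition_disjoint {P : Finset (Submodule F V)} (hP : IsVSPartition F P) :
    ∀ U ∈ P, ∀ U' ∈ P, U ≠ U' → U ⊓ U' = ⊥ := by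
  intro U hU U' hU' hne
  rw [Submodule.eq_bot_iff]
  intro v hv
  by_contra hv0
  obtain ⟨W, _, huniq⟩ := hP.2 v hv0
  exact hne ((huniq U ⟨hU, hv.1⟩).trans (huniq U' ⟨hU', hv.2⟩).symm)

/-- Cardinality bound for partial spreads: `|S| ≤ q^t + 1`. -/
lemma spread_card_le [Fintype V] {q t : ℕ} (hq : Fintype.card F = q)
    (hV : Module.finrank F V = 2 * t) (ht : 1 ≤ t)
    {S : Finset (Submodule F V)} (hS : IsPartialSpread F t S) :
    S.card ≤ q ^ t + 1 := by
  have hq2 : 2 ≤ q := hq ▸ Fintype.one_lt_card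
  have hsum : ∑ W ∈ S, (NZ W).card ≤ (NZ (⊤ : Submodule F V)).card :=
    sum_NZ_le S id ⊤ hS.2 (fun i _ => le_top)
  have htop : (NZ (⊤ : Submodule F V)).card + 1 = q ^ (2 * t) := by
    rw [card_NZ, finrank_top, hV, hq]
  have heach : ∀ W ∈ S, (NZ W).card = q ^ t - 1 := by
    intro W hW
    have := card_NZ W
    rw [hS.1 W hW, hq] at this
    omega
  rw [Finset.sum_congr rfl heach, Finset.sum_const, smul_eq_mul] at hsum
  by_contra h
  push_neg at h
  have hqt : 2 ≤ q ^ t := by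
    calc 2 ≤ q := hq2
      _ = q ^ 1 := (pow_one q).symm
      _ ≤ q ^ t := Nat.pow_le_pow_right (by omega) ht
  have hq2t : q ^ t * q ^ t = q ^ (2 * t) := by rw [← pow_add]; congr 1; omega
  obtain ⟨c, hc⟩ : ∃ c, q ^ t = c + 2 := ⟨q ^ t - 2, by omega⟩
  rw [← hq2t, hc] at htop
  rw [hc] at hsum
  have hc1 : c + 2 - 1 = c + 1 := by omega
  rw [hc1] at hsum
  have h4 : c + 4 ≤ S.card := by omega
  have h5 : (c + 4) * (c + 1) ≤ S.card * (c + 1) := Nat.mul_le_mul_right _ h4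
  have e1 : (c + 4) * (c + 1) = c * c + 5 * c + 4 := by ring
  have e2 : (c + 2) * (c + 2) = c * c + 4 * c + 4 := by ring
  omega

/-- A partial spread of full size `q^t + 1` covers every nonzero vector. -/
lemma spread_cover [Fintype V] {q t : ℕ} (hq : Fintype.card F = q)
    (hV : Module.finrank F V = 2 * t) (ht : 1 ≤ t)
    {S : Finset (Submodule F V)} (hS : IsPartialSpread F t S)
    (hcard : S.card = q ^ t + 1) :
    ∀ v : V, v ≠ 0 → ∃ W ∈ S, v ∈ W := by
  have hq2 : 2 ≤ q := hq ▸ Fintype.one_lt_card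
  have hqt : 2 ≤ q ^ t := by
    calc 2 ≤ q := hq2
      _ = q ^ 1 := (pow_one q).symm
      _ ≤ q ^ t := Nat.pow_le_pow_right (by omega) ht
  have hq2t : q ^ t * q ^ t = q ^ (2 * t) := by rw [← pow_add]; congr 1; omega
  have heach : ∀ W ∈ S, (NZ W).card = q ^ t - 1 := by
    intro W hW
    have := card_NZ W
    rw [hS.1 W hW, hq] at this
    omega
  have htop : (NZ (⊤ : Submodule F V)).card + 1 = q ^ (2 * t) := by
    rw [card_NZ, finrank_top, hV, hq]
  have hdisjF : ∀ i ∈ S, ∀ j ∈ S, i ≠ j → (id i : Submodule F V) ⊓ id j = ⊥ := hS.2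
  have hsub : S.biUnion (fun W => NZ (id W)) ⊆ NZ (⊤ : Submodule F V) := by
    intro v hv
    rw [Finset.mem_biUnion] at hv
    obtain ⟨W, _, hvW⟩ := hv
    rw [mem_NZ] at hvW ⊢
    exact ⟨trivial, hvW.2⟩
  have hcardbi : (S.biUnion fun W => NZ (id W)).card = ∑ W ∈ S, (NZ W).card := by
    apply Finset.card_biUnion
    intro i hi j hj hij
    rw [Function.onFun, Finset.disjoint_left]
    intro v hvi hvj
    rw [mem_NZ] at hvi hvj
    have : v ∈ i ⊓ j := ⟨hvi.1, hvj.1⟩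
    rw [hS.2 i hi j hj hij] at this
    exact hvi.2 this
  have hsumeq : ∑ W ∈ S, (NZ W).card = q ^ (2 * t) - 1 := by
    rw [Finset.sum_congr rfl heach, Finset.sum_const, smul_eq_mul, hcard]
    obtain ⟨c, hc⟩ : ∃ c, q ^ t = c + 2 := ⟨q ^ t - 2, by omega⟩
    rw [← hq2t, hc]
    have hc1 : c + 2 - 1 = c + 1 := by omega
    rw [hc1]
    have e1 : (c + 2 + 1) * (c + 1) = c * c + 4 * c + 3 := by ring
    have e2 : (c + 2) * (c + 2) = c * c + 4 * c + 4 := by ring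
    omega
  have heq : S.biUnion (fun W => NZ (id W)) = NZ (⊤ : Submodule F V) := by
    apply Finset.eq_of_subset_of_card_le hsub
    rw [hcardbi, hsumeq]
    omega
  intro v hv
  have : v ∈ NZ (⊤ : Submodule F V) := mem_NZ.mpr ⟨trivial, hv⟩
  rw [← heq, Finset.mem_biUnion] at this
  obtain ⟨W, hW, hvW⟩ := this
  exact ⟨W, hW, (mem_NZ.mp hvW).1⟩

/-- Extension to a partial spread of maximal cardinality, which is maximal. -/
lemma exists_maximal_extension {t : ℕ} (ht : 1 ≤ t) (S₀ : Finset (Submodule F V))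
    (hS₀ : IsPartialSpread F t S₀) :
    ∃ T : Finset (Submodule F V), IsPartialSpread F t T ∧ S₀ ⊆ T ∧
      (∀ W : Submodule F V, Module.finrank F ↥W = t → ∃ U ∈ T, W ⊓ U ≠ ⊥) := by
  haveI : Finite V := Module.finite_of_finite F
  haveI : Finite (Submodule F V) :=
    Finite.of_injective (fun A => (A : Set V)) (fun A B h => SetLike.coe_injective h)
  haveI : Fintype (Submodule F V) := Fintype.ofFinite _
  set 𝒜 : Finset (Finset (Submodule F V)) :=
    Finset.univ.filter (fun T => IsPartialSpread F t T ∧ S₀ ⊆ T) with h𝒜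
  have hS₀mem : S₀ ∈ 𝒜 := by simp [h𝒜, hS₀]
  obtain ⟨T, hT, hTmax⟩ := 𝒜.exists_max_image Finset.card ⟨S₀, hS₀mem⟩
  simp only [h𝒜, Finset.mem_filter, Finset.mem_univ, true_and] at hT
  refine ⟨T, hT.1, hT.2, ?_⟩
  intro W hW
  by_contra h
  push_neg at h
  have hWbot : W ≠ ⊥ := by
    intro hbot
    rw [hbot, finrank_bot] at hW
    omega
  have hWT : W ∉ T := by
    intro hWT
    exact hWbot (by simpa using h W hWT)
  have hT' : IsPartialSpread F t (insert W T) := by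
    constructor
    · intro U hU
      rcases Finset.mem_insert.mp hU with rfl | hU
      · exact hW
      · exact hT.1.1 U hU
    · intro U hU U' hU' hne
      rcases Finset.mem_insert.mp hU with rfl | hU2
      · rcases Finset.mem_insert.mp hU' with rfl | hU'2
        · exact absurd rfl hne
        · exact h U' hU'2
      · rcases Finset.mem_insert.mp hU' with rfl | hU'2
        · rw [inf_comm]; exact h U hU2
        · exact hT.1.2 U hU2 U' hU'2 hne
  have hmem : insert W T ∈ 𝒜 := by
    simp only [h𝒜, Finset.mem_filter, Finset.mem_univ, true_and]
    exact ⟨hT', hT.2.trans (Finset.subset_insert W T)⟩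
  have := hTmax _ hmem
  rw [Finset.card_insert_of_notMem hWT] at this
  omega

end Stmt11Aux

open Stmt11Aux in
/-- If `a < m_d ≤ q^⌈d/2⌉ + 1` for some `t/2 < d < t`, then there is a maximal partial
`t`-spread with deficiency `δ` satisfying `0 < δ ≤ a`. -/
theorem stmt11 (q t d : ℕ) (F V : Type*) [Field F] [Fintype F] [AddCommGroup V]
    [Module F V] [FiniteDimensional F V] (hq : Fintype.card F = q)
    (hV : Module.finrank F V = 2 * t)
    (P : Finset (Submodule F V)) (hP : IsVSPartition F P)
    (a : ℤ) (ha : (dimCount F P t : ℤ) = (q : ℤ) ^ t + 1 - a)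
    (hd1 : t < 2 * d) (hd2 : d < t)
    (hmd : dimCount F P d ≤ q ^ ((d + 1) / 2) + 1)
    (halt : a < (dimCount F P d : ℤ)) :
    ∃ S : Finset (Submodule F V), IsMaximalPartialSpread F t S ∧
      0 < (q : ℤ) ^ t + 1 - (S.card : ℤ) ∧ (q : ℤ) ^ t + 1 - (S.card : ℤ) ≤ a := by
  haveI : Finite V := Module.finite_of_finite F
  haveI : Fintype V := Fintype.ofFinite V
  have hq2 : 2 ≤ q := hq ▸ Fintype.one_lt_card
  have ht1 : 1 ≤ t := by omega
  have hd1' : 1 ≤ d := by omega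
  set S₀ := P.filter (fun (U : Submodule F V) => Module.finrank F ↥U = t) with hS₀def
  have hS₀ : IsPartialSpread F t S₀ :=
    ⟨fun U hU => (Finset.mem_filter.mp hU).2,
     fun U hU U' hU' hne => partition_disjoint hP U (Finset.mem_filter.mp hU).1
       U' (Finset.mem_filter.mp hU').1 hne⟩
  have hS₀card : S₀.card = dimCount F P t := rfl
  obtain ⟨T, hT, hsub, hmax⟩ := exists_maximal_extension ht1 S₀ hS₀
  have hcards : S₀.card ≤ T.card := Finset.card_le_card hsub
  have hTle : T.card ≤ q ^ t + 1 := spread_card_le hq hV ht1 hT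
  refine ⟨T, ⟨hT, hmax⟩, ?_, ?_⟩
  · -- 0 < deficiency
    by_contra h0
    push_neg at h0
    have hTcard : T.card = q ^ t + 1 := by
      have : ((q : ℤ) ^ t + 1) ≤ (T.card : ℤ) := by linarith
      have h1 : q ^ t + 1 ≤ T.card := by exact_mod_cast this
      omega
    have hcover := spread_cover hq hV ht1 hT hTcard
    set D := P.filter (fun (U : Submodule F V) => Module.finrank F ↥U = d) with hDdef
    have hDcard : D.card = dimCount F P d := rfl
    -- every d-dimensional member of P lies inside a member of T \ S₀
    have hexists : ∀ U ∈ D, ∃ W, W ∈ T \ S₀ ∧ U ≤ W := by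
      intro U hU
      obtain ⟨hUP, hUd⟩ := Finset.mem_filter.mp hU
      set QU := T.filter (fun W => U ⊓ W ≠ ⊥) with hQUdef
      have hQsub : QU ⊆ T \ S₀ := by
        intro W hW
        obtain ⟨hWT, hWint⟩ := Finset.mem_filter.mp hW
        rw [Finset.mem_sdiff]
        refine ⟨hWT, fun hWS₀ => ?_⟩
        obtain ⟨hWP, hWt⟩ := Finset.mem_filter.mp hWS₀
        have hUW : U ≠ W := by
          intro h
          rw [h, hWt] at hUd
          omega
        exact hWint (partition_disjoint hP U hUP W hWP hUW)
      by_cases hex : ∃ W ∈ QU, U ⊓ W = U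
      · obtain ⟨W, hW, hUW⟩ := hex
        exact ⟨W, hQsub hW, inf_eq_left.mp hUW⟩
      · exfalso
        push_neg at hex
        have hmin : q ^ ((d + 1) / 2) + 1 ≤ (QU.image fun W => U ⊓ W).card := by
          apply minpart hq U hUd hd1'
          · rintro A hA
            obtain ⟨W, hW, rfl⟩ := Finset.mem_image.mp hA
            exact inf_le_left
          · rintro A hA
            obtain ⟨W, hW, rfl⟩ := Finset.mem_image.mp hA
            exact (Finset.mem_filter.mp hW).2
          · rintro A hA
            obtain ⟨W, hW, rfl⟩ := Finset.mem_image.mp hA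
            exact hex W hW
          · rintro A hA B hB hAB
            obtain ⟨W, hW, rfl⟩ := Finset.mem_image.mp hA
            obtain ⟨W', hW', rfl⟩ := Finset.mem_image.mp hB
            have hWW' : W ≠ W' := by
              intro h; rw [h] at hAB; exact hAB rfl
            have hbot : W ⊓ W' = ⊥ :=
              hT.2 W (Finset.mem_filter.mp hW).1 W' (Finset.mem_filter.mp hW').1 hWW'
            rw [← le_bot_iff, ← hbot]
            exact le_inf (le_trans inf_le_left inf_le_right) (le_trans inf_le_right inf_le_right)
          · intro u hu hu0
            obtain ⟨W, hWT, huW⟩ := hcover u hu0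
            have hWQU : W ∈ QU := by
              rw [hQUdef, Finset.mem_filter]
              refine ⟨hWT, ?_⟩
              rw [Submodule.ne_bot_iff]
              exact ⟨u, ⟨hu, huW⟩, hu0⟩
            exact ⟨U ⊓ W, Finset.mem_image_of_mem _ hWQU, ⟨hu, huW⟩⟩
        have h1 : (QU.image fun W => U ⊓ W).card ≤ QU.card := Finset.card_image_le
        have h2 : QU.card ≤ (T \ S₀).card := Finset.card_le_card hQsub
        have h3 : (T \ S₀).card = T.card - S₀.card := Finset.card_sdiff_of_subset hsub
        have h4 : ((T \ S₀).card : ℤ) = a := by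
          rw [h3]
          rw [Nat.cast_sub hcards, hTcard, hS₀card]
          push_cast
          linarith [ha]
        have h5 : a ≤ (q : ℤ) ^ ((d + 1) / 2) := by
          have : (dimCount F P d : ℤ) ≤ (q : ℤ) ^ ((d + 1) / 2) + 1 := by
            exact_mod_cast hmd
          linarith
        have h6 : (q ^ ((d + 1) / 2) + 1 : ℤ) ≤ ((T \ S₀).card : ℤ) := by
          have : q ^ ((d + 1) / 2) + 1 ≤ (T \ S₀).card := le_trans hmin (le_trans h1 h2)
          exact_mod_cast this
        push_cast at h6
        linarith
    -- pigeonhole: D.card ≤ (T \ S₀).card would contradict halt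
    have h3 : (T \ S₀).card = T.card - S₀.card := Finset.card_sdiff_of_subset hsub
    have h4 : ((T \ S₀).card : ℤ) = a := by
      rw [h3, Nat.cast_sub hcards, hTcard, hS₀card]
      push_cast
      linarith [ha]
    have hlt : (T \ S₀).card < D.card := by
      have : ((T \ S₀).card : ℤ) < (D.card : ℤ) := by
        rw [h4, hDcard]; exact halt
      exact_mod_cast this
    classical
    choose g hg using hexists
    set g' : Submodule F V → Submodule F V := fun U =>
      if h : U ∈ D then g U h else ⊥ with hg'def
    have hmaps : ∀ U ∈ D, g' U ∈ T \ S₀ := by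
      intro U hU
      rw [hg'def]
      simp only [dif_pos hU]
      exact (hg U hU).1
    obtain ⟨U, hU, U', hU', hUU', heq⟩ :=
      Finset.exists_ne_map_eq_of_card_lt_of_maps_to hlt hmaps
    -- both U, U' ≤ g' U, but they intersect trivially and 2d > t
    have hle1 : U ≤ g' U := by rw [hg'def]; simp only [dif_pos hU]; exact (hg U hU).2
    have hle2 : U' ≤ g' U := by
      rw [heq, hg'def]; simp only [dif_pos hU']; exact (hg U' hU').2
    have hWT : g' U ∈ T := (Finset.mem_sdiff.mp (hmaps U hU)).1
    have hWt : Module.finrank F ↥(g' U) = t := hT.1 _ hWT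
    have hdisj : U ⊓ U' = ⊥ :=
      partition_disjoint hP U (Finset.mem_filter.mp hU).1 U' (Finset.mem_filter.mp hU').1 hUU'
    have hrank : Module.finrank F ↥(U ⊔ U') + Module.finrank F ↥(U ⊓ U')
        = Module.finrank F ↥U + Module.finrank F ↥U' :=
      Submodule.finrank_sup_add_finrank_inf_eq U U'
    rw [hdisj, finrank_bot, (Finset.mem_filter.mp hU).2, (Finset.mem_filter.mp hU').2] at hrank
    have hsup : U ⊔ U' ≤ g' U := sup_le hle1 hle2
    have := Submodule.finrank_mono hsup
    rw [hWt] at this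
    omega
  · -- deficiency ≤ a
    have : (dimCount F P t : ℤ) ≤ (T.card : ℤ) := by
      rw [← hS₀card]; exact_mod_cast hcards
    linarith [ha]
end

section
/- Let P be a vector space partition of a 2t-dimensional vector space V over the finite field F with q elements, let a be the integer with m_t = q^t + 1 − a, and let d be an integer with 1 ≤ d < t and m_d > 0. If m_d < (q^t − 1)/(q^{t−d} − 1), then a ≥ m_d − R_q(t, d, m_d), as an inequality of rational numbers. -/
attribute [local instance] Classical.propDecidable

/-- The rational number `R_q(t, d, m)`. -/
def Rq (q t d m : ℕ) : ℚ :=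
  (m : ℚ) * ((m : ℚ) - 1) *
      (((q : ℚ) ^ (2 * t - 2 * d) - 1) / 2 + 1 - (q : ℚ) ^ (t - d)) /
    ((q : ℚ) ^ t - 1 - (m : ℚ) * ((q : ℚ) ^ (t - d) - 1))

set_option linter.unusedSectionVars false


open Module LinearMap Finset

section Aux
variable {F V : Type*} [Field F] [Fintype F] [AddCommGroup V] [Module F V]
  [FiniteDimensional F V]

omit [Fintype F] [FiniteDimensional F V] in
lemma dual_prop (φ ψ : Module.Dual F V) (hφ : φ ≠ 0)
    (h : LinearMap.ker φ ≤ LinearMap.ker ψ) : ∃ c : F, ψ = c • φ := by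
  obtain ⟨v, hv⟩ : ∃ v, φ v ≠ 0 := by
    by_contra hc
    push_neg at hc
    exact hφ (LinearMap.ext fun x => hc x)
  refine ⟨ψ v / φ v, LinearMap.ext fun x => ?_⟩
  have hker : x - (φ x / φ v) • v ∈ LinearMap.ker φ := by
    simp [LinearMap.mem_ker, div_mul_cancel₀, hv]
  have := h hker
  simp only [LinearMap.mem_ker, map_sub, map_smul, sub_eq_zero] at this
  simp only [LinearMap.smul_apply, smul_eq_mul]
  rw [this]
  field_simp
  ring_nf
  rw [mul_right_comm _ (φ x), mul_right_comm (φ v), mul_inv_cancel₀ hv, one_mul]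

lemma exists_dual_ker (H : Submodule F V) (hH : finrank F H + 1 = finrank F V) :
    ∃ φ : Module.Dual F V, LinearMap.ker φ = H ∧ φ ≠ 0 := by
  have hq : finrank F (V ⧸ H) = 1 := by
    have := H.finrank_quotient_add_finrank
    omega
  have : Nonempty ((V ⧸ H) ≃ₗ[F] F) := by
    apply FiniteDimensional.nonempty_linearEquiv_of_finrank_eq
    rw [hq, finrank_self]
  obtain ⟨e⟩ := this
  refine ⟨e.toLinearMap ∘ₗ H.mkQ, ?_, ?_⟩
  · rw [LinearMap.ker_comp, LinearEquiv.ker, Submodule.comap_bot, Submodule.ker_mkQ]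
  · intro h0
    have hker : LinearMap.ker ((e.toLinearMap ∘ₗ H.mkQ)) = ⊤ := by rw [h0]; exact LinearMap.ker_zero
    rw [LinearMap.ker_comp, LinearEquiv.ker, Submodule.comap_bot, Submodule.ker_mkQ] at hker
    rw [hker, finrank_top] at hH
    omega

end Aux

section Count
variable {F V : Type*} [Field F] [Fintype F] [AddCommGroup V] [Module F V]
  [FiniteDimensional F V]

lemma card_hyp_through (U : Submodule F V) [Fintype (Submodule F V)]
    [Fintype (Module.Dual F V)] :
    (Finset.univ.filter fun H : Submodule F V =>
        U ≤ H ∧ finrank F H + 1 = finrank F V).card * (Fintype.card F - 1)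
      = Fintype.card F ^ (finrank F V - finrank F U) - 1 := by
  classical
  set n := finrank F V
  set T1 : Finset (Submodule F V) :=
    Finset.univ.filter fun H : Submodule F V => U ≤ H ∧ finrank F H + 1 = n with hT1
  set S1 : Finset (Module.Dual F V) :=
    Finset.univ.filter fun φ => U ≤ LinearMap.ker φ ∧ φ ≠ 0 with hS1
  have hA : (Finset.univ.filter fun φ : Module.Dual F V => U ≤ LinearMap.ker φ).card
      = Fintype.card F ^ (n - finrank F U) := by
    rw [← Fintype.card_subtype]
    have e1 : {φ : Module.Dual F V // U ≤ LinearMap.ker φ} ≃ U.dualAnnihilator := by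
      apply Equiv.subtypeEquivRight
      intro φ
      rw [Submodule.mem_dualAnnihilator]
      constructor
      · intro h w hw; exact h hw
      · intro h w hw; exact h w hw
    have e2 : (U.dualAnnihilator : Type _) ≃ (V ⧸ U) :=
      (Subspace.quotEquivAnnihilator U).toEquiv.symm
    haveI : Finite (V ⧸ U) := Module.finite_of_finite F
    haveI : Fintype (V ⧸ U) := Fintype.ofFinite _
    rw [Fintype.card_congr (e1.trans e2)]
    rw [card_eq_pow_finrank (K := F) (V := V ⧸ U)]
    congr 1
    have := U.finrank_quotient_add_finrank
    omega
  have hS1card : S1.card = Fintype.card F ^ (n - finrank F U) - 1 := by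
    have h0mem : (0 : Module.Dual F V) ∈
        (Finset.univ.filter fun φ : Module.Dual F V => U ≤ LinearMap.ker φ) := by
      simp
    have : S1 = (Finset.univ.filter fun φ : Module.Dual F V => U ≤ LinearMap.ker φ).erase 0 := by
      ext φ
      simp only [hS1, Finset.mem_filter, Finset.mem_univ, true_and, Finset.mem_erase]
      tauto
    rw [this, Finset.card_erase_of_mem h0mem, hA]
  -- fiberwise count
  have hmaps : ∀ φ ∈ S1, LinearMap.ker φ ∈ T1 := by
    intro φ hφ
    simp only [hS1, Finset.mem_filter, Finset.mem_univ, true_and] at hφ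
    obtain ⟨hU, hne⟩ := hφ
    obtain ⟨v, hv⟩ : ∃ v, φ v ≠ 0 := by
      by_contra hc
      push_neg at hc
      exact hne (LinearMap.ext fun x => hc x)
    have hrange : LinearMap.range φ = ⊤ := by
      rw [eq_top_iff]
      rintro c -
      refine ⟨(c / φ v) • v, ?_⟩
      simp only [map_smul, smul_eq_mul]
      field_simp
    have hrk : finrank F (LinearMap.range φ) = 1 := by
      rw [hrange]
      simpa using finrank_self F
    have := LinearMap.finrank_range_add_finrank_ker φ
    simp only [hT1, Finset.mem_filter, Finset.mem_univ, true_and]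
    constructor
    · exact hU
    · omega
  have hfiber : ∀ H ∈ T1, (S1.filter fun φ => LinearMap.ker φ = H).card
      = Fintype.card F - 1 := by
    intro H hH
    simp only [hT1, Finset.mem_filter, Finset.mem_univ, true_and] at hH
    obtain ⟨hUH, hHrk⟩ := hH
    obtain ⟨φ₀, hker₀, hne₀⟩ := exists_dual_ker H hHrk
    have hbij : ((Finset.univ : Finset F).erase 0).card
        = (S1.filter fun φ => LinearMap.ker φ = H).card := by
      apply Finset.card_bij (fun c _ => c • φ₀)
      · intro c hc
        simp only [Finset.mem_erase, Finset.mem_univ, and_true] at hc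
        simp only [Finset.mem_filter, hS1, Finset.mem_univ, true_and]
        refine ⟨⟨?_, ?_⟩, ?_⟩
        · rw [LinearMap.ker_smul _ _ hc, hker₀]; exact hUH
        · exact smul_ne_zero hc hne₀
        · rw [LinearMap.ker_smul _ _ hc, hker₀]
      · intro c hc c' hc' heq
        obtain ⟨v, hv⟩ : ∃ v, φ₀ v ≠ 0 := by
          by_contra hc2
          push_neg at hc2
          exact hne₀ (LinearMap.ext fun x => hc2 x)
        have := congrArg (fun ψ : Module.Dual F V => ψ v) heq
        simp only [LinearMap.smul_apply, smul_eq_mul] at this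
        exact mul_right_cancel₀ hv this
      · intro ψ hψ
        simp only [Finset.mem_filter, hS1, Finset.mem_univ, true_and] at hψ
        obtain ⟨⟨hUψ, hψne⟩, hkerψ⟩ := hψ
        obtain ⟨c, hc⟩ := dual_prop φ₀ ψ hne₀ (by rw [hker₀, ← hkerψ])
        refine ⟨c, ?_, hc.symm⟩
        simp only [Finset.mem_erase, Finset.mem_univ, and_true]
        intro h0
        rw [h0, zero_smul] at hc
        exact hψne hc
    rw [← hbij, Finset.card_erase_of_mem (Finset.mem_univ (0 : F)), Finset.card_univ]
  have := Finset.card_eq_sum_card_fiberwise hmaps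
  rw [hS1card] at this
  rw [Finset.sum_congr rfl hfiber] at this
  rw [Finset.sum_const, smul_eq_mul] at this
  omega

end Count

section Split
variable {F V : Type*} [Field F] [AddCommGroup V] [Module F V]

lemma split_by_T [Fintype (Submodule F V)] (B T : Finset (Submodule F V))
    (hB : ∀ H ∈ B, H ≠ ⊤)
    (hT : ∀ W ∈ T, ∀ W' ∈ T, W ≠ W' → W ⊔ W' = ⊤) :
    B.card = (B.filter fun H => ∀ W ∈ T, ¬ W ≤ H).card
      + ∑ W ∈ T, (B.filter fun H => W ≤ H).card := by
  classical
  have hsplit := Finset.card_filter_add_card_filter_not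
    (s := B) (p := fun H => ∀ W ∈ T, ¬ W ≤ H)
  have hneg : B.filter (fun H => ¬ ∀ W ∈ T, ¬ W ≤ H)
      = T.biUnion (fun W => B.filter fun H => W ≤ H) := by
    ext H
    simp only [Finset.mem_filter, Finset.mem_biUnion]
    push_neg
    tauto
  have hdisj : ∀ W ∈ (T : Set (Submodule F V)), ∀ W' ∈ (T : Set (Submodule F V)), W ≠ W' →
      Disjoint (B.filter fun H => W ≤ H) (B.filter fun H => W' ≤ H) := by
    intro W hW W' hW' hne
    rw [Finset.disjoint_left]
    intro H h1 h2
    simp only [Finset.mem_filter] at h1 h2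
    have : W ⊔ W' ≤ H := sup_le h1.2 h2.2
    rw [hT W hW W' hW' hne] at this
    exact hB H h1.1 (top_le_iff.mp this)
  rw [← hsplit, hneg, Finset.card_biUnion hdisj]

end Split

/-- Theorem: if `m_d < (q^t - 1)/(q^{t-d} - 1)`, then `a ≥ m_d - R_q(t, d, m_d)`. -/
theorem stmt12 (q t d : ℕ) (F V : Type*) [Field F] [Fintype F] [AddCommGroup V]
    [Module F V] [FiniteDimensional F V] (hq : Fintype.card F = q)
    (hV : Module.finrank F V = 2 * t)
    (P : Finset (Submodule F V)) (hP : IsVSPartition F P)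
    (a : ℤ) (ha : (dimCount F P t : ℤ) = (q : ℤ) ^ t + 1 - a)
    (hd1 : 1 ≤ d) (hd2 : d < t) (hmd : 0 < dimCount F P d)
    (hlt : (dimCount F P d : ℚ) < ((q : ℚ) ^ t - 1) / ((q : ℚ) ^ (t - d) - 1)) :
    (dimCount F P d : ℚ) - Rq q t d (dimCount F P d) ≤ (a : ℚ) := by
  classical
  haveI : Finite V := Module.finite_of_finite F
  haveI : Fintype V := Fintype.ofFinite V
  haveI : Fintype (Submodule F V) := Fintype.ofFinite _
  haveI : Finite (Module.Dual F V) := Module.finite_of_finite F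
  haveI : Fintype (Module.Dual F V) := Fintype.ofFinite _
  have hq2 : 2 ≤ q := by
    have := Fintype.one_lt_card (α := F)
    omega
  set m := dimCount F P d with hm
  set mt := dimCount F P t with hmt
  set Dset : Finset (Submodule F V) := P.filter (fun U => Module.finrank F ↥U = d) with hDset
  set T : Finset (Submodule F V) := P.filter (fun U => Module.finrank F ↥U = t) with hT
  have hDcard : Dset.card = m := rfl
  have hTcard : T.card = mt := rfl
  -- distinct members intersect trivially
  have hdisj : ∀ U ∈ P, ∀ U' ∈ P, U ≠ U' → U ⊓ U' = ⊥ := by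
    intro U hU U' hU' hne
    by_contra hbot
    obtain ⟨v, hv, hv0⟩ := Submodule.exists_mem_ne_zero_of_ne_bot hbot
    exact hne ((hP.2 v hv0).unique ⟨hU, hv.1⟩ ⟨hU', hv.2⟩)
  -- two distinct t-members span V
  have hsupT : ∀ W ∈ T, ∀ W' ∈ T, W ≠ W' → W ⊔ W' = ⊤ := by
    intro W hW W' hW' hne
    simp only [hT, Finset.mem_filter] at hW hW'
    have hinf : W ⊓ W' = ⊥ := hdisj W hW.1 W' hW'.1 hne
    apply Submodule.eq_top_of_finrank_eq
    have := Submodule.finrank_sup_add_finrank_inf_eq W W'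
    rw [hinf, finrank_bot, hW.2, hW'.2] at this
    omega
  -- the finset of hyperplanes
  set HS : Finset (Submodule F V) :=
    Finset.univ.filter (fun H : Submodule F V => Module.finrank F ↥H + 1 = Module.finrank F V)
    with hHS
  have hHSne_top : ∀ H ∈ HS, H ≠ ⊤ := by
    intro H hH htop
    simp only [hHS, Finset.mem_filter, Finset.mem_univ, true_and] at hH
    rw [htop, finrank_top] at hH
    omega
  have hcount : ∀ U : Submodule F V,
      (HS.filter fun H => U ≤ H).card * (q - 1)
        = q ^ (2 * t - Module.finrank F ↥U) - 1 := by
    intro U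
    have h := card_hyp_through (U := U)
    have hfe : HS.filter (fun H => U ≤ H)
        = Finset.univ.filter (fun H : Submodule F V =>
            U ≤ H ∧ Module.finrank F ↥H + 1 = Module.finrank F V) := by
      ext H
      simp only [hHS, Finset.mem_filter, Finset.mem_univ, true_and]
      tauto
    rw [hfe, ← hq, ← hV]
    exact h
  -- count of all hyperplanes
  have hHScard : HS.card * (q - 1) = q ^ (2 * t) - 1 := by
    have h := hcount ⊥
    rw [finrank_bot, Nat.sub_zero] at h
    rw [Finset.filter_true_of_mem (fun H _ => bot_le)] at h
    exact h
  -- count through a t-member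
  have hcW : ∀ W ∈ T, (HS.filter fun H => W ≤ H).card * (q - 1) = q ^ t - 1 := by
    intro W hW
    simp only [hT, Finset.mem_filter] at hW
    have h := hcount W
    rw [hW.2] at h
    have e : 2 * t - t = t := by omega
    rw [e] at h
    exact h
  set N0 : Finset (Submodule F V) := HS.filter (fun H => ∀ W ∈ T, ¬ W ≤ H) with hN0
  have hsplitHS : HS.card = N0.card + ∑ W ∈ T, (HS.filter fun H => W ≤ H).card :=
    split_by_T HS T hHSne_top hsupT
  have hN0card : N0.card * (q - 1) + mt * (q ^ t - 1) = q ^ (2 * t) - 1 := by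
    have hsum : (∑ W ∈ T, (HS.filter fun H => W ≤ H).card) * (q - 1) = mt * (q ^ t - 1) := by
      rw [Finset.sum_mul, Finset.sum_congr rfl hcW, Finset.sum_const, smul_eq_mul, hTcard]
    calc N0.card * (q - 1) + mt * (q ^ t - 1)
        = (N0.card + ∑ W ∈ T, (HS.filter fun H => W ≤ H).card) * (q - 1) := by
          rw [add_mul, hsum]
      _ = HS.card * (q - 1) := by rw [← hsplitHS]
      _ = q ^ (2 * t) - 1 := hHScard
  -- counts for d-members
  have hDfacts : ∀ D ∈ Dset,
      (N0.filter fun H => D ≤ H).card * (q - 1) + mt * (q ^ (t - d) - 1)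
        = q ^ (2 * t - d) - 1 := by
    intro D hD
    simp only [hDset, Finset.mem_filter] at hD
    have hBD := split_by_T (HS.filter fun H => D ≤ H) T
      (fun H hH => hHSne_top H (Finset.mem_of_mem_filter _ hH)) hsupT
    have hAeq : (HS.filter fun H => D ≤ H).filter (fun H => ∀ W ∈ T, ¬ W ≤ H)
        = N0.filter (fun H => D ≤ H) := by
      ext H
      simp only [Finset.mem_filter, hN0]
      tauto
    have hWpart : ∀ W ∈ T, (HS.filter fun H => D ≤ H).filter (fun H => W ≤ H)
        = HS.filter (fun H => D ⊔ W ≤ H) := by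
      intro W hW
      ext H
      simp only [Finset.mem_filter, sup_le_iff]
      tauto
    have hcDW : ∀ W ∈ T, (HS.filter fun H => D ⊔ W ≤ H).card * (q - 1)
        = q ^ (t - d) - 1 := by
      intro W hW
      simp only [hT, Finset.mem_filter] at hW
      have hne : D ≠ W := by
        intro he
        rw [he, hW.2] at hD
        omega
      have hinf : D ⊓ W = ⊥ := hdisj D hD.1 W hW.1 hne
      have hsup : Module.finrank F ↥(D ⊔ W) = d + t := by
        have := Submodule.finrank_sup_add_finrank_inf_eq D W
        rw [hinf, finrank_bot, hD.2, hW.2] at this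
        omega
      have h := hcount (D ⊔ W)
      rw [hsup] at h
      have e : 2 * t - (d + t) = t - d := by omega
      rw [e] at h
      exact h
    have hcD : (HS.filter fun H => D ≤ H).card * (q - 1) = q ^ (2 * t - d) - 1 := by
      have h := hcount D
      rw [hD.2] at h
      exact h
    rw [hAeq] at hBD
    have hsum2 : ∑ W ∈ T, ((HS.filter fun H => D ≤ H).filter (fun H => W ≤ H)).card
        = ∑ W ∈ T, (HS.filter (fun H => D ⊔ W ≤ H)).card :=
      Finset.sum_congr rfl (fun W hW => by rw [hWpart W hW])
    rw [hsum2] at hBD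
    calc (N0.filter fun H => D ≤ H).card * (q - 1) + mt * (q ^ (t - d) - 1)
        = (N0.filter fun H => D ≤ H).card * (q - 1)
            + (∑ W ∈ T, (HS.filter fun H => D ⊔ W ≤ H).card) * (q - 1) := by
          rw [Finset.sum_mul, Finset.sum_congr rfl (fun W hW => hcDW W hW), Finset.sum_const,
        smul_eq_mul, hTcard]
      _ = ((N0.filter fun H => D ≤ H).card
            + ∑ W ∈ T, (HS.filter fun H => D ⊔ W ≤ H).card) * (q - 1) := by ring
      _ = (HS.filter fun H => D ≤ H).card * (q - 1) := by rw [← hBD]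
      _ = q ^ (2 * t - d) - 1 := hcD
  -- Bonferroni inequality over N0
  set g : Submodule F V → ℕ := fun H => (Dset.filter (fun D => D ≤ H)).card with hg
  have hswap1 : ∑ D ∈ Dset, (N0.filter fun H => D ≤ H).card = ∑ H ∈ N0, g H := by
    calc ∑ D ∈ Dset, (N0.filter fun H => D ≤ H).card
        = ∑ D ∈ Dset, ∑ H ∈ N0, (if D ≤ H then 1 else 0) :=
          Finset.sum_congr rfl (fun D _ => Finset.card_filter _ _)
      _ = ∑ H ∈ N0, ∑ D ∈ Dset, (if D ≤ H then 1 else 0) := Finset.sum_comm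
      _ = ∑ H ∈ N0, g H :=
          Finset.sum_congr rfl (fun H _ => (Finset.card_filter _ _).symm)
  have hswap2 : ∑ p ∈ Dset.offDiag, (N0.filter fun H => p.1 ≤ H ∧ p.2 ≤ H).card
      = ∑ H ∈ N0, (g H * g H - g H) := by
    calc ∑ p ∈ Dset.offDiag, (N0.filter fun H => p.1 ≤ H ∧ p.2 ≤ H).card
        = ∑ p ∈ Dset.offDiag, ∑ H ∈ N0, (if p.1 ≤ H ∧ p.2 ≤ H then 1 else 0) :=
          Finset.sum_congr rfl (fun p _ => Finset.card_filter _ _)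
      _ = ∑ H ∈ N0, ∑ p ∈ Dset.offDiag, (if p.1 ≤ H ∧ p.2 ≤ H then 1 else 0) := Finset.sum_comm
      _ = ∑ H ∈ N0, (g H * g H - g H) := by
          refine Finset.sum_congr rfl (fun H _ => ?_)
          rw [← Finset.card_filter]
          have he : Dset.offDiag.filter (fun p => p.1 ≤ H ∧ p.2 ≤ H)
              = (Dset.filter fun D => D ≤ H).offDiag := by
            ext p
            simp only [Finset.mem_filter, Finset.mem_offDiag]
            tauto
          rw [he, Finset.offDiag_card]
  have hpoint : ∀ H : Submodule F V, 2 * g H ≤ 2 + (g H * g H - g H) := by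
    intro H
    rcases hgH : g H with _ | n
    · simp
    · rcases n with _ | n
      · simp
      · have hexp : (n + 1 + 1) * (n + 1 + 1) = n * n + 4 * n + 4 := by ring
        omega
  have hbonf : 2 * (∑ D ∈ Dset, (N0.filter fun H => D ≤ H).card)
      ≤ 2 * N0.card + ∑ p ∈ Dset.offDiag, (N0.filter fun H => p.1 ≤ H ∧ p.2 ≤ H).card := by
    rw [hswap1, hswap2, Finset.mul_sum]
    calc ∑ H ∈ N0, 2 * g H ≤ ∑ H ∈ N0, (2 + (g H * g H - g H)) :=
          Finset.sum_le_sum (fun H _ => hpoint H)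
      _ = 2 * N0.card + ∑ H ∈ N0, (g H * g H - g H) := by
          rw [Finset.sum_add_distrib, Finset.sum_const, smul_eq_mul, mul_comm]
  have hpairbound : ∀ p ∈ Dset.offDiag,
      (N0.filter fun H => p.1 ≤ H ∧ p.2 ≤ H).card * (q - 1) ≤ q ^ (2 * t - 2 * d) - 1 := by
    intro p hp
    rw [Finset.mem_offDiag] at hp
    obtain ⟨hp1, hp2, hpne⟩ := hp
    have hsub : (N0.filter fun H => p.1 ≤ H ∧ p.2 ≤ H)
        ⊆ HS.filter (fun H => p.1 ⊔ p.2 ≤ H) := by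
      intro H hH
      simp only [Finset.mem_filter, hN0, sup_le_iff] at hH ⊢
      tauto
    have hle := Finset.card_le_card hsub
    simp only [hDset, Finset.mem_filter] at hp1 hp2
    have hinf : p.1 ⊓ p.2 = ⊥ := hdisj p.1 hp1.1 p.2 hp2.1 hpne
    have hsup : Module.finrank F ↥(p.1 ⊔ p.2) = d + d := by
      have := Submodule.finrank_sup_add_finrank_inf_eq p.1 p.2
      rw [hinf, finrank_bot, hp1.2, hp2.2] at this
      omega
    have h := hcount (p.1 ⊔ p.2)
    rw [hsup] at h
    have e : 2 * t - (d + d) = 2 * t - 2 * d := by omega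
    rw [e] at h
    calc (N0.filter fun H => p.1 ≤ H ∧ p.2 ≤ H).card * (q - 1)
        ≤ (HS.filter (fun H => p.1 ⊔ p.2 ≤ H)).card * (q - 1) :=
          Nat.mul_le_mul_right _ hle
      _ = q ^ (2 * t - 2 * d) - 1 := h
  -- pass to ℚ
  have hq1 : (1:ℚ) < (q:ℚ) := by exact_mod_cast hq2
  have hκ : (0:ℚ) < (q:ℚ) - 1 := by linarith
  have hcast : ∀ (x i j : ℕ), x * (q - 1) + mt * (q ^ i - 1) = q ^ j - 1 →
      (x:ℚ) * ((q:ℚ) - 1) = (q:ℚ) ^ j - 1 - (mt:ℚ) * ((q:ℚ) ^ i - 1) := by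
    intro x i j hx
    have h1 : (1:ℕ) ≤ q ^ i := Nat.one_le_pow _ _ (by omega)
    have h2 : (1:ℕ) ≤ q ^ j := Nat.one_le_pow _ _ (by omega)
    have := congrArg (Nat.cast : ℕ → ℚ) hx
    push_cast [Nat.cast_sub h1, Nat.cast_sub h2, Nat.cast_sub (by omega : 1 ≤ q)] at this
    linarith
  have hN0Q : ((N0.card : ℚ)) * ((q:ℚ) - 1)
      = (q:ℚ) ^ (2 * t) - 1 - (mt:ℚ) * ((q:ℚ) ^ t - 1) := hcast _ _ _ hN0card
  have hDQ : ∀ D ∈ Dset, (((N0.filter fun H => D ≤ H).card : ℚ)) * ((q:ℚ) - 1)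
      = (q:ℚ) ^ (2 * t - d) - 1 - (mt:ℚ) * ((q:ℚ) ^ (t - d) - 1) :=
    fun D hD => hcast _ _ _ (hDfacts D hD)
  have hpairQ : ∀ p ∈ Dset.offDiag,
      (((N0.filter fun H => p.1 ≤ H ∧ p.2 ≤ H).card : ℚ)) * ((q:ℚ) - 1)
        ≤ (q:ℚ) ^ (2 * t - 2 * d) - 1 := by
    intro p hp
    have h := hpairbound p hp
    have h2 : (1:ℕ) ≤ q ^ (2 * t - 2 * d) := Nat.one_le_pow _ _ (by omega)
    have hcast2 := (Nat.cast_le (α := ℚ)).mpr h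
    push_cast [Nat.cast_sub h2, Nat.cast_sub (by omega : 1 ≤ q)] at hcast2
    linarith
  have hbonfQ : 2 * (∑ D ∈ Dset, (((N0.filter fun H => D ≤ H).card : ℚ)))
      ≤ 2 * ((N0.card : ℚ))
        + ∑ p ∈ Dset.offDiag, (((N0.filter fun H => p.1 ≤ H ∧ p.2 ≤ H).card : ℚ)) := by
    exact_mod_cast hbonf
  have hmul := mul_le_mul_of_nonneg_right hbonfQ (le_of_lt hκ)
  have hL : (∑ D ∈ Dset, (((N0.filter fun H => D ≤ H).card : ℚ))) * ((q:ℚ) - 1)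
      = (m:ℚ) * ((q:ℚ) ^ (2 * t - d) - 1 - (mt:ℚ) * ((q:ℚ) ^ (t - d) - 1)) := by
    rw [Finset.sum_mul, Finset.sum_congr rfl hDQ, Finset.sum_const, hDcard, nsmul_eq_mul]
  have hRsum : (∑ p ∈ Dset.offDiag, (((N0.filter fun H => p.1 ≤ H ∧ p.2 ≤ H).card : ℚ)))
      * ((q:ℚ) - 1)
      ≤ ((m:ℚ) * (m:ℚ) - (m:ℚ)) * ((q:ℚ) ^ (2 * t - 2 * d) - 1) := by
    rw [Finset.sum_mul]
    calc ∑ p ∈ Dset.offDiag, (((N0.filter fun H => p.1 ≤ H ∧ p.2 ≤ H).card : ℚ)) * ((q:ℚ) - 1)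
        ≤ ∑ _p ∈ Dset.offDiag, ((q:ℚ) ^ (2 * t - 2 * d) - 1) :=
          Finset.sum_le_sum hpairQ
      _ = ((m:ℚ) * (m:ℚ) - (m:ℚ)) * ((q:ℚ) ^ (2 * t - 2 * d) - 1) := by
          rw [Finset.sum_const, Finset.offDiag_card, hDcard, nsmul_eq_mul]
          have hm1 : m ≤ m * m := Nat.le_mul_of_pos_left _ hmd
          push_cast [Nat.cast_sub hm1]
          ring
  have hBIG : 2 * ((m:ℚ) * ((q:ℚ) ^ (2 * t - d) - 1 - (mt:ℚ) * ((q:ℚ) ^ (t - d) - 1)))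
      ≤ 2 * ((q:ℚ) ^ (2 * t) - 1 - (mt:ℚ) * ((q:ℚ) ^ t - 1))
        + ((m:ℚ) * (m:ℚ) - (m:ℚ)) * ((q:ℚ) ^ (2 * t - 2 * d) - 1) := by
    have expand : (2 * ((N0.card : ℚ))
        + ∑ p ∈ Dset.offDiag, (((N0.filter fun H => p.1 ≤ H ∧ p.2 ≤ H).card : ℚ)))
          * ((q:ℚ) - 1)
        = 2 * (((N0.card : ℚ)) * ((q:ℚ) - 1))
          + (∑ p ∈ Dset.offDiag, (((N0.filter fun H => p.1 ≤ H ∧ p.2 ≤ H).card : ℚ)))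
            * ((q:ℚ) - 1) := by ring
    have expand2 : 2 * (∑ D ∈ Dset, (((N0.filter fun H => D ≤ H).card : ℚ))) * ((q:ℚ) - 1)
        = 2 * ((∑ D ∈ Dset, (((N0.filter fun H => D ≤ H).card : ℚ))) * ((q:ℚ) - 1)) := by ring
    rw [expand, expand2, hL, hN0Q] at hmul
    linarith [hRsum]
  -- rewrite exponents
  have e1 : (q:ℚ) ^ (2 * t) = (q:ℚ) ^ t * (q:ℚ) ^ t := by
    rw [← pow_add]; congr 1; omega
  have e2 : (q:ℚ) ^ (2 * t - d) = (q:ℚ) ^ t * (q:ℚ) ^ (t - d) := by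
    rw [← pow_add]; congr 1; omega
  have e3 : (q:ℚ) ^ (2 * t - 2 * d) = (q:ℚ) ^ (t - d) * (q:ℚ) ^ (t - d) := by
    rw [← pow_add]; congr 1; omega
  rw [e1, e2, e3] at hBIG
  have hmtQ : (mt:ℚ) = (q:ℚ) ^ t + 1 - (a:ℚ) := by
    have := congrArg (Int.cast : ℤ → ℚ) ha
    push_cast at this
    exact this
  rw [hmtQ] at hBIG
  have hY1 : (1:ℚ) < (q:ℚ) ^ (t - d) := by
    apply one_lt_pow₀ hq1
    omega
  have hDen : (0:ℚ) < (q:ℚ) ^ t - 1 - (m:ℚ) * ((q:ℚ) ^ (t - d) - 1) := by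
    have hlt2 := (lt_div_iff₀ (by linarith : (0:ℚ) < (q:ℚ) ^ (t - d) - 1)).mp hlt
    linarith
  have hkey : ((m:ℚ) - (a:ℚ)) * ((q:ℚ) ^ t - 1 - (m:ℚ) * ((q:ℚ) ^ (t - d) - 1))
      ≤ (m:ℚ) * ((m:ℚ) - 1)
        * (((q:ℚ) ^ (t - d) * (q:ℚ) ^ (t - d) - 1) / 2 + 1 - (q:ℚ) ^ (t - d)) := by
    linarith [hBIG]
  have hfin : (m:ℚ) - (a:ℚ)
      ≤ (m:ℚ) * ((m:ℚ) - 1)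
          * (((q:ℚ) ^ (t - d) * (q:ℚ) ^ (t - d) - 1) / 2 + 1 - (q:ℚ) ^ (t - d))
        / ((q:ℚ) ^ t - 1 - (m:ℚ) * ((q:ℚ) ^ (t - d) - 1)) :=
    (le_div_iff₀ hDen).mpr hkey
  have hRq : Rq q t d m
      = (m:ℚ) * ((m:ℚ) - 1)
          * (((q:ℚ) ^ (t - d) * (q:ℚ) ^ (t - d) - 1) / 2 + 1 - (q:ℚ) ^ (t - d))
        / ((q:ℚ) ^ t - 1 - (m:ℚ) * ((q:ℚ) ^ (t - d) - 1)) := by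
    rw [Rq, e3]
  rw [hRq]
  linarith
end

section
/- Let P be a vector space partition of a 2t-dimensional vector space V over the finite field F with q elements, let a be the integer with m_t = q^t + 1 − a, let d be an integer with t/2 < d < t, and let m be the number of members of P whose dimension e satisfies d ≤ e < t. If m < (q^t − 1)/(q^{t−d} − 1), then a ≥ m − R_q(t, d, m), as an inequality of rational numbers. -/
attribute [local instance] Classical.propDecidable

open Finset Module

set_option maxHeartbeats 3200000

/-- Bonferroni-type lower bound for the size of a finite union. -/
lemma vsp_bonferroni {ι α : Type*} [DecidableEq ι] [DecidableEq α]
    (s : Finset ι) (f : ι → Finset α) :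
    2 * ∑ i ∈ s, (f i).card ≤
      2 * (s.biUnion f).card +
        ∑ i ∈ s, ∑ j ∈ s, (if i = j then 0 else ((f i) ∩ (f j)).card) := by
  induction s using Finset.induction_on with
  | empty => simp
  | @insert a s ha ih =>
    have hinter : (f a ∩ s.biUnion f).card ≤ ∑ j ∈ s, (f a ∩ f j).card := by
      refine le_trans (Finset.card_le_card ?_) Finset.card_biUnion_le
      intro x hx
      rcases Finset.mem_inter.1 hx with ⟨hx1, hx2⟩
      rcases Finset.mem_biUnion.1 hx2 with ⟨j, hj, hxj⟩
      exact Finset.mem_biUnion.2 ⟨j, hj, Finset.mem_inter.2 ⟨hx1, hxj⟩⟩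
    have hu : (f a ∪ s.biUnion f).card + (f a ∩ s.biUnion f).card
        = (f a).card + (s.biUnion f).card := Finset.card_union_add_card_inter _ _
    have hps : ∑ i ∈ insert a s, ∑ j ∈ insert a s, (if i = j then 0 else ((f i) ∩ (f j)).card)
        = 2 * ∑ j ∈ s, (f a ∩ f j).card
          + ∑ i ∈ s, ∑ j ∈ s, (if i = j then 0 else ((f i) ∩ (f j)).card) := by
      rw [Finset.sum_insert ha]
      have h1 : ∑ j ∈ insert a s, (if a = j then 0 else ((f a) ∩ (f j)).card)
          = ∑ j ∈ s, (f a ∩ f j).card := by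
        rw [Finset.sum_insert ha, if_pos rfl, zero_add]
        refine Finset.sum_congr rfl fun j hj => ?_
        rw [if_neg]
        rintro rfl
        exact ha hj
      have h2 : ∀ i ∈ s, ∑ j ∈ insert a s, (if i = j then 0 else ((f i) ∩ (f j)).card)
          = (f a ∩ f i).card + ∑ j ∈ s, (if i = j then 0 else ((f i) ∩ (f j)).card) := by
        intro i hi
        rw [Finset.sum_insert ha, if_neg (by rintro rfl; exact ha hi), Finset.inter_comm]
      rw [h1, Finset.sum_congr rfl h2, Finset.sum_add_distrib]
      ring
    rw [Finset.sum_insert ha, Finset.biUnion_insert, hps]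
    have hih := ih
    omega

/-- The number of elements of a submodule of a finite vector space. -/
lemma vsp_card_filter_mem {K W : Type*} [Field K] [Fintype K] [AddCommGroup W] [Module K W]
    [FiniteDimensional K W] [Fintype W] (Z : Submodule K W) :
    (Finset.univ.filter (fun x : W => x ∈ Z)).card = Fintype.card K ^ Module.finrank K Z := by
  rw [← Fintype.card_subtype]
  exact card_eq_pow_finrank (K := K)

/-- finrank of the dual annihilator. -/
lemma vsp_finrank_dualAnnihilator {K W : Type*} [Field K] [AddCommGroup W] [Module K W]
    [FiniteDimensional K W] (Z : Submodule K W) :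
    Module.finrank K Z.dualAnnihilator = Module.finrank K W - Module.finrank K Z := by
  have h1 : finrank K (W ⧸ Z) = finrank K Z.dualAnnihilator :=
    (Subspace.quotEquivAnnihilator Z).finrank_eq
  have h2 := Submodule.finrank_quotient_add_finrank Z
  have h3 := Z.finrank_le
  omega

/-- Corollary: with `m` the number of members of dimension at least `d` and less
than `t`, if `m < (q^t - 1)/(q^{t-d} - 1)` then `a ≥ m - R_q(t, d, m)`. -/
theorem stmt13 (q t d : ℕ) (F V : Type*) [Field F] [Fintype F] [AddCommGroup V]
    [Module F V] [FiniteDimensional F V] (hq : Fintype.card F = q)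
    (hV : Module.finrank F V = 2 * t)
    (P : Finset (Submodule F V)) (hP : IsVSPartition F P)
    (a : ℤ) (ha : (dimCount F P t : ℤ) = (q : ℤ) ^ t + 1 - a)
    (hd1 : t < 2 * d) (hd2 : d < t)
    (m : ℕ)
    (hm : m = (P.filter fun (U : Submodule F V) =>
        d ≤ Module.finrank F ↥U ∧ Module.finrank F ↥U < t).card)
    (hlt : (m : ℚ) < ((q : ℚ) ^ t - 1) / ((q : ℚ) ^ (t - d) - 1)) :
    (m : ℚ) - Rq q t d m ≤ (a : ℚ) := by
  classical
  -- basic numeric facts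
  have hq2 : 2 ≤ q := by
    have h := Fintype.one_lt_card (α := F)
    omega
  have hq1Q : (1 : ℚ) ≤ (q : ℚ) := by exact_mod_cast Nat.one_le_of_lt hq2
  have hq0Q : (0 : ℚ) < (q : ℚ) := by positivity
  -- finiteness
  haveI : Finite V := Module.finite_of_finite F
  haveI : Fintype V := Fintype.ofFinite V
  haveI : Finite (Module.Dual F V) := Module.finite_of_finite F
  haveI : Fintype (Module.Dual F V) := Fintype.ofFinite _
  -- the two families of members
  set Pt : Finset (Submodule F V) :=
    P.filter fun (U : Submodule F V) => Module.finrank F ↥U = t with hPtdef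
  set Mid : Finset (Submodule F V) :=
    P.filter fun (U : Submodule F V) =>
      d ≤ Module.finrank F ↥U ∧ Module.finrank F ↥U < t with hMiddef
  set n : ℕ := Pt.card with hndef
  have hmMid : Mid.card = m := hm.symm
  -- partition members intersect trivially
  have hbot : ∀ U ∈ P, ∀ W ∈ P, U ≠ W → U ⊓ W = ⊥ := by
    intro U hU W hW hne
    rw [Submodule.eq_bot_iff]
    intro x hx
    by_contra hx0
    obtain ⟨Z, hZ, hZu⟩ := hP.2 x hx0
    exact hne ((hZu U ⟨hU, (Submodule.mem_inf.1 hx).1⟩).trans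
      (hZu W ⟨hW, (Submodule.mem_inf.1 hx).2⟩).symm)
  have hranksup : ∀ U ∈ P, ∀ W ∈ P, U ≠ W →
      Module.finrank F ↥(U ⊔ W) = Module.finrank F ↥U + Module.finrank F ↥W := by
    intro U hU W hW hne
    have h := Submodule.finrank_sup_add_finrank_inf_eq U W
    rw [hbot U hU W hW hne] at h
    simpa [finrank_bot] using h
  -- two distinct t-members span everything
  have hsuptop : ∀ U ∈ Pt, ∀ U' ∈ Pt, U ≠ U' → U ⊔ U' = ⊤ := by
    intro U hU U' hU' hne
    obtain ⟨hUP, hUt⟩ := Finset.mem_filter.1 hU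
    obtain ⟨hU'P, hU't⟩ := Finset.mem_filter.1 hU'
    apply Submodule.eq_top_of_finrank_eq
    rw [hranksup U hUP U' hU'P hne, hUt, hU't, hV]
    omega
  -- nonzero functionals annihilating a given subspace
  set NZ : Submodule F V → Finset (Module.Dual F V) :=
    fun Z => (Finset.univ.filter (fun φ : Module.Dual F V => φ ∈ Z.dualAnnihilator)).erase 0
    with hNZdef
  have hNZmem : ∀ (Z : Submodule F V) (φ : Module.Dual F V),
      φ ∈ NZ Z ↔ φ ≠ 0 ∧ φ ∈ Z.dualAnnihilator := by
    intro Z φ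
    simp [hNZdef]
  have hNZcard : ∀ Z : Submodule F V,
      (NZ Z).card = q ^ (2 * t - Module.finrank F Z) - 1 := by
    intro Z
    have h0 : (0 : Module.Dual F V) ∈
        Finset.univ.filter (fun φ : Module.Dual F V => φ ∈ Z.dualAnnihilator) := by
      simp [Submodule.zero_mem]
    rw [hNZdef]
    rw [Finset.card_erase_of_mem h0, vsp_card_filter_mem, vsp_finrank_dualAnnihilator, hq, hV]
  -- the main finsets of functionals
  set S : Finset (Module.Dual F V) :=
    Finset.univ.filter (fun φ : Module.Dual F V =>
      φ ≠ 0 ∧ ∀ U ∈ Pt, φ ∉ U.dualAnnihilator) with hSdef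
  set Si : Submodule F V → Finset (Module.Dual F V) :=
    fun W => Finset.univ.filter (fun φ : Module.Dual F V =>
      φ ≠ 0 ∧ φ ∈ W.dualAnnihilator ∧ ∀ U ∈ Pt, φ ∉ U.dualAnnihilator) with hSidef
  -- disjointness of the NZ's of two t-members
  have hNZdisj : ∀ U ∈ Pt, ∀ U' ∈ Pt, U ≠ U' → Disjoint (NZ U) (NZ U') := by
    intro U hU U' hU' hne
    rw [Finset.disjoint_left]
    intro φ h1 h2
    obtain ⟨hφ0, hφU⟩ := (hNZmem U φ).1 h1
    obtain ⟨-, hφU'⟩ := (hNZmem U' φ).1 h2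
    have hmem : φ ∈ (U ⊔ U').dualAnnihilator := by
      rw [Submodule.dualAnnihilator_sup_eq]
      exact Submodule.mem_inf.2 ⟨hφU, hφU'⟩
    rw [hsuptop U hU U' hU' hne, Submodule.dualAnnihilator_top] at hmem
    exact hφ0 (by simpa using hmem)
  -- Count 1 : |S| + n (q^t - 1) ≤ q^{2t} - 1
  have hI1 : S.card + n * (q ^ t - 1) ≤ q ^ (2 * t) - 1 := by
    have hB : (Pt.biUnion NZ).card = n * (q ^ t - 1) := by
      rw [Finset.card_biUnion (fun U hU U' hU' hne => hNZdisj U hU U' hU' hne)]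
      have hc : ∀ U ∈ Pt, (NZ U).card = q ^ t - 1 := by
        intro U hU
        obtain ⟨-, hUt⟩ := Finset.mem_filter.1 hU
        rw [hNZcard U, hUt]
        congr 2
        omega
      rw [Finset.sum_congr rfl hc, Finset.sum_const, smul_eq_mul]
    have hdisjSB : Disjoint S (Pt.biUnion NZ) := by
      rw [Finset.disjoint_left]
      intro φ hφS hφB
      obtain ⟨-, h2⟩ := (Finset.mem_filter.1 hφS).2
      obtain ⟨U, hU, hφU⟩ := Finset.mem_biUnion.1 hφB
      exact h2 U hU ((hNZmem U φ).1 hφU).2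
    have hsub : S ∪ Pt.biUnion NZ ⊆ NZ ⊥ := by
      intro φ hφ
      rw [hNZmem]
      constructor
      · rcases Finset.mem_union.1 hφ with h | h
        · exact ((Finset.mem_filter.1 h).2).1
        · obtain ⟨U, hU, h'⟩ := Finset.mem_biUnion.1 h
          exact ((hNZmem U φ).1 h').1
      · rw [Submodule.mem_dualAnnihilator]
        intro w hw
        have hw0 : w = 0 := by simpa using hw
        rw [hw0]
        exact map_zero φ
    calc S.card + n * (q ^ t - 1)
        = (S ∪ Pt.biUnion NZ).card := by
          rw [Finset.card_union_of_disjoint hdisjSB, hB]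
      _ ≤ (NZ ⊥).card := Finset.card_le_card hsub
      _ = q ^ (2 * t) - 1 := by
          rw [hNZcard ⊥]
          simp [finrank_bot]
  -- Count 2 : per middle member
  have hI2 : ∀ W ∈ Mid, q ^ (t + (t - Module.finrank F ↥W)) - 1 ≤
      (Si W).card + n * (q ^ (t - Module.finrank F ↥W) - 1) := by
    intro W hW
    obtain ⟨hWP, hWd, hWt⟩ : W ∈ P ∧ d ≤ Module.finrank F ↥W ∧ Module.finrank F ↥W < t := by
      have := Finset.mem_filter.1 hW
      exact ⟨this.1, this.2.1, this.2.2⟩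
    have hcover : NZ W ⊆ Si W ∪ Pt.biUnion (fun U => NZ (W ⊔ U)) := by
      intro φ hφ
      obtain ⟨h0, hφW⟩ := (hNZmem W φ).1 hφ
      by_cases hall : ∀ U ∈ Pt, φ ∉ U.dualAnnihilator
      · exact Finset.mem_union_left _ (Finset.mem_filter.2 ⟨Finset.mem_univ _, h0, hφW, hall⟩)
      · push_neg at hall
        obtain ⟨U, hU, hφU⟩ := hall
        refine Finset.mem_union_right _ (Finset.mem_biUnion.2 ⟨U, hU, ?_⟩)
        rw [hNZmem]
        refine ⟨h0, ?_⟩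
        rw [Submodule.dualAnnihilator_sup_eq]
        exact Submodule.mem_inf.2 ⟨hφW, hφU⟩
    have hbucard : ∀ U ∈ Pt, (NZ (W ⊔ U)).card = q ^ (t - Module.finrank F ↥W) - 1 := by
      intro U hU
      obtain ⟨hUP, hUt⟩ := Finset.mem_filter.1 hU
      have hne : W ≠ U := by
        intro h
        rw [h, hUt] at hWt
        omega
      rw [hNZcard, hranksup W hWP U hUP hne, hUt]
      congr 2
      omega
    have hchain : (NZ W).card ≤ (Si W).card + n * (q ^ (t - Module.finrank F ↥W) - 1) := by
      refine le_trans (Finset.card_le_card hcover) ?_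
      refine le_trans (Finset.card_union_le _ _) ?_
      refine add_le_add_right (le_trans Finset.card_biUnion_le ?_) _
      rw [Finset.sum_congr rfl hbucard, Finset.sum_const, smul_eq_mul]
    have hWcard : (NZ W).card = q ^ (t + (t - Module.finrank F ↥W)) - 1 := by
      rw [hNZcard W]
      congr 2
      omega
    omega
  -- Count 3 : pairs of middle members
  have hI3 : ∀ W ∈ Mid, ∀ W' ∈ Mid, W ≠ W' →
      (Si W ∩ Si W').card ≤
        q ^ ((t - Module.finrank F ↥W) + (t - Module.finrank F ↥W')) - 1 := by
    intro W hW W' hW' hne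
    obtain ⟨hWP, hWd, hWt⟩ : W ∈ P ∧ d ≤ Module.finrank F ↥W ∧ Module.finrank F ↥W < t := by
      have := Finset.mem_filter.1 hW
      exact ⟨this.1, this.2.1, this.2.2⟩
    obtain ⟨hW'P, hW'd, hW't⟩ : W' ∈ P ∧ d ≤ Module.finrank F ↥W' ∧ Module.finrank F ↥W' < t := by
      have := Finset.mem_filter.1 hW'
      exact ⟨this.1, this.2.1, this.2.2⟩
    have hsub : Si W ∩ Si W' ⊆ NZ (W ⊔ W') := by
      intro φ hφ
      obtain ⟨h1, h2⟩ := Finset.mem_inter.1 hφ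
      obtain ⟨hφ0, hφW, -⟩ := (Finset.mem_filter.1 h1).2
      obtain ⟨-, hφW', -⟩ := (Finset.mem_filter.1 h2).2
      rw [hNZmem]
      refine ⟨hφ0, ?_⟩
      rw [Submodule.dualAnnihilator_sup_eq]
      exact Submodule.mem_inf.2 ⟨hφW, hφW'⟩
    refine le_trans (Finset.card_le_card hsub) ?_
    rw [hNZcard, hranksup W hWP W' hW'P hne]
    apply Nat.sub_le_sub_right
    apply Nat.pow_le_pow_right (by omega)
    omega
  -- Si W ⊆ S
  have hSiS : ∀ W ∈ Mid, Si W ⊆ S := by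
    intro W _ φ hφ
    obtain ⟨h0, -, hall⟩ := (Finset.mem_filter.1 hφ).2
    exact Finset.mem_filter.2 ⟨Finset.mem_univ _, h0, hall⟩
  -- Bonferroni in ℕ
  have hbon := vsp_bonferroni Mid Si
  have hBUS : (Mid.biUnion Si).card ≤ S.card :=
    Finset.card_le_card (Finset.biUnion_subset.2 hSiS)
  have hbonN : 2 * ∑ W ∈ Mid, (Si W).card ≤ 2 * S.card +
      ∑ W ∈ Mid, ∑ W' ∈ Mid, (if W = W' then 0 else ((Si W) ∩ (Si W')).card) := by
    omega
  ------------------------------------------------------------------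
  -- move to ℚ
  ------------------------------------------------------------------
  set e : Submodule F V → ℕ := fun W => Module.finrank F ↥W with hedef
  set Y : Submodule F V → ℚ := fun W => (q : ℚ) ^ (t - e W) - 1 with hYdef
  set X : ℚ := (q : ℚ) ^ (t - d) - 1 with hXdef
  set T : ℚ := (q : ℚ) ^ t - 1 with hTdef
  set B : ℚ := ∑ W ∈ Mid, Y W with hBdef
  have hpow_cast : ∀ r : ℕ, ((q ^ r - 1 : ℕ) : ℚ) = (q : ℚ) ^ r - 1 := by
    intro r
    have h1 : 1 ≤ q ^ r := Nat.one_le_pow _ _ (by omega)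
    push_cast [h1]
    ring
  have hqpow1 : ∀ r : ℕ, 1 ≤ r → (2 : ℚ) ≤ (q : ℚ) ^ r := by
    intro r hr
    calc (2 : ℚ) ≤ (q : ℚ) := by exact_mod_cast hq2
      _ = (q : ℚ) ^ 1 := (pow_one _).symm
      _ ≤ (q : ℚ) ^ r := pow_le_pow_right₀ hq1Q hr
  have hY1 : ∀ W ∈ Mid, 1 ≤ Y W := by
    intro W hW
    obtain ⟨-, -, hWt⟩ : W ∈ P ∧ d ≤ e W ∧ e W < t := by
      have := Finset.mem_filter.1 hW
      exact ⟨this.1, this.2.1, this.2.2⟩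
    have := hqpow1 (t - e W) (by omega)
    simp only [hYdef]
    linarith
  have hYX : ∀ W ∈ Mid, Y W ≤ X := by
    intro W hW
    obtain ⟨-, hWd, hWt⟩ : W ∈ P ∧ d ≤ e W ∧ e W < t := by
      have := Finset.mem_filter.1 hW
      exact ⟨this.1, this.2.1, this.2.2⟩
    simp only [hYdef, hXdef]
    have : (q : ℚ) ^ (t - e W) ≤ (q : ℚ) ^ (t - d) :=
      pow_le_pow_right₀ hq1Q (by omega)
    linarith
  have hX1 : 1 ≤ X := by
    have := hqpow1 (t - d) (by omega)
    simp only [hXdef]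
    linarith
  have hX0 : 0 < X := by linarith
  -- D > 0
  have hTmX : 0 < T - m * X := by
    have h := (lt_div_iff₀ hX0).1 hlt
    linarith
  -- the ℚ versions of the counts
  have hQ1 : (S.card : ℚ) + (n : ℚ) * T ≤ ((q : ℚ) ^ t + 1) * T := by
    have h := (Nat.cast_le (α := ℚ)).2 hI1
    push_cast at h
    rw [hpow_cast t, hpow_cast (2 * t)] at h
    have h2t : (q : ℚ) ^ (2 * t) = (q : ℚ) ^ t * (q : ℚ) ^ t := by
      rw [two_mul, pow_add]
    rw [hTdef]
    linarith [h, h2t]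
  have hQ2 : (q : ℚ) ^ t * B + m * T ≤ (∑ W ∈ Mid, ((Si W).card : ℚ)) + (n : ℚ) * B := by
    have hterm : ∀ W ∈ Mid, (q : ℚ) ^ t * Y W + T ≤ ((Si W).card : ℚ) + (n : ℚ) * Y W := by
      intro W hW
      have h := (Nat.cast_le (α := ℚ)).2 (hI2 W hW)
      push_cast at h
      rw [hpow_cast, hpow_cast] at h
      have hsplit : (q : ℚ) ^ (t + (t - e W)) = (q : ℚ) ^ t * (q : ℚ) ^ (t - e W) := pow_add _ _ _
      rw [hsplit] at h
      simp only [hYdef, hTdef]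
      linarith [h]
    have hsum := Finset.sum_le_sum hterm
    have hL : ∑ W ∈ Mid, ((q : ℚ) ^ t * Y W + T) = (q : ℚ) ^ t * B + (m : ℚ) * T := by
      rw [Finset.sum_add_distrib, ← Finset.mul_sum, ← hBdef, Finset.sum_const, hmMid,
        nsmul_eq_mul]
    have hR : ∑ W ∈ Mid, (((Si W).card : ℚ) + (n : ℚ) * Y W)
        = (∑ W ∈ Mid, ((Si W).card : ℚ)) + (n : ℚ) * B := by
      rw [Finset.sum_add_distrib, ← Finset.mul_sum, ← hBdef]
    rw [hL, hR] at hsum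
    exact hsum
  -- Bonferroni in ℚ with the pair bound
  have hQ3 : 2 * (∑ W ∈ Mid, ((Si W).card : ℚ)) ≤ 2 * (S.card : ℚ) +
      ∑ W ∈ Mid, ∑ W' ∈ Mid, (if W = W' then (0 : ℚ) else (X ^ 2 + Y W + Y W')) := by
    have h := (Nat.cast_le (α := ℚ)).2 hbonN
    push_cast [apply_ite (fun x : ℕ => (x : ℚ))] at h
    refine le_trans h (add_le_add_right ?_ _)
    refine Finset.sum_le_sum fun W hW => Finset.sum_le_sum fun W' hW' => ?_
    by_cases hEq : W = W'
    · simp [hEq]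
    · rw [if_neg hEq, if_neg hEq]
      have h3 := (Nat.cast_le (α := ℚ)).2 (hI3 W hW W' hW' hEq)
      rw [hpow_cast] at h3
      have hsplit : (q : ℚ) ^ ((t - e W) + (t - e W')) =
          (q : ℚ) ^ (t - e W) * (q : ℚ) ^ (t - e W') := pow_add _ _ _
      rw [hsplit] at h3
      have hy : (q : ℚ) ^ (t - e W) = Y W + 1 := by simp only [hYdef]; ring
      have hy' : (q : ℚ) ^ (t - e W') = Y W' + 1 := by simp only [hYdef]; ring
      rw [hy, hy'] at h3
      have hYW0 : 0 ≤ Y W := le_trans zero_le_one (hY1 W hW)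
      have hYW'0 : 0 ≤ Y W' := le_trans zero_le_one (hY1 W' hW')
      have hmul : Y W * Y W' ≤ X ^ 2 := by
        have := mul_le_mul (hYX W hW) (hYX W' hW') hYW'0 (le_of_lt hX0)
        nlinarith [this]
      nlinarith [h3]
  -- evaluate the pair sum
  have hQ4 : ∑ W ∈ Mid, ∑ W' ∈ Mid, (if W = W' then (0 : ℚ) else (X ^ 2 + Y W + Y W'))
      = (m : ℚ) * ((m : ℚ) - 1) * X ^ 2 + 2 * ((m : ℚ) - 1) * B := by
    have hinner : ∀ W ∈ Mid,
        ∑ W' ∈ Mid, (if W = W' then (0 : ℚ) else (X ^ 2 + Y W + Y W'))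
          = ((m : ℚ) - 1) * X ^ 2 + ((m : ℚ) - 1) * Y W + (B - Y W) := by
      intro W hW
      have hz : ∀ W' ∈ Mid, W' ∉ Mid.erase W →
          (if W = W' then (0 : ℚ) else (X ^ 2 + Y W + Y W')) = 0 := by
        intro W' hW' hW'e
        have : W' = W := by
          by_contra hne
          exact hW'e (Finset.mem_erase.2 ⟨hne, hW'⟩)
        rw [if_pos this.symm]
      have hstep1 : ∑ W' ∈ Mid, (if W = W' then (0 : ℚ) else (X ^ 2 + Y W + Y W'))
          = ∑ W' ∈ Mid.erase W, (if W = W' then (0 : ℚ) else (X ^ 2 + Y W + Y W')) :=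
        (Finset.sum_subset (Finset.erase_subset W Mid) hz).symm
      have hstep2 : ∑ W' ∈ Mid.erase W, (if W = W' then (0 : ℚ) else (X ^ 2 + Y W + Y W'))
          = ∑ W' ∈ Mid.erase W, (X ^ 2 + Y W + Y W') := by
        refine Finset.sum_congr rfl fun W' hW' => ?_
        exact if_neg (fun h => ((Finset.mem_erase.1 hW').1 h.symm))
      have hm1 : 1 ≤ m := by
        have hpos := Finset.card_pos.2 ⟨W, hW⟩
        rw [hmMid] at hpos
        omega
      have hcarde : (Mid.erase W).card = m - 1 := by
        rw [Finset.card_erase_of_mem hW, hmMid]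
      have hcardeQ : ((Mid.erase W).card : ℚ) = (m : ℚ) - 1 := by
        rw [hcarde]
        push_cast [hm1]
        ring
      have hstep3 : ∑ W' ∈ Mid.erase W, (X ^ 2 + Y W + Y W')
          = ((m : ℚ) - 1) * (X ^ 2 + Y W) + (B - Y W) := by
        have hsplit : ∑ W' ∈ Mid.erase W, (X ^ 2 + Y W + Y W')
            = (∑ W' ∈ Mid.erase W, (X ^ 2 + Y W)) + ∑ W' ∈ Mid.erase W, Y W' := by
          rw [← Finset.sum_add_distrib]
        have hconst : ∑ W' ∈ Mid.erase W, (X ^ 2 + Y W)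
            = ((m : ℚ) - 1) * (X ^ 2 + Y W) := by
          rw [Finset.sum_const, nsmul_eq_mul, hcardeQ]
        have herase : (∑ W' ∈ Mid.erase W, Y W') + Y W = B := by
          rw [hBdef]
          exact Finset.sum_erase_add Mid Y hW
        rw [hsplit, hconst]
        have : ∑ W' ∈ Mid.erase W, Y W' = B - Y W := by linarith [herase]
        rw [this]
      rw [hstep1, hstep2, hstep3]
      ring
    calc ∑ W ∈ Mid, ∑ W' ∈ Mid, (if W = W' then (0 : ℚ) else (X ^ 2 + Y W + Y W'))
        = ∑ W ∈ Mid, (((m : ℚ) - 1) * X ^ 2 + ((m : ℚ) - 1) * Y W + (B - Y W)) :=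
          Finset.sum_congr rfl hinner
      _ = (∑ W ∈ Mid, (((m : ℚ) - 1) * X ^ 2))
            + ((∑ W ∈ Mid, ((m : ℚ) - 1) * Y W) + (∑ W ∈ Mid, (B - Y W))) := by
          rw [← Finset.sum_add_distrib, ← Finset.sum_add_distrib]
          exact Finset.sum_congr rfl fun W _ => by ring
      _ = (m : ℚ) * (((m : ℚ) - 1) * X ^ 2)
            + (((m : ℚ) - 1) * B + ((m : ℚ) * B - B)) := by
          rw [Finset.sum_const, hmMid, nsmul_eq_mul, ← Finset.mul_sum, ← hBdef,
            Finset.sum_sub_distrib, ← hBdef, Finset.sum_const, hmMid, nsmul_eq_mul]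
      _ = (m : ℚ) * ((m : ℚ) - 1) * X ^ 2 + 2 * ((m : ℚ) - 1) * B := by ring
  -- a as a rational
  have hNa : (n : ℚ) = (q : ℚ) ^ t + 1 - (a : ℚ) := by
    have hcount : n = dimCount F P t := rfl
    rw [hcount]
    exact_mod_cast ha
  -- the key inequality
  have hkey : 2 * ((m : ℚ) - (a : ℚ)) * (T - B) ≤ (m : ℚ) * ((m : ℚ) - 1) * X ^ 2 := by
    rw [hNa] at hQ1 hQ2
    nlinarith [hQ1, hQ2, hQ3, hQ4]
  -- B ≤ m X
  have hBmX : B ≤ (m : ℚ) * X := by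
    rw [hBdef]
    calc ∑ W ∈ Mid, Y W ≤ ∑ W ∈ Mid, X := Finset.sum_le_sum hYX
      _ = (m : ℚ) * X := by rw [Finset.sum_const, hmMid, nsmul_eq_mul]
  -- rewrite Rq
  have hRq : Rq q t d m = (m : ℚ) * ((m : ℚ) - 1) * (X ^ 2 / 2) / (T - (m : ℚ) * X) := by
    rw [Rq]
    have hx2 : (q : ℚ) ^ (2 * t - 2 * d) = ((q : ℚ) ^ (t - d)) ^ 2 := by
      rw [← pow_mul]
      congr 1
      omega
    rw [hx2]
    have hXq : (q : ℚ) ^ (t - d) = X + 1 := by simp only [hXdef]; ring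
    rw [hXq]
    simp only [hTdef]
    have hnum : ((X + 1) ^ 2 - 1) / 2 + 1 - (X + 1) = X ^ 2 / 2 := by ring
    rw [hnum]
    congr 1
    ring
  have hm0 : 0 ≤ (m : ℚ) * ((m : ℚ) - 1) := by
    rcases Nat.eq_zero_or_pos m with h | h
    · simp [h]
    · have h1 : (1 : ℚ) ≤ (m : ℚ) := by exact_mod_cast h
      nlinarith
  have hRq0 : 0 ≤ Rq q t d m := by
    rw [hRq]
    apply div_nonneg
    · apply mul_nonneg hm0
      positivity
    · linarith
  clear_value Pt Mid n NZ S Si e Y X T B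
  rcases le_or_gt (m : ℚ) (a : ℚ) with hcase | hcase
  · linarith
  · -- a < m
    have h1 : ((m : ℚ) - (a : ℚ)) * (T - (m : ℚ) * X) ≤ ((m : ℚ) - (a : ℚ)) * (T - B) := by
      have hsub : T - (m : ℚ) * X ≤ T - B := by linarith
      have hpos : (0 : ℚ) ≤ (m : ℚ) - (a : ℚ) := by linarith
      exact mul_le_mul_of_nonneg_left hsub hpos
    have h2 : ((m : ℚ) - (a : ℚ)) * (T - (m : ℚ) * X) ≤ (m : ℚ) * ((m : ℚ) - 1) * (X ^ 2 / 2) := by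
      calc ((m : ℚ) - (a : ℚ)) * (T - (m : ℚ) * X) ≤ ((m : ℚ) - (a : ℚ)) * (T - B) := h1
        _ ≤ (m : ℚ) * ((m : ℚ) - 1) * (X ^ 2 / 2) := by linarith [hkey]
    have h3 : (m : ℚ) - (a : ℚ) ≤ (m : ℚ) * ((m : ℚ) - 1) * (X ^ 2 / 2) / (T - (m : ℚ) * X) :=
      (le_div_iff₀ hTmX).2 h2
    rw [hRq]
    linarith
end

section
/- Let ᾱ and ᾱ' be two nonzero E-linear combinations of α_1, …, α_l (i.e. elements of Ā) such that ᾱ/ᾱ' ∉ E. Then ᾱK ∩ ᾱ'K = {0}. -/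
/-- Lemma: two `E`-linear combinations of `α_1, ..., α_l` which are not parallel
(i.e. whose quotient is not in `E`) generate `K`-multiplication cosets intersecting
trivially. -/
theorem stmt15 (q t k l : ℕ) (hq : IsPrimePow q) (ht : 1 ≤ t) (hk : 2 ≤ k) (hl : 1 ≤ l)
    (F : Type*) [Field F] (hF : Nat.card F = q ^ (k * t))
    (K E : Subfield F) (hK : Nat.card K = q ^ t) (hE : Nat.card E = q)
    (hEK : E ≤ K)
    (α : Fin l → F) (hα : LinearIndependent ↥K α)
    (b b' : F)
    (hb : b ∈ Submodule.span ↥E (Set.range α)) (hb0 : b ≠ 0)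
    (hb' : b' ∈ Submodule.span ↥E (Set.range α)) (hb'0 : b' ≠ 0)
    (hdiv : b / b' ∉ E) :
    {x : F | ∃ c ∈ K, x = b * c} ∩ {x : F | ∃ c ∈ K, x = b' * c} = {0} := by
  ext x
  simp only [Set.mem_inter_iff, Set.mem_setOf_eq, Set.mem_singleton_iff]
  constructor
  · rintro ⟨⟨c, hc, rfl⟩, c', hc', hx⟩
    by_contra hx0
    have hc0 : c ≠ 0 := fun h => hx0 (by simp [h])
    have hc'0 : c' ≠ 0 := by
      rintro rfl
      exact hx0 (by simpa using hx)
    -- λ = c'/c ∈ K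
    set lam : F := c' / c with hlam
    have hlamK : lam ∈ K := div_mem hc' hc
    have hblam : b = lam * b' := by
      field_simp [hlam]
      have hcc := mul_inv_cancel₀ hc0
      linear_combination c⁻¹ * hx - b * hcc
    obtain ⟨e, he⟩ := (Submodule.mem_span_range_iff_exists_fun ↥E).mp hb
    obtain ⟨e', he'⟩ := (Submodule.mem_span_range_iff_exists_fun ↥E).mp hb'
    set L : ↥K := ⟨lam, hlamK⟩ with hL
    set g : Fin l → ↥K := fun i => (⟨(e i : F), hEK (e i).2⟩ : ↥K) - L * ⟨(e' i : F), hEK (e' i).2⟩ with hg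
    have hsum : ∑ i, g i • α i = 0 := by
      have : ∑ i, g i • α i = (∑ i, (e i : F) * α i) - lam * ∑ i, (e' i : F) * α i := by
        rw [Finset.mul_sum, ← Finset.sum_sub_distrib]
        refine Finset.sum_congr rfl fun i _ => ?_
        simp [hg, hL, sub_smul, Subfield.smul_def, mul_smul, smul_eq_mul, mul_assoc]
      rw [this]
      have heb : ∑ i, (e i : F) * α i = b := by
        rw [← he]; exact Finset.sum_congr rfl fun i _ => by simp [Subfield.smul_def]
      have heb' : ∑ i, (e' i : F) * α i = b' := by
        rw [← he']; exact Finset.sum_congr rfl fun i _ => by simp [Subfield.smul_def]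
      rw [heb, heb', hblam, sub_self]
    have hg0 : ∀ i, g i = 0 := Fintype.linearIndependent_iff.mp hα g hsum
    have key : ∀ i, (e i : F) = lam * (e' i : F) := by
      intro i
      have := hg0 i
      rw [hg] at this
      have := congrArg (Subtype.val) this
      simpa [sub_eq_zero] using this
    -- some e' i ≠ 0
    have : ∃ i, (e' i : F) ≠ 0 := by
      by_contra h
      push_neg at h
      apply hb'0
      rw [← he']
      exact Finset.sum_eq_zero fun i _ => by simp [Subfield.smul_def, h i]
    obtain ⟨i, hi⟩ := this
    have hlamE : lam ∈ E := by
      have : lam = (e i : F) / (e' i : F) := by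
        rw [key i]; field_simp
      rw [this]
      exact div_mem (e i).2 (e' i).2
    apply hdiv
    have : b / b' = lam := by rw [hblam]; field_simp
    rwa [this]
  · rintro rfl
    exact ⟨⟨0, zero_mem K, by ring⟩, 0, zero_mem K, by ring⟩
end
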